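/- arXiv:2101.11750 — 6 statements merged into one kernel-verified Lean document; each statement's English description precedes it below -/
import Mathlib

section
/- Let a_1, a_2 be probability vectors of length m (nonnegative entries, each summing to 1), and let p_1, p_2 ≥ 0 with p_1 + p_2 = 1. Then Σ_{j=1}^m p_1 p_2 (a_{1,j} - a_{2,j})^2 / (p_1 a_{1,j} + p_2 a_{2,j}) ≤ 1 - (Σ_{j=1}^m √(a_{1,j} a_{2,j}))^2, where terms with p_1 a_{1,j} + p_2 a_{2,j} = 0 are interpreted as 0. -/
open Finset

theorem stmt0 (m : ℕ) (a1 a2 : Fin m → ℝ)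
    (h10 : ∀ j, 0 ≤ a1 j) (h20 : ∀ j, 0 ≤ a2 j)
    (h11 : ∑ j, a1 j = 1) (h21 : ∑ j, a2 j = 1)
    (p1 p2 : ℝ) (hp1 : 0 ≤ p1) (hp2 : 0 ≤ p2) (hsum : p1 + p2 = 1) :
    ∑ j, p1 * p2 * (a1 j - a2 j) ^ 2 / (p1 * a1 j + p2 * a2 j)
      ≤ 1 - (∑ j, Real.sqrt (a1 j * a2 j)) ^ 2 := by
  set d : Fin m → ℝ := fun j => p1 * a1 j + p2 * a2 j with hd
  have hd0 : ∀ j, 0 ≤ d j := fun j =>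
    add_nonneg (mul_nonneg hp1 (h10 j)) (mul_nonneg hp2 (h20 j))
  have hdsum : ∑ j, d j = 1 := by
    simp only [hd, Finset.sum_add_distrib, ← Finset.mul_sum, h11, h21]
    linarith
  -- zero denominator forces a1*a2 = 0
  have hzero : ∀ j, d j = 0 → a1 j * a2 j = 0 := by
    intro j hj
    simp only [hd] at hj
    have h1 : p1 * a1 j = 0 := by
      have := mul_nonneg hp1 (h10 j); have := mul_nonneg hp2 (h20 j)
      linarith [hj]
    have h2 : p2 * a2 j = 0 := by
      have := mul_nonneg hp1 (h10 j); have := mul_nonneg hp2 (h20 j)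
      linarith [hj]
    rcases mul_eq_zero.mp h1 with hp | ha
    · have hp2' : p2 = 1 := by linarith
      rcases mul_eq_zero.mp h2 with hp' | ha'
      · linarith
      · rw [ha', mul_zero]
    · rw [ha, zero_mul]
  -- per-term bound
  have key : ∀ j, p1 * p2 * (a1 j - a2 j) ^ 2 / d j
      ≤ p2 * a1 j + p1 * a2 j - a1 j * a2 j / d j := by
    intro j
    rcases eq_or_lt_of_le (hd0 j) with h0 | h0
    · rw [← h0, div_zero, div_zero, sub_zero]
      exact add_nonneg (mul_nonneg hp2 (h10 j)) (mul_nonneg hp1 (h20 j))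
    · have hne := h0.ne'
      have hid : p1 * p2 * (a1 j - a2 j) ^ 2
          = (p2 * a1 j + p1 * a2 j) * d j - a1 j * a2 j := by
        have : p2 = 1 - p1 := by linarith
        simp only [hd, this]; ring
      rw [div_le_iff₀ h0, sub_mul, div_mul_cancel₀ _ hne, hid]
  calc ∑ j, p1 * p2 * (a1 j - a2 j) ^ 2 / d j
      ≤ ∑ j, (p2 * a1 j + p1 * a2 j - a1 j * a2 j / d j) :=
        Finset.sum_le_sum fun j _ => key j
    _ = 1 - ∑ j, a1 j * a2 j / d j := by
        have hs : ∑ j, (p2 * a1 j + p1 * a2 j) = 1 := by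
          rw [Finset.sum_add_distrib, ← Finset.mul_sum, ← Finset.mul_sum, h11, h21]
          linarith
        rw [Finset.sum_sub_distrib, hs]
    _ ≤ 1 - (∑ j, Real.sqrt (a1 j * a2 j)) ^ 2 := by
        have := Finset.sum_mul_sq_le_sq_mul_sq Finset.univ
          (fun j => Real.sqrt (a1 j * a2 j / d j)) (fun j => Real.sqrt (d j))
        have heq : ∀ j : Fin m, Real.sqrt (a1 j * a2 j / d j) * Real.sqrt (d j)
            = Real.sqrt (a1 j * a2 j) := by
          intro j
          rw [← Real.sqrt_mul (div_nonneg (mul_nonneg (h10 j) (h20 j)) (hd0 j))]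
          rcases eq_or_lt_of_le (hd0 j) with h0 | h0
          · rw [← h0, mul_zero, hzero j h0.symm]
          · rw [div_mul_cancel₀ _ h0.ne']
        have hsq1 : ∀ j : Fin m, Real.sqrt (a1 j * a2 j / d j) ^ 2
            = a1 j * a2 j / d j := fun j => Real.sq_sqrt (div_nonneg (mul_nonneg (h10 j) (h20 j)) (hd0 j))
        have hsq2 : ∀ j : Fin m, Real.sqrt (d j) ^ 2 = d j :=
          fun j => Real.sq_sqrt (hd0 j)
        simp only [heq, hsq1, hsq2, hdsum, mul_one] at this
        linarith
end

section
/- Given L strictly positive integers n_1, ..., n_L and a real number a with 0 ≤ a ≤ 1, the product Π_{ℓ=1}^L (1 - a^{n_ℓ}) is at most (1 - a^{(Σ_ℓ n_ℓ)/L})^L, with equality when all n_ℓ are equal. -/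
open Finset

theorem stmt2 (L : ℕ) (hL : 0 < L) (n : Fin L → ℕ) (hn : ∀ ℓ, 0 < n ℓ)
    (a : ℝ) (ha0 : 0 ≤ a) (ha1 : a ≤ 1) :
    (∏ ℓ, (1 - a ^ (n ℓ))) ≤ (1 - a ^ ((∑ ℓ, (n ℓ : ℝ)) / (L : ℝ))) ^ L ∧
    ((∀ ℓ ℓ', n ℓ = n ℓ') →
      (∏ ℓ, (1 - a ^ (n ℓ))) = (1 - a ^ ((∑ ℓ, (n ℓ : ℝ)) / (L : ℝ))) ^ L) := by
  have : Nonempty (Fin L) := ⟨⟨0, hL⟩⟩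
  have hLpos : (0:ℝ) < (L:ℝ) := by exact_mod_cast hL
  have hsumpos : (0:ℝ) < ∑ ℓ, (n ℓ : ℝ) :=
    Finset.sum_pos (fun i _ => by exact_mod_cast hn i) Finset.univ_nonempty
  have havgpos : (0:ℝ) < (∑ ℓ, (n ℓ : ℝ)) / (L:ℝ) := div_pos hsumpos hLpos
  constructor
  · rcases eq_or_lt_of_le ha0 with h0 | h0
    · rw [← h0]
      have hzp : ∀ ℓ : Fin L, (0:ℝ) ^ (n ℓ) = 0 := fun ℓ => zero_pow (hn ℓ).ne'
      simp [hzp, Real.zero_rpow havgpos.ne']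
    · -- a > 0
      have hz : ∀ i, (0:ℝ) ≤ 1 - a ^ (n i) := fun i =>
        sub_nonneg.2 (pow_le_one₀ ha0 ha1)
      have hw : ∑ _i : Fin L, (L:ℝ)⁻¹ = 1 := by
        simp [Finset.card_univ, mul_inv_cancel₀ hLpos.ne']
      -- AM-GM on (1 - a^{n_i})
      have h1 : ∏ i, (1 - a ^ (n i)) ^ ((L:ℝ)⁻¹) ≤ ∑ i, (L:ℝ)⁻¹ * (1 - a ^ (n i)) :=
        Real.geom_mean_le_arith_mean_weighted _ _ _ (fun i _ => by positivity) hw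
          (fun i _ => hz i)
      -- AM-GM on a^{n_i}
      have h2 : ∏ i, (a ^ (n i)) ^ ((L:ℝ)⁻¹) ≤ ∑ i, (L:ℝ)⁻¹ * a ^ (n i) :=
        Real.geom_mean_le_arith_mean_weighted _ _ _ (fun i _ => by positivity) hw
          (fun i _ => pow_nonneg ha0 _)
      have hG : ∏ i, (a ^ (n i)) ^ ((L:ℝ)⁻¹) = a ^ ((∑ ℓ, (n ℓ : ℝ)) / (L:ℝ)) := by
        have : ∀ i : Fin L, (a ^ (n i)) ^ ((L:ℝ)⁻¹) = a ^ ((n i : ℝ) * (L:ℝ)⁻¹) := by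
          intro i
          rw [← Real.rpow_natCast a (n i), ← Real.rpow_mul ha0]
        rw [Finset.prod_congr rfl (fun i _ => this i),
          ← Real.rpow_sum_of_pos h0, ← Finset.sum_mul, div_eq_mul_inv]
      have key : a ^ ((∑ ℓ, (n ℓ : ℝ)) / (L:ℝ)) ≤ ∑ i, (L:ℝ)⁻¹ * a ^ (n i) := by
        rw [← hG]; exact h2
      have hstep : ∑ i, (L:ℝ)⁻¹ * (1 - a ^ (n i)) = 1 - ∑ i, (L:ℝ)⁻¹ * a ^ (n i) := by
        simp only [mul_sub, mul_one, Finset.sum_sub_distrib, hw]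
      have hprod : (∏ i, (1 - a ^ (n i)) ^ ((L:ℝ)⁻¹)) ^ L = ∏ i, (1 - a ^ (n i)) := by
        rw [← Real.rpow_natCast (∏ i, (1 - a ^ (n i)) ^ ((L:ℝ)⁻¹)) L,
          ← Real.finset_prod_rpow _ _ (fun i _ => Real.rpow_nonneg (hz i) _) _]
        refine Finset.prod_congr rfl (fun i _ => ?_)
        rw [← Real.rpow_mul (hz i), inv_mul_cancel₀ hLpos.ne', Real.rpow_one]
      calc ∏ i, (1 - a ^ (n i)) = (∏ i, (1 - a ^ (n i)) ^ ((L:ℝ)⁻¹)) ^ L := hprod.symm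
        _ ≤ (∑ i, (L:ℝ)⁻¹ * (1 - a ^ (n i))) ^ L := by
            refine pow_le_pow_left₀ (Finset.prod_nonneg fun i _ => Real.rpow_nonneg (hz i) _)
              h1 L
        _ = (1 - ∑ i, (L:ℝ)⁻¹ * a ^ (n i)) ^ L := by rw [hstep]
        _ ≤ (1 - a ^ ((∑ ℓ, (n ℓ : ℝ)) / (L:ℝ))) ^ L := by
            refine pow_le_pow_left₀ ?_ (by linarith [key]) L
            rw [← hstep]
            exact Finset.sum_nonneg fun i _ => mul_nonneg (by positivity) (hz i)
  · intro hconst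
    obtain ⟨i0⟩ := ‹Nonempty (Fin L)›
    have hsum : ∑ ℓ, (n ℓ : ℝ) = L * (n i0 : ℝ) := by
      rw [Finset.sum_congr rfl (fun i _ => by rw [hconst i i0]), Finset.sum_const,
        Finset.card_univ, Fintype.card_fin, nsmul_eq_mul]
    have havg : (∑ ℓ, (n ℓ : ℝ)) / (L:ℝ) = (n i0 : ℝ) := by
      rw [hsum, mul_comm, mul_div_assoc, div_self hLpos.ne', mul_one]
    rw [havg, Real.rpow_natCast,
      Finset.prod_congr rfl (fun i _ => by rw [hconst i i0]), Finset.prod_const,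
      Finset.card_univ, Fintype.card_fin]
end

section
/- Let 0 ≤ ξ < 1/2 and n ≥ 1. Consider the 2^n × 2^n matrix A whose rows are indexed by y ∈ {0,1}^n and columns by z ∈ {0,1}^n, with entry A_{y,z} = ξ^{d(y,z)} (1-ξ)^{n - d(y,z)}, where d is the Hamming distance. Then for any two distinct rows y ≠ y', Σ_z √(A_{y,z} A_{y',z}) ≥ (4ξ - 4ξ^2)^{n/2}. -/
open Finset

lemma sqrt_prod' {ι : Type*} (s : Finset ι) (f : ι → ℝ) (hf : ∀ i ∈ s, 0 ≤ f i) :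
    Real.sqrt (∏ i ∈ s, f i) = ∏ i ∈ s, Real.sqrt (f i) := by
  induction s using Finset.cons_induction with
  | empty => simp
  | cons a s ha ih =>
    rw [Finset.prod_cons, Finset.prod_cons,
      Real.sqrt_mul (hf a (Finset.mem_cons_self _ _)),
      ih (fun i hi => hf i (Finset.mem_cons.2 (Or.inr hi)))]

theorem stmt4 (n : ℕ) (hn : 1 ≤ n) (ξ : ℝ) (hξ0 : 0 ≤ ξ) (hξ : ξ < 1 / 2)
    (y y' : Fin n → Bool) (hyy : y ≠ y') :
    (4 * ξ - 4 * ξ ^ 2) ^ ((n : ℝ) / 2) ≤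
      ∑ z : Fin n → Bool,
        Real.sqrt ((ξ ^ hammingDist y z * (1 - ξ) ^ (n - hammingDist y z)) *
          (ξ ^ hammingDist y' z * (1 - ξ) ^ (n - hammingDist y' z))) := by
  have hξ1 : ξ ≤ 1 := hξ.le.trans (by norm_num)
  have h1ξ : 0 ≤ 1 - ξ := by linarith
  have hb : (0:ℝ) ≤ 4 * ξ - 4 * ξ ^ 2 := by nlinarith
  set c : ℝ := 2 * Real.sqrt (ξ * (1 - ξ)) with hc
  have hc0 : 0 ≤ c := by positivity
  have hc1 : c ≤ 1 := by
    nlinarith [Real.sq_sqrt (mul_nonneg hξ0 h1ξ), Real.sqrt_nonneg (ξ * (1 - ξ)), sq_nonneg (1 - 2*ξ), sq_nonneg (c - 1)]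
  -- key factorization of row entries
  have key : ∀ x z : Fin n → Bool,
      ξ ^ hammingDist x z * (1 - ξ) ^ (n - hammingDist x z) =
        ∏ i, (if x i = z i then 1 - ξ else ξ) := by
    intro x z
    rw [Finset.prod_ite, Finset.prod_const, Finset.prod_const]
    have h1 : (Finset.univ.filter fun i => ¬ x i = z i).card = hammingDist x z := rfl
    have h2 : (Finset.univ.filter fun i => x i = z i).card = n - hammingDist x z := by
      have := Finset.card_filter_add_card_filter_not
        (s := (Finset.univ : Finset (Fin n))) (p := fun i => x i = z i)
      simp only [Finset.card_univ, Fintype.card_fin] at this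
      omega
    rw [h1, h2, mul_comm]
  have hterm : ∀ z : Fin n → Bool,
      Real.sqrt ((ξ ^ hammingDist y z * (1 - ξ) ^ (n - hammingDist y z)) *
          (ξ ^ hammingDist y' z * (1 - ξ) ^ (n - hammingDist y' z))) =
        ∏ i, Real.sqrt ((if y i = z i then 1 - ξ else ξ) * (if y' i = z i then 1 - ξ else ξ)) := by
    intro z
    rw [key y z, key y' z, ← Finset.prod_mul_distrib,
      sqrt_prod' _ _ (fun i _ => by positivity)]
  simp only [hterm]
  rw [← Fintype.prod_sum
    (f := fun i b => Real.sqrt ((if y i = b then 1 - ξ else ξ) * (if y' i = b then 1 - ξ else ξ)))]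
  have hfac : ∀ i : Fin n, c ≤
      ∑ b : Bool, Real.sqrt ((if y i = b then 1 - ξ else ξ) * (if y' i = b then 1 - ξ else ξ)) := by
    intro i
    rw [Fintype.sum_bool]
    by_cases h : y i = y' i
    · rw [← h]
      rcases Bool.eq_false_or_eq_true (y i) with hb' | hb' <;>
        simp [hb', Real.sqrt_mul_self hξ0, Real.sqrt_mul_self h1ξ] <;> linarith
    · have h' : y' i = !(y i) := by cases hy : y i <;> cases hy' : y' i <;> simp_all
      rcases Bool.eq_false_or_eq_true (y i) with hb' | hb' <;>
        simp [hb', h', mul_comm] <;> rw [hc] <;> ring_nf <;> exact le_rfl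
  have hsqrt : Real.sqrt (4 * ξ - 4 * ξ ^ 2) = c := by
    rw [show 4*ξ-4*ξ^2 = (2:ℝ)^2*(ξ*(1-ξ)) by ring, Real.sqrt_mul (by norm_num),
      Real.sqrt_sq (by norm_num)]
  calc (4 * ξ - 4 * ξ ^ 2) ^ ((n : ℝ) / 2) = c ^ n := by
        rw [show (n:ℝ)/2 = (1/2)*(n:ℝ) by ring, Real.rpow_mul hb, ← Real.sqrt_eq_rpow,
          Real.rpow_natCast, hsqrt]
    _ = ∏ _i : Fin n, c := by rw [Finset.prod_const, Finset.card_univ, Fintype.card_fin]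
    _ ≤ _ := Finset.prod_le_prod (fun _ _ => hc0) (fun i _ => hfac i)
end

section
/- Let X → Y → Z be a Markov chain of finitely-supported random variables, where Z is obtained from Y by passing each of n binary coordinates of Y through an independent binary symmetric channel with crossover probability ξ, 0 ≤ ξ < 1/2. Then I(X;Z) ≤ (1 - (4ξ - 4ξ^2)^n) · I(X;Y). -/
open Finset

/-- Shannon entropy (natural logarithm) of a finitely-supported distribution. -/
noncomputable def ent {α : Type*} [Fintype α] (p : α → ℝ) : ℝ :=
  -∑ x, p x * Real.log (p x)

/-- Mutual information of a joint distribution on a finite product space. -/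
noncomputable def mutInfo {α β : Type*} [Fintype α] [Fintype β] (p : α × β → ℝ) : ℝ :=
  ent (fun x => ∑ y, p (x, y)) + ent (fun y => ∑ x, p (x, y)) - ent p

/-- Transition probability of `n` independent BSC(ξ) channels. -/
noncomputable def bscChannel (ξ : ℝ) {n : ℕ} (y z : Fin n → Bool) : ℝ :=
  ξ ^ (hammingDist y z) * (1 - ξ) ^ (n - hammingDist y z)

section Chunk1
namespace SDPIAux

lemma mul_log_mul (a b : ℝ) :
    (a * b) * Real.log (a * b) = b * (a * Real.log a) + a * (b * Real.log b) := by
  rcases eq_or_ne a 0 with ha | ha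
  · simp [ha]
  rcases eq_or_ne b 0 with hb | hb
  · simp [hb]
  rw [Real.log_mul ha hb]; ring

lemma div_log_div (a c : ℝ) (hc : c ≠ 0) :
    (a / c) * Real.log (a / c) = (a * Real.log a) / c - (a / c) * Real.log c := by
  rcases eq_or_ne a 0 with ha | ha
  · simp [ha]
  rw [Real.log_div ha hc]; ring

lemma ent_comp_equiv {U V : Type*} [Fintype U] [Fintype V] (e : U ≃ V) (p : V → ℝ) :
    ent (fun u => p (e u)) = ent p := by
  unfold ent
  rw [Equiv.sum_comp e (fun v => p v * Real.log (p v))]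

lemma ent_zero {U : Type*} [Fintype U] : ent (fun _ : U => 0) = 0 := by simp [ent]

lemma neg_sum_mul_log {U : Type*} [Fintype U] (d : U → ℝ) (hd : ∀ u, 0 ≤ d u) :
    -∑ u, d u * Real.log (d u)
      = (∑ u, d u) * ent (fun u => d u / (∑ u', d u'))
        - (∑ u, d u) * Real.log (∑ u, d u) := by
  set c := ∑ u, d u with hc
  rcases eq_or_ne c 0 with h0 | h0
  · have hz : ∀ u, d u = 0 := fun u =>
      (Finset.sum_eq_zero_iff_of_nonneg (fun i _ => hd i)).mp (hc.symm.trans h0) u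
        (Finset.mem_univ u)
    simp [h0, hz]
  · have hent : ent (fun u => d u / c) = (-∑ u, d u * Real.log (d u)) / c + Real.log c := by
      unfold ent
      have hpt : ∀ u, (d u / c) * Real.log (d u / c)
          = (d u * Real.log (d u)) / c - (d u / c) * Real.log c := fun u => div_log_div _ _ h0
      rw [Finset.sum_congr rfl (fun u _ => hpt u), Finset.sum_sub_distrib, ← Finset.sum_div]
      have : ∑ u, d u / c * Real.log c = (c / c) * Real.log c := by
        rw [← Finset.sum_mul, ← Finset.sum_div, ← hc]
      rw [this, div_self h0]
      ring
    rw [hent]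
    field_simp
    ring

lemma ent_decomp {σ U : Type*} [Fintype σ] [Fintype U] (m : σ × U → ℝ) (hm : ∀ q, 0 ≤ m q) :
    ent m = ent (fun s => ∑ u, m (s, u))
      + ∑ s, (∑ u, m (s, u)) * ent (fun u => m (s, u) / ∑ u', m (s, u')) := by
  have h1 : ent m = -∑ s, ∑ u, m (s, u) * Real.log (m (s, u)) := by
    unfold ent; rw [Fintype.sum_prod_type]
  have h2 : ∀ s, -∑ u, m (s, u) * Real.log (m (s, u))
      = (∑ u, m (s, u)) * ent (fun u => m (s, u) / ∑ u', m (s, u'))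
        - (∑ u, m (s, u)) * Real.log (∑ u, m (s, u)) :=
    fun s => neg_sum_mul_log (fun u => m (s, u)) (fun u => hm _)
  have h3 : -∑ s, ∑ u, m (s, u) * Real.log (m (s, u))
      = ∑ s, (-∑ u, m (s, u) * Real.log (m (s, u))) := by
    rw [← Finset.sum_neg_distrib]
  have h4 : ent (fun s => ∑ u, m (s, u))
      = -∑ s, (∑ u, m (s, u)) * Real.log (∑ u, m (s, u)) := rfl
  rw [h1, h3, Finset.sum_congr rfl (fun s _ => h2 s), Finset.sum_sub_distrib, h4]
  ring


end SDPIAux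

end Chunk1

section Chunk2
open Finset
namespace SDPIAux

variable {α β σ τ : Type*} [Fintype α] [Fintype β] [Fintype σ] [Fintype τ]

lemma log_ineq {w a b : ℝ} (hw : 0 ≤ w) (ha : w ≤ a) (hb : w ≤ b)
    (ha0 : 0 ≤ a) (hb0 : 0 ≤ b) :
    w * Real.log a + w * Real.log b - w * Real.log w ≤ a * b - w := by
  rcases eq_or_lt_of_le hw with h | h
  · simp [← h]; positivity
  · have ha' : 0 < a := lt_of_lt_of_le h ha
    have hb' : 0 < b := lt_of_lt_of_le h hb
    have hkey : Real.log (a * b / w) ≤ a * b / w - 1 := Real.log_le_sub_one_of_pos (by positivity)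
    have hl : Real.log (a * b / w) = Real.log a + Real.log b - Real.log w := by
      rw [Real.log_div (by positivity) (ne_of_gt h), Real.log_mul (ne_of_gt ha') (ne_of_gt hb')]
    have hc : w * (a * b / w) = a * b := by field_simp
    nlinarith [hkey, hl, hc, h]

lemma mutInfo_nonneg (w : α × β → ℝ) (h0 : ∀ q, 0 ≤ w q) (h1 : ∑ q, w q = 1) :
    0 ≤ mutInfo w := by
  classical
  rw [Fintype.sum_prod_type] at h1
  have ha0 : ∀ x, (0:ℝ) ≤ ∑ y, w (x, y) := fun x => Finset.sum_nonneg fun y _ => h0 _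
  have hb0 : ∀ y, (0:ℝ) ≤ ∑ x, w (x, y) := fun y => Finset.sum_nonneg fun x _ => h0 _
  have haw : ∀ x y, w (x, y) ≤ ∑ y', w (x, y') := fun x y =>
    Finset.single_le_sum (fun i _ => h0 _) (Finset.mem_univ y)
  have hbw : ∀ x y, w (x, y) ≤ ∑ x', w (x', y) := fun x y =>
    Finset.single_le_sum (f := fun x' => w (x', y)) (fun i _ => h0 _) (Finset.mem_univ x)
  have key : ∑ x, ∑ y, (w (x, y) * Real.log (∑ y', w (x, y'))
        + w (x, y) * Real.log (∑ x', w (x', y)) - w (x, y) * Real.log (w (x, y)))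
      ≤ ∑ x, ∑ y, ((∑ y', w (x, y')) * (∑ x', w (x', y)) - w (x, y)) := by
    refine Finset.sum_le_sum fun x _ => Finset.sum_le_sum fun y _ => ?_
    exact log_ineq (h0 _) (haw x y) (hbw x y) (ha0 x) (hb0 y)
  have hrhs : ∑ x, ∑ y, ((∑ y', w (x, y')) * (∑ x', w (x', y)) - w (x, y)) = 0 := by
    rw [Finset.sum_congr rfl fun x _ => Finset.sum_sub_distrib _ _, Finset.sum_sub_distrib]
    have h2 : ∑ x, ∑ y, (∑ y', w (x, y')) * (∑ x', w (x', y))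
        = (∑ x, ∑ y', w (x, y')) * (∑ y, ∑ x', w (x', y)) := by
      rw [Finset.sum_mul_sum]
    have h3 : ∑ y, ∑ x', w (x', y) = 1 := by rw [Finset.sum_comm]; exact h1
    rw [h2, h3, h1]
    norm_num
  have hsplit : mutInfo w = -∑ x, ∑ y, (w (x, y) * Real.log (∑ y', w (x, y'))
        + w (x, y) * Real.log (∑ x', w (x', y)) - w (x, y) * Real.log (w (x, y))) := by
    unfold mutInfo ent
    rw [Fintype.sum_prod_type]
    have e1 : ∑ x, (∑ y, w (x, y)) * Real.log (∑ y, w (x, y))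
        = ∑ x, ∑ y, w (x, y) * Real.log (∑ y', w (x, y')) := by
      exact Finset.sum_congr rfl fun x _ => by rw [Finset.sum_mul]
    have e2 : ∑ y, (∑ x, w (x, y)) * Real.log (∑ x, w (x, y))
        = ∑ x, ∑ y, w (x, y) * Real.log (∑ x', w (x', y)) := by
      rw [Finset.sum_comm]
      exact Finset.sum_congr rfl fun y _ => by rw [Finset.sum_mul]
    rw [e1, e2]
    rw [Finset.sum_congr rfl fun x (_ : x ∈ Finset.univ) => (Finset.sum_sub_distrib (s := Finset.univ)
      (f := fun y => w (x, y) * Real.log (∑ y', w (x, y')) + w (x, y) * Real.log (∑ x', w (x', y)))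
      (g := fun y => w (x, y) * Real.log (w (x, y)))), Finset.sum_sub_distrib]
    rw [Finset.sum_congr rfl fun x (_ : x ∈ Finset.univ) => Finset.sum_add_distrib, Finset.sum_add_distrib]
    ring
  linarith [key.trans_eq hrhs, hsplit]

end SDPIAux
end Chunk2

section Chunk3
open Finset
namespace SDPIAux

variable {α β σ τ : Type*} [Fintype α] [Fintype β] [Fintype σ] [Fintype τ]

lemma ent_congr {U : Type*} [Fintype U] {p q : U → ℝ} (h : p = q) : ent p = ent q := by rw [h]

lemma ent_decomp2 {σ U : Type*} [Fintype σ] [Fintype U] (m : σ → U → ℝ)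
    (hm : ∀ s u, 0 ≤ m s u) :
    ent (fun q : σ × U => m q.1 q.2) = ent (fun s => ∑ u, m s u)
      + ∑ s, (∑ u, m s u) * ent (fun u => m s u / ∑ u', m s u') :=
  ent_decomp (fun q : σ × U => m q.1 q.2) (fun q => hm q.1 q.2)

noncomputable def condMI {α σ τ : Type*} [Fintype α] [Fintype σ] [Fintype τ]
    (p : α × (σ × τ) → ℝ) : ℝ :=
  ∑ s, (∑ u : α × τ, p (u.1, (s, u.2)))
    * mutInfo (fun u : α × τ => p (u.1, (s, u.2)) / ∑ u' : α × τ, p (u'.1, (s, u'.2)))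

lemma condMI_nonneg (p : α × (σ × τ) → ℝ) (hp : ∀ q, 0 ≤ p q) : 0 ≤ condMI p := by
  refine Finset.sum_nonneg fun s _ => ?_
  rcases eq_or_lt_of_le (Finset.sum_nonneg fun (u : α × τ) (_ : u ∈ Finset.univ) =>
    hp (u.1, (s, u.2))) with h | h
  · rw [← h, zero_mul]
  · refine mul_nonneg h.le (mutInfo_nonneg _ (fun q => div_nonneg (hp _) h.le) ?_)
    rw [← Finset.sum_div, div_self (ne_of_gt h)]

lemma chainRule (p : α × (σ × τ) → ℝ) (hp : ∀ q, 0 ≤ p q) :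
    mutInfo p = mutInfo (fun xs : α × σ => ∑ z, p (xs.1, (xs.2, z))) + condMI p := by
  classical
  set Ps : σ → ℝ := fun s => ∑ u : α × τ, p (u.1, (s, u.2)) with hPs
  have hPsx : ∀ s, Ps s = ∑ x, ∑ z, p (x, (s, z)) := fun s =>
    Fintype.sum_prod_type (fun u : α × τ => p (u.1, (s, u.2)))
  have hPsz : ∀ s, Ps s = ∑ z, ∑ x, p (x, (s, z)) := fun s =>
    (hPsx s).trans Finset.sum_comm
  -- (1) full conditional entropy
  have h1 : ent (fun q : σ × (α × τ) => p (q.2.1, (q.1, q.2.2)))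
      = ent Ps + ∑ s, Ps s * ent (fun u : α × τ => p (u.1, (s, u.2)) / Ps s) :=
    ent_decomp2 (fun s (u : α × τ) => p (u.1, (s, u.2))) (fun s u => hp _)
  have hA : ent (fun q : σ × (α × τ) => p (q.2.1, (q.1, q.2.2))) = ent p :=
    ent_comp_equiv ⟨fun q => (q.2.1, (q.1, q.2.2)), fun q => (q.2.1, (q.1, q.2.2)),
      fun _ => rfl, fun _ => rfl⟩ p
  -- (2) conditional entropy of X
  have h2 : ent (fun q : σ × α => ∑ z, p (q.2, (q.1, z)))
      = ent (fun s => ∑ x, ∑ z, p (x, (s, z)))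
        + ∑ s, (∑ x, ∑ z, p (x, (s, z)))
            * ent (fun x => (∑ z, p (x, (s, z))) / ∑ x', ∑ z, p (x', (s, z))) :=
    ent_decomp2 (fun s x => ∑ z, p (x, (s, z)))
      (fun s x => Finset.sum_nonneg fun z _ => hp _)
  have hB : ent (fun q : σ × α => ∑ z, p (q.2, (q.1, z)))
      = ent (fun xs : α × σ => ∑ z, p (xs.1, (xs.2, z))) :=
    ent_comp_equiv (Equiv.prodComm σ α) (fun xs : α × σ => ∑ z, p (xs.1, (xs.2, z)))
  -- (3) conditional entropy of Z2
  have h3 : ent (fun q : σ × τ => ∑ x, p (x, q))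
      = ent (fun s => ∑ z, ∑ x, p (x, (s, z)))
        + ∑ s, (∑ z, ∑ x, p (x, (s, z)))
            * ent (fun z => (∑ x, p (x, (s, z))) / ∑ z', ∑ x, p (x, (s, z'))) :=
    ent_decomp2 (fun s z => ∑ x, p (x, (s, z)))
      (fun s z => Finset.sum_nonneg fun x _ => hp _)
  -- per-s expansion of the conditional mutual information
  have hms : ∀ s : σ, mutInfo (fun u : α × τ => p (u.1, (s, u.2)) / Ps s)
      = ent (fun x => (∑ z, p (x, (s, z))) / ∑ x', ∑ z, p (x', (s, z)))
        + ent (fun z => (∑ x, p (x, (s, z))) / ∑ z', ∑ x, p (x, (s, z')))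
        - ent (fun u : α × τ => p (u.1, (s, u.2)) / Ps s) := by
    intro s
    have m1 : (fun x => ∑ z, p (x, (s, z)) / Ps s)
        = (fun x => (∑ z, p (x, (s, z))) / ∑ x', ∑ z, p (x', (s, z))) := by
      funext x; rw [← Finset.sum_div, hPsx s]
    have m2 : (fun z => ∑ x, p (x, (s, z)) / Ps s)
        = (fun z => (∑ x, p (x, (s, z))) / ∑ z', ∑ x, p (x, (s, z'))) := by
      funext z; rw [← Finset.sum_div, hPsz s]
    simp only [mutInfo]
    rw [m1, m2]
  -- expansion of condMI
  have hcond : condMI p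
      = (∑ s, (∑ x, ∑ z, p (x, (s, z)))
            * ent (fun x => (∑ z, p (x, (s, z))) / ∑ x', ∑ z, p (x', (s, z))))
        + (∑ s, (∑ z, ∑ x, p (x, (s, z)))
            * ent (fun z => (∑ x, p (x, (s, z))) / ∑ z', ∑ x, p (x, (s, z'))))
        - ∑ s, Ps s * ent (fun u : α × τ => p (u.1, (s, u.2)) / Ps s) := by
    unfold condMI
    have key : ∀ s : σ, (∑ u : α × τ, p (u.1, (s, u.2)))
        * mutInfo (fun u : α × τ => p (u.1, (s, u.2)) / ∑ u' : α × τ, p (u'.1, (s, u'.2)))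
        = (∑ x, ∑ z, p (x, (s, z)))
            * ent (fun x => (∑ z, p (x, (s, z))) / ∑ x', ∑ z, p (x', (s, z)))
          + (∑ z, ∑ x, p (x, (s, z)))
            * ent (fun z => (∑ x, p (x, (s, z))) / ∑ z', ∑ x, p (x, (s, z')))
          - Ps s * ent (fun u : α × τ => p (u.1, (s, u.2)) / Ps s) := by
      intro s
      have hrfl : (∑ u : α × τ, p (u.1, (s, u.2)))
          * mutInfo (fun u : α × τ => p (u.1, (s, u.2)) / ∑ u' : α × τ, p (u'.1, (s, u'.2)))
          = Ps s * mutInfo (fun u : α × τ => p (u.1, (s, u.2)) / Ps s) := rfl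
      rw [hrfl, hms s, mul_sub, mul_add, ← hPsx s, ← hPsz s]
    rw [Finset.sum_congr rfl fun s _ => key s, Finset.sum_sub_distrib, Finset.sum_add_distrib]
  -- marginal sums agreement
  have hE : ent (fun x => ∑ yz : σ × τ, p (x, yz)) = ent (fun x => ∑ s, ∑ z, p (x, (s, z))) :=
    ent_congr (funext fun x => Fintype.sum_prod_type (fun yz : σ × τ => p (x, yz)))
  have hD : ent (fun s => ∑ x, ∑ z, p (x, (s, z))) = ent Ps :=
    ent_congr (funext fun s => (hPsx s).symm)
  have hD2 : ent (fun s => ∑ z, ∑ x, p (x, (s, z))) = ent Ps :=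
    ent_congr (funext fun s => (hPsz s).symm)
  have hC3 : ent (fun yz : σ × τ => ∑ x, p (x, yz)) = ent (fun q : σ × τ => ∑ x, p (x, q)) := rfl
  -- assemble
  simp only [mutInfo]
  rw [hcond]
  linarith [h1, hA, h2, hB, h3, hE, hD, hD2]

end SDPIAux
end Chunk3

section Chunk4
open Finset
namespace SDPIAux

variable {α β γ : Type*} [Fintype α] [Fintype β] [Fintype γ]

noncomputable def push {α β γ : Type*} [Fintype α] [Fintype β] [Fintype γ]
    (w : α × β → ℝ) (K : β → γ → ℝ) : α × γ → ℝ :=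
  fun xz => ∑ y, w (xz.1, y) * K y xz.2

def IsChannel {β γ : Type*} [Fintype γ] (K : β → γ → ℝ) : Prop :=
  (∀ y z, 0 ≤ K y z) ∧ ∀ y, ∑ z, K y z = 1

lemma push_nonneg {w : α × β → ℝ} {K : β → γ → ℝ} (hw : ∀ q, 0 ≤ w q)
    (hK : ∀ y z, 0 ≤ K y z) : ∀ q, 0 ≤ push w K q :=
  fun q => Finset.sum_nonneg fun y _ => mul_nonneg (hw _) (hK _ _)

lemma push_sum {w : α × β → ℝ} {K : β → γ → ℝ} (hK1 : ∀ y, ∑ z, K y z = 1)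
    (hw1 : ∑ q, w q = 1) : ∑ q, push w K q = 1 := by
  rw [Fintype.sum_prod_type] at hw1 ⊢
  unfold push
  have : ∀ x, ∑ z : γ, ∑ y, w (x, y) * K y z = ∑ y, w (x, y) := by
    intro x
    rw [Finset.sum_comm]
    refine Finset.sum_congr rfl fun y _ => ?_
    rw [← Finset.mul_sum, hK1 y, mul_one]
  rw [Finset.sum_congr rfl fun x _ => this x]
  exact hw1

lemma ent_mul_channel (v : β → ℝ) (K : β → γ → ℝ) (hK1 : ∀ y, ∑ z, K y z = 1) :
    ent (fun yz : β × γ => v yz.1 * K yz.1 yz.2)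
      = ent v - ∑ y, v y * (∑ z, K y z * Real.log (K y z)) := by
  unfold ent
  rw [Fintype.sum_prod_type]
  have key : ∀ y, ∑ z, (v y * K y z) * Real.log (v y * K y z)
      = v y * Real.log (v y) + v y * (∑ z, K y z * Real.log (K y z)) := by
    intro y
    rw [Finset.sum_congr rfl fun z _ => mul_log_mul (v y) (K y z), Finset.sum_add_distrib,
      ← Finset.sum_mul, hK1 y, ← Finset.mul_sum, one_mul]
  rw [Finset.sum_congr rfl fun y _ => key y, Finset.sum_add_distrib]
  ring

lemma mutInfo_append (w : α × β → ℝ) (K : β → γ → ℝ) (hK1 : ∀ y, ∑ z, K y z = 1) :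
    mutInfo (fun q : α × (β × γ) => w (q.1, q.2.1) * K q.2.1 q.2.2) = mutInfo w := by
  have hX : (fun x => ∑ yz : β × γ, w (x, yz.1) * K yz.1 yz.2) = fun x => ∑ y, w (x, y) := by
    funext x
    rw [Fintype.sum_prod_type (f := fun yz : β × γ => w (x, yz.1) * K yz.1 yz.2)]
    refine Finset.sum_congr rfl fun y _ => ?_
    show ∑ z : γ, w (x, y) * K y z = w (x, y)
    rw [← Finset.mul_sum, hK1 y, mul_one]
  have hJ : ent (fun q : α × (β × γ) => w (q.1, q.2.1) * K q.2.1 q.2.2)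
      = ent w - ∑ y, (∑ x, w (x, y)) * (∑ z, K y z * Real.log (K y z)) := by
    have e1 : ent (fun q : α × (β × γ) => w (q.1, q.2.1) * K q.2.1 q.2.2)
        = ent (fun r : (α × β) × γ => w r.1 * K r.1.2 r.2) :=
      (ent_comp_equiv (Equiv.prodAssoc α β γ)
        (fun q : α × (β × γ) => w (q.1, q.2.1) * K q.2.1 q.2.2)).symm
    have e2 : ent (fun r : (α × β) × γ => w r.1 * K r.1.2 r.2)
        = ent w - ∑ xy : α × β, w xy * (∑ z, K xy.2 z * Real.log (K xy.2 z)) :=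
      ent_mul_channel (β := α × β) w (fun xy z => K xy.2 z) (fun xy => hK1 xy.2)
    have e3 : ∑ xy : α × β, w xy * (∑ z, K xy.2 z * Real.log (K xy.2 z))
        = ∑ y, (∑ x, w (x, y)) * (∑ z, K y z * Real.log (K y z)) := by
      rw [Fintype.sum_prod_type (f := fun xy : α × β => w xy * (∑ z, K xy.2 z * Real.log (K xy.2 z))),
        Finset.sum_comm]
      exact Finset.sum_congr rfl fun y _ => by rw [Finset.sum_mul]
    rw [e1, e2, e3]
  have hY : ent (fun yz : β × γ => ∑ x, w (x, yz.1) * K yz.1 yz.2)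
      = ent (fun y => ∑ x, w (x, y))
        - ∑ y, (∑ x, w (x, y)) * (∑ z, K y z * Real.log (K y z)) := by
    have e0 : (fun yz : β × γ => ∑ x, w (x, yz.1) * K yz.1 yz.2)
        = fun yz : β × γ => (fun y => ∑ x, w (x, y)) yz.1 * K yz.1 yz.2 := by
      funext yz; rw [← Finset.sum_mul]
    rw [e0]
    exact ent_mul_channel (fun y => ∑ x, w (x, y)) K hK1
  simp only [mutInfo]
  rw [hX, hJ, hY]
  ring

lemma mutInfo_comp_snd_equiv {α β γ : Type*} [Fintype α] [Fintype β] [Fintype γ]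
    (e : γ ≃ β) (p : α × β → ℝ) :
    mutInfo (fun q : α × γ => p (q.1, e q.2)) = mutInfo p := by
  have h1 : (fun x => ∑ y : γ, p (x, e y)) = fun x => ∑ y : β, p (x, y) :=
    funext fun x => Equiv.sum_comp e (fun y => p (x, y))
  have h2 : ent (fun y : γ => ∑ x, p (x, e y)) = ent (fun y : β => ∑ x, p (x, y)) :=
    ent_comp_equiv e (fun y : β => ∑ x, p (x, y))
  have h3 : ent (fun q : α × γ => p (q.1, e q.2)) = ent p :=
    ent_comp_equiv (Equiv.prodCongr (Equiv.refl α) e) p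
  simp only [mutInfo]
  rw [h1, h2, h3]

lemma mutInfo_marg_le (w : α × (β × γ) → ℝ) (hw : ∀ q, 0 ≤ w q) :
    mutInfo (fun xs : α × β => ∑ y2, w (xs.1, (xs.2, y2))) ≤ mutInfo w := by
  have h := chainRule w hw
  have h2 := condMI_nonneg w hw
  linarith

lemma mutInfo_push_le (w : α × β → ℝ) (K : β → γ → ℝ) (hK : IsChannel K)
    (hw0 : ∀ q, 0 ≤ w q) : mutInfo (push w K) ≤ mutInfo w := by
  have hj : ∀ q : α × (γ × β), 0 ≤ w (q.1, q.2.2) * K q.2.2 q.2.1 :=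
    fun q => mul_nonneg (hw0 _) (hK.1 _ _)
  have hcr := chainRule (fun q : α × (γ × β) => w (q.1, q.2.2) * K q.2.2 q.2.1) hj
  have hmarg : (fun xs : α × γ => ∑ z : β, w (xs.1, z) * K z xs.2) = push w K := rfl
  rw [hmarg] at hcr
  have hsw : mutInfo (fun q : α × (γ × β) => w (q.1, q.2.2) * K q.2.2 q.2.1)
      = mutInfo (fun q : α × (β × γ) => w (q.1, q.2.1) * K q.2.1 q.2.2) :=
    mutInfo_comp_snd_equiv (Equiv.prodComm γ β)
      (fun q : α × (β × γ) => w (q.1, q.2.1) * K q.2.1 q.2.2)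
  have happ := mutInfo_append w K hK.2
  have hnn := condMI_nonneg (fun q : α × (γ × β) => w (q.1, q.2.2) * K q.2.2 q.2.1) hj
  linarith

end SDPIAux
end Chunk4

section Chunk5
open Finset
namespace SDPIAux

universe u

def SDPIle {β γ : Type*} [Fintype β] [Fintype γ] (K : β → γ → ℝ) (c : ℝ) : Prop :=
  ∀ {α : Type u} [Fintype α] (w : α × β → ℝ), (∀ q, 0 ≤ w q) → (∑ q, w q = 1) →
    mutInfo (push w K) ≤ c * mutInfo w

noncomputable def tens {β γ β' γ' : Type*} (K : β → β' → ℝ) (L : γ → γ' → ℝ) :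
    β × γ → β' × γ' → ℝ := fun y z => K y.1 z.1 * L y.2 z.2

lemma tens_isChannel {β γ β' γ' : Type*} [Fintype β'] [Fintype γ']
    {K : β → β' → ℝ} {L : γ → γ' → ℝ} (hK : IsChannel K) (hL : IsChannel L) :
    IsChannel (tens K L) := by
  constructor
  · intro y z; exact mul_nonneg (hK.1 _ _) (hL.1 _ _)
  · intro y
    show ∑ z : β' × γ', K y.1 z.1 * L y.2 z.2 = 1
    rw [Fintype.sum_prod_type (f := fun z : β' × γ' => K y.1 z.1 * L y.2 z.2)]
    have : ∀ z1 : β', ∑ z2 : γ', K y.1 z1 * L y.2 z2 = K y.1 z1 := by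
      intro z1; rw [← Finset.mul_sum, hL.2 y.2, mul_one]
    rw [Finset.sum_congr rfl fun z1 _ => this z1]
    exact hK.2 y.1

lemma tensor_step {β γ β' γ' : Type*} [Fintype β] [Fintype γ] [Fintype β'] [Fintype γ']
    {K : β → β' → ℝ} {L : γ → γ' → ℝ} {a b : ℝ}
    (hK : IsChannel K) (hL : IsChannel L) (ha0 : 0 ≤ a) (hb0 : 0 ≤ b) (hb1 : b ≤ 1)
    (hKa : SDPIle.{u} K a) (hLb : SDPIle.{u} L b) :
    SDPIle.{u} (tens K L) (a + b - a * b) := by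
  intro α _ w hw0 hw1
  classical
  set w1 : α × β → ℝ := fun xy => ∑ y2, w (xy.1, (xy.2, y2)) with hw1def
  set qq : α × (β' × γ) → ℝ := fun r => ∑ y1 : β, w (r.1, (y1, r.2.2)) * K y1 r.2.1 with hqqdef
  have hp0 : ∀ r, 0 ≤ push w (tens K L) r := push_nonneg hw0 (tens_isChannel hK hL).1
  have hq0 : ∀ r, 0 ≤ qq r := fun r =>
    Finset.sum_nonneg fun y1 _ => mul_nonneg (hw0 _) (hK.1 _ _)
  have hw10 : ∀ r, 0 ≤ w1 r := fun r => Finset.sum_nonneg fun y2 _ => hw0 _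
  have hw11 : ∑ r, w1 r = 1 := by
    rw [Fintype.sum_prod_type] at hw1
    rw [Fintype.sum_prod_type (f := w1)]
    rw [← hw1]
    refine Finset.sum_congr rfl fun x _ => ?_
    rw [Fintype.sum_prod_type (f := fun y : β × γ => w (x, y))]
  -- chain rules
  have hchainp := chainRule (push w (tens K L)) hp0
  have hchainq := chainRule qq hq0
  -- both marginals over the second output coincide with push w1 K
  have hmargp : (fun xs : α × β' => ∑ z2 : γ', push w (tens K L) (xs.1, (xs.2, z2)))
      = push w1 K := by
    funext xs
    show ∑ z2 : γ', ∑ y : β × γ, w (xs.1, y) * (K y.1 xs.2 * L y.2 z2)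
        = ∑ y1 : β, w1 (xs.1, y1) * K y1 xs.2
    rw [Finset.sum_comm]
    have step1 : ∀ y : β × γ, ∑ z2 : γ', w (xs.1, y) * (K y.1 xs.2 * L y.2 z2)
        = w (xs.1, y) * K y.1 xs.2 := by
      intro y
      rw [← Finset.mul_sum, ← Finset.mul_sum, hL.2 y.2, mul_one]
    rw [Finset.sum_congr rfl fun y _ => step1 y,
      Fintype.sum_prod_type (f := fun y : β × γ => w (xs.1, y) * K y.1 xs.2)]
    refine Finset.sum_congr rfl fun y1 _ => ?_
    show ∑ y2 : γ, w (xs.1, (y1, y2)) * K y1 xs.2 = (∑ y2, w (xs.1, (y1, y2))) * K y1 xs.2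
    rw [← Finset.sum_mul]
  have hmargq : (fun xs : α × β' => ∑ y2 : γ, qq (xs.1, (xs.2, y2))) = push w1 K := by
    funext xs
    show ∑ y2 : γ, ∑ y1 : β, w (xs.1, (y1, y2)) * K y1 xs.2
        = ∑ y1 : β, w1 (xs.1, y1) * K y1 xs.2
    rw [Finset.sum_comm]
    refine Finset.sum_congr rfl fun y1 _ => ?_
    show ∑ y2 : γ, w (xs.1, (y1, y2)) * K y1 xs.2 = (∑ y2, w (xs.1, (y1, y2))) * K y1 xs.2
    rw [← Finset.sum_mul]
  rw [hmargp] at hchainp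
  rw [hmargq] at hchainq
  -- mutInfo qq ≤ mutInfo w via DPI
  have hqw : mutInfo qq ≤ mutInfo w := by
    have hM : IsChannel (fun (y : β × γ) (r : β' × γ) =>
        K y.1 r.1 * (if r.2 = y.2 then (1:ℝ) else 0)) := by
      constructor
      · intro y r
        refine mul_nonneg (hK.1 _ _) ?_
        by_cases h : r.2 = y.2 <;> simp [h]
      · intro y
        rw [Fintype.sum_prod_type (f := fun r : β' × γ =>
          K y.1 r.1 * (if r.2 = y.2 then (1:ℝ) else 0))]
        have : ∀ z1 : β', ∑ y2' : γ, K y.1 z1 * (if y2' = y.2 then (1:ℝ) else 0)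
            = K y.1 z1 := by
          intro z1
          rw [← Finset.mul_sum]
          simp
        rw [Finset.sum_congr rfl fun z1 _ => this z1]
        exact hK.2 y.1
    have hpm : push w (fun (y : β × γ) (r : β' × γ) =>
        K y.1 r.1 * (if r.2 = y.2 then (1:ℝ) else 0)) = qq := by
      funext r
      show ∑ y : β × γ, w (r.1, y) * (K y.1 r.2.1 * (if r.2.2 = y.2 then (1:ℝ) else 0))
        = ∑ y1 : β, w (r.1, (y1, r.2.2)) * K y1 r.2.1
      rw [Fintype.sum_prod_type (f := fun y : β × γ =>
        w (r.1, y) * (K y.1 r.2.1 * (if r.2.2 = y.2 then (1:ℝ) else 0)))]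
      refine Finset.sum_congr rfl fun y1 _ => ?_
      show ∑ y2 : γ, w (r.1, (y1, y2)) * (K y1 r.2.1 * (if r.2.2 = y2 then (1:ℝ) else 0))
        = w (r.1, (y1, r.2.2)) * K y1 r.2.1
      simp [mul_ite]
    have := mutInfo_push_le w _ hM hw0
    rwa [hpm] at this
  -- conditional SDPI for L
  have hcond : condMI (push w (tens K L)) ≤ b * condMI qq := by
    unfold condMI
    rw [Finset.mul_sum]
    refine Finset.sum_le_sum fun s _ => ?_
    have hc0 : 0 ≤ ∑ u : α × γ, qq (u.1, (s, u.2)) :=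
      Finset.sum_nonneg fun u _ => hq0 _
    have hPeq : (∑ u : α × γ', push w (tens K L) (u.1, (s, u.2)))
        = ∑ u : α × γ, qq (u.1, (s, u.2)) := by
      rw [Fintype.sum_prod_type (f := fun u : α × γ' => push w (tens K L) (u.1, (s, u.2))),
        Fintype.sum_prod_type (f := fun u : α × γ => qq (u.1, (s, u.2)))]
      refine Finset.sum_congr rfl fun x _ => ?_
      show ∑ z2 : γ', ∑ y : β × γ, w (x, y) * (K y.1 s * L y.2 z2)
          = ∑ y2 : γ, ∑ y1 : β, w (x, (y1, y2)) * K y1 s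
      rw [Finset.sum_comm]
      have step1 : ∀ y : β × γ, ∑ z2 : γ', w (x, y) * (K y.1 s * L y.2 z2)
          = w (x, y) * K y.1 s := by
        intro y
        rw [← Finset.mul_sum, ← Finset.mul_sum, hL.2 y.2, mul_one]
      rw [Finset.sum_congr rfl fun y _ => step1 y,
        Fintype.sum_prod_type (f := fun y : β × γ => w (x, y) * K y.1 s), Finset.sum_comm]
    rw [hPeq]
    rcases eq_or_lt_of_le hc0 with hzero | hpos
    · rw [← hzero]
      simp
    · have hfun : (fun u : α × γ' => push w (tens K L) (u.1, (s, u.2))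
            / ∑ u' : α × γ, qq (u'.1, (s, u'.2)))
          = push (fun u : α × γ => qq (u.1, (s, u.2)) / ∑ u' : α × γ, qq (u'.1, (s, u'.2))) L := by
        funext u
        show (∑ y : β × γ, w (u.1, y) * (K y.1 s * L y.2 u.2)) / (∑ u' : α × γ, qq (u'.1, (s, u'.2)))
            = ∑ y2 : γ, (∑ y1 : β, w (u.1, (y1, y2)) * K y1 s)
                / (∑ u' : α × γ, qq (u'.1, (s, u'.2))) * L y2 u.2
        have : ∀ y2 : γ, (∑ y1 : β, w (u.1, (y1, y2)) * K y1 s)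
                / (∑ u' : α × γ, qq (u'.1, (s, u'.2))) * L y2 u.2
            = (∑ y1 : β, w (u.1, (y1, y2)) * K y1 s * L y2 u.2)
                / (∑ u' : α × γ, qq (u'.1, (s, u'.2))) := by
          intro y2
          rw [div_mul_eq_mul_div, Finset.sum_mul]
        rw [Finset.sum_congr rfl fun y2 _ => this y2, ← Finset.sum_div]
        congr 1
        rw [Fintype.sum_prod_type (f := fun y : β × γ => w (u.1, y) * (K y.1 s * L y.2 u.2)),
          Finset.sum_comm]
        refine Finset.sum_congr rfl fun y2 _ => Finset.sum_congr rfl fun y1 _ => by ring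
      rw [hfun]
      have hm0 : ∀ r, 0 ≤ (fun u : α × γ => qq (u.1, (s, u.2))
          / ∑ u' : α × γ, qq (u'.1, (s, u'.2))) r :=
        fun r => div_nonneg (hq0 _) hc0
      have hm1 : ∑ r, (fun u : α × γ => qq (u.1, (s, u.2))
          / ∑ u' : α × γ, qq (u'.1, (s, u'.2))) r = 1 := by
        rw [← Finset.sum_div, div_self (ne_of_gt hpos)]
      have hLs := hLb _ hm0 hm1
      have hmul := mul_le_mul_of_nonneg_left hLs (le_of_lt hpos)
      have hring : (∑ u : α × γ, qq (u.1, (s, u.2)))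
            * (b * mutInfo (fun u : α × γ => qq (u.1, (s, u.2))
                / ∑ u' : α × γ, qq (u'.1, (s, u'.2))))
          = b * ((∑ u : α × γ, qq (u.1, (s, u.2)))
            * mutInfo (fun u : α × γ => qq (u.1, (s, u.2))
                / ∑ u' : α × γ, qq (u'.1, (s, u'.2)))) := by ring
      linarith [hmul, hring.le, hring.ge]
  -- SDPI for K on the first marginal
  have hKstep : mutInfo (push w1 K) ≤ a * mutInfo w1 := hKa w1 hw10 hw11
  have hw1le : mutInfo w1 ≤ mutInfo w := mutInfo_marg_le w hw0
  -- combine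
  have hA_le : mutInfo (push w1 K) ≤ a * mutInfo w :=
    le_trans hKstep (mul_le_mul_of_nonneg_left hw1le ha0)
  have h1 : 0 ≤ (1 - b) * (a * mutInfo w - mutInfo (push w1 K)) :=
    mul_nonneg (by linarith) (by linarith)
  have h2 : b * mutInfo qq ≤ b * mutInfo w := mul_le_mul_of_nonneg_left hqw hb0
  have hbc : b * condMI qq = b * mutInfo qq - b * mutInfo (push w1 K) := by
    have : condMI qq = mutInfo qq - mutInfo (push w1 K) := by linarith [hchainq]
    rw [this]; ring
  have e1 : (a + b - a * b) * mutInfo w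
      = (1 - b) * (a * mutInfo w - mutInfo (push w1 K))
        + (mutInfo (push w1 K) - b * mutInfo (push w1 K)) + b * mutInfo w := by ring
  linarith [hchainp, hcond, hbc, h2, h1, e1]

end SDPIAux
end Chunk5

section Chunk6
open Finset Set
namespace SDPIAux

lemma G_hasDerivAt {ξ : ℝ} (hξ0 : 0 ≤ ξ) (hξ : ξ < 1/2) {x : ℝ} (hx0 : 0 < x) (hx1 : x < 1) :
    HasDerivAt (fun t => Real.binEntropy (ξ + (1 - 2*ξ) * t)
        - (1 - 2*ξ)^2 * Real.binEntropy t)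
      ((Real.log (1 - (ξ + (1 - 2*ξ) * x)) - Real.log (ξ + (1 - 2*ξ) * x)) * (1 - 2*ξ)
        - (1 - 2*ξ)^2 * (Real.log (1 - x) - Real.log x)) x := by
  have h2ξ : 0 < 1 - 2*ξ := by linarith
  have hφ0 : 0 < ξ + (1 - 2*ξ) * x := by nlinarith
  have hφ1 : ξ + (1 - 2*ξ) * x < 1 := by nlinarith
  have haff : HasDerivAt (fun t : ℝ => ξ + (1 - 2*ξ) * t) (1 - 2*ξ) x := by
    simpa using ((hasDerivAt_id x).const_mul (1 - 2*ξ)).const_add ξ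
  have h1 : HasDerivAt (fun t => Real.binEntropy (ξ + (1 - 2*ξ) * t))
      ((Real.log (1 - (ξ + (1 - 2*ξ) * x)) - Real.log (ξ + (1 - 2*ξ) * x)) * (1 - 2*ξ)) x :=
    by have := (Real.hasDerivAt_binEntropy (p := ξ + (1 - 2*ξ) * x) (ne_of_gt hφ0) (ne_of_lt hφ1)).comp x haff; exact this
  have h2 : HasDerivAt (fun t => (1 - 2*ξ)^2 * Real.binEntropy t)
      ((1 - 2*ξ)^2 * (Real.log (1 - x) - Real.log x)) x :=
    (Real.hasDerivAt_binEntropy (ne_of_gt hx0) (ne_of_lt hx1)).const_mul ((1 - 2*ξ)^2)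
  exact h1.sub h2

lemma D_hasDerivAt {ξ : ℝ} (hξ0 : 0 ≤ ξ) (hξ : ξ < 1/2) {x : ℝ} (hx0 : 0 < x) (hx1 : x < 1) :
    HasDerivAt (fun t => (Real.log (1 - (ξ + (1 - 2*ξ) * t)) - Real.log (ξ + (1 - 2*ξ) * t)) * (1 - 2*ξ)
        - (1 - 2*ξ)^2 * (Real.log (1 - t) - Real.log t))
      (((-(1 - 2*ξ)) / (1 - (ξ + (1 - 2*ξ) * x)) - (1 - 2*ξ) / (ξ + (1 - 2*ξ) * x)) * (1 - 2*ξ)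
        - (1 - 2*ξ)^2 * ((-1) / (1 - x) - 1 / x)) x := by
  have h2ξ : 0 < 1 - 2*ξ := by linarith
  have hφ0 : 0 < ξ + (1 - 2*ξ) * x := by nlinarith
  have hφ1 : ξ + (1 - 2*ξ) * x < 1 := by nlinarith
  have ha1 : HasDerivAt (fun t : ℝ => 1 - (ξ + (1 - 2*ξ) * t)) (-(1 - 2*ξ)) x := by
    simpa using (((hasDerivAt_id x).const_mul (1 - 2*ξ)).const_add ξ).const_sub 1
  have ha2 : HasDerivAt (fun t : ℝ => ξ + (1 - 2*ξ) * t) (1 - 2*ξ) x := by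
    simpa using ((hasDerivAt_id x).const_mul (1 - 2*ξ)).const_add ξ
  have hl1 : HasDerivAt (fun t => Real.log (1 - (ξ + (1 - 2*ξ) * t)))
      ((-(1 - 2*ξ)) / (1 - (ξ + (1 - 2*ξ) * x))) x := ha1.log (by linarith)
  have hl2 : HasDerivAt (fun t => Real.log (ξ + (1 - 2*ξ) * t))
      ((1 - 2*ξ) / (ξ + (1 - 2*ξ) * x)) x := ha2.log (ne_of_gt hφ0)
  have ha3 : HasDerivAt (fun t : ℝ => 1 - t) (-1) x := by
    simpa using (hasDerivAt_id x).const_sub 1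
  have hl3 : HasDerivAt (fun t => Real.log (1 - t)) ((-1) / (1 - x)) x := ha3.log (by linarith)
  have hl4 : HasDerivAt (fun t => Real.log t) (1 / x) x := by
    simpa [one_div] using Real.hasDerivAt_log (ne_of_gt hx0)
  exact ((hl1.sub hl2).mul_const (1 - 2*ξ)).sub ((hl3.sub hl4).const_mul ((1 - 2*ξ)^2))

lemma alg_helper (d u x : ℝ) (hu0 : u ≠ 0) (hu1 : 1 - u ≠ 0) (hx0 : x ≠ 0) (hx1 : 1 - x ≠ 0) :
    ((-d) / (1 - u) - d / u) * d - d^2 * ((-1) / (1 - x) - 1 / x)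
      = d^2 * (1 / (x * (1 - x)) - 1 / (u * (1 - u))) := by
  field_simp
  ring

lemma G_convexOn {ξ : ℝ} (hξ0 : 0 ≤ ξ) (hξ : ξ < 1/2) :
    ConvexOn ℝ (Set.Icc (0:ℝ) 1)
      (fun t => Real.binEntropy (ξ + (1 - 2*ξ) * t) - (1 - 2*ξ)^2 * Real.binEntropy t) := by
  have h2ξ : 0 < 1 - 2*ξ := by linarith
  set f : ℝ → ℝ := fun t => Real.binEntropy (ξ + (1 - 2*ξ) * t)
      - (1 - 2*ξ)^2 * Real.binEntropy t with hf
  have hderiv : ∀ x ∈ Set.Ioo (0:ℝ) 1, deriv f x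
      = (Real.log (1 - (ξ + (1 - 2*ξ) * x)) - Real.log (ξ + (1 - 2*ξ) * x)) * (1 - 2*ξ)
        - (1 - 2*ξ)^2 * (Real.log (1 - x) - Real.log x) :=
    fun x hx => (G_hasDerivAt hξ0 hξ hx.1 hx.2).deriv
  apply convexOn_of_deriv2_nonneg (convex_Icc 0 1)
  · exact ((Real.binEntropy_continuous.comp (by continuity)).sub
      (continuous_const.mul Real.binEntropy_continuous)).continuousOn
  · rw [interior_Icc]
    exact fun x hx => (G_hasDerivAt hξ0 hξ hx.1 hx.2).differentiableAt.differentiableWithinAt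
  · rw [interior_Icc]
    intro x hx
    have heq : deriv f =ᶠ[nhds x] fun t =>
        (Real.log (1 - (ξ + (1 - 2*ξ) * t)) - Real.log (ξ + (1 - 2*ξ) * t)) * (1 - 2*ξ)
          - (1 - 2*ξ)^2 * (Real.log (1 - t) - Real.log t) :=
      Filter.eventuallyEq_of_mem (Ioo_mem_nhds hx.1 hx.2) hderiv
    exact (Filter.EventuallyEq.differentiableAt_iff heq).mpr
      (D_hasDerivAt hξ0 hξ hx.1 hx.2).differentiableAt |>.differentiableWithinAt
  · rw [interior_Icc]
    intro x hx
    have heq : deriv f =ᶠ[nhds x] fun t =>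
        (Real.log (1 - (ξ + (1 - 2*ξ) * t)) - Real.log (ξ + (1 - 2*ξ) * t)) * (1 - 2*ξ)
          - (1 - 2*ξ)^2 * (Real.log (1 - t) - Real.log t) :=
      Filter.eventuallyEq_of_mem (Ioo_mem_nhds hx.1 hx.2) hderiv
    have hd2 : deriv^[2] f x
        = ((-(1 - 2*ξ)) / (1 - (ξ + (1 - 2*ξ) * x)) - (1 - 2*ξ) / (ξ + (1 - 2*ξ) * x)) * (1 - 2*ξ)
          - (1 - 2*ξ)^2 * ((-1) / (1 - x) - 1 / x) := by
      show deriv (deriv f) x = _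
      rw [Filter.EventuallyEq.deriv_eq heq]
      exact (D_hasDerivAt hξ0 hξ hx.1 hx.2).deriv
    rw [hd2]
    obtain ⟨hx0, hx1⟩ := hx
    have hφ0 : 0 < ξ + (1 - 2*ξ) * x := by nlinarith
    have hφ1 : ξ + (1 - 2*ξ) * x < 1 := by nlinarith
    have hkey : x * (1 - x) ≤ (ξ + (1 - 2*ξ) * x) * (1 - (ξ + (1 - 2*ξ) * x)) := by
      nlinarith [sq_nonneg (2*x - 1), mul_nonneg hξ0 (by linarith : (0:ℝ) ≤ 1 - ξ)]
    have hxx : 0 < x * (1 - x) := by nlinarith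
    have hφφ : 0 < (ξ + (1 - 2*ξ) * x) * (1 - (ξ + (1 - 2*ξ) * x)) := by nlinarith
    have hrw : ((-(1 - 2*ξ)) / (1 - (ξ + (1 - 2*ξ) * x)) - (1 - 2*ξ) / (ξ + (1 - 2*ξ) * x)) * (1 - 2*ξ)
          - (1 - 2*ξ)^2 * ((-1) / (1 - x) - 1 / x)
        = (1 - 2*ξ)^2 * (1 / (x * (1 - x)) - 1 / ((ξ + (1 - 2*ξ) * x) * (1 - (ξ + (1 - 2*ξ) * x)))) :=
      alg_helper (1 - 2*ξ) (ξ + (1 - 2*ξ) * x) x (ne_of_gt hφ0) (by linarith) (ne_of_gt hx0) (by linarith)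
    rw [hrw]
    have hle : 1 / ((ξ + (1 - 2*ξ) * x) * (1 - (ξ + (1 - 2*ξ) * x))) ≤ 1 / (x * (1 - x)) :=
      one_div_le_one_div_of_le hxx hkey
    have : 0 ≤ 1 / (x * (1 - x)) - 1 / ((ξ + (1 - 2*ξ) * x) * (1 - (ξ + (1 - 2*ξ) * x))) := by
      linarith
    positivity

end SDPIAux
end Chunk6

section Chunk7
open Finset
namespace SDPIAux

universe u

noncomputable def bsc1 (ξ : ℝ) : Bool → Bool → ℝ := fun y z => if y = z then 1 - ξ else ξ

lemma bsc1_isChannel {ξ : ℝ} (h0 : 0 ≤ ξ) (h1 : ξ ≤ 1) : IsChannel (bsc1 ξ) := by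
  constructor
  · intro y z
    unfold bsc1
    by_cases h : y = z <;> simp [h] <;> linarith
  · intro y
    rw [Fintype.sum_bool]
    cases y <;> simp [bsc1] <;> ring

lemma ent_bool (d : Bool → ℝ) (h : d false = 1 - d true) : ent d = Real.binEntropy (d true) := by
  have h1 : ent d = -(d true * Real.log (d true)) + -(d false * Real.log (d false)) := by
    unfold ent; rw [Fintype.sum_bool]; ring
  rw [h1, h, Real.binEntropy_eq_negMulLog_add_negMulLog_one_sub]
  simp only [Real.negMulLog]
  ring

lemma mutInfo_bool {α : Type*} [Fintype α] (v : α × Bool → ℝ) (hv0 : ∀ q, 0 ≤ v q)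
    (hv1 : ∑ q, v q = 1) :
    mutInfo v = Real.binEntropy (∑ x, v (x, true))
      - ∑ x, (v (x, true) + v (x, false))
          * Real.binEntropy (v (x, true) / (v (x, true) + v (x, false))) := by
  have hdec : ent v = ent (fun x => ∑ c, v (x, c))
      + ∑ x, (∑ c, v (x, c)) * ent (fun c => v (x, c) / ∑ c', v (x, c')) :=
    ent_decomp2 (fun x (c : Bool) => v (x, c)) (fun x c => hv0 _)
  have hterm : ∀ x, (∑ c, v (x, c)) * ent (fun c => v (x, c) / ∑ c', v (x, c'))
      = (v (x, true) + v (x, false))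
          * Real.binEntropy (v (x, true) / (v (x, true) + v (x, false))) := by
    intro x
    have hsb : (∑ c, v (x, c)) = v (x, true) + v (x, false) := Fintype.sum_bool _
    rcases eq_or_ne (v (x, true) + v (x, false)) 0 with h | h
    · rw [hsb, h, zero_mul, zero_mul]
    · rw [hsb]
      congr 1
      refine ent_bool _ ?_
      show v (x, false) / (v (x, true) + v (x, false)) = 1 - v (x, true) / (v (x, true) + v (x, false))
      field_simp
      ring
  have hmargB : ent (fun c => ∑ x, v (x, c)) = Real.binEntropy (∑ x, v (x, true)) := by
    refine ent_bool _ ?_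
    have h1 : ∑ x, (v (x, true) + v (x, false)) = 1 := by
      rw [Fintype.sum_prod_type] at hv1
      rw [← hv1]
      exact Finset.sum_congr rfl fun x _ => (Fintype.sum_bool (fun c => v (x, c))).symm
    rw [Finset.sum_add_distrib] at h1
    show ∑ x, v (x, false) = 1 - ∑ x, v (x, true)
    linarith
  simp only [mutInfo]
  rw [hdec, hmargB, Finset.sum_congr rfl fun x _ => hterm x]
  ring

lemma bsc1_sdpi {ξ : ℝ} (hξ0 : 0 ≤ ξ) (hξ : ξ < 1/2) :
    SDPIle.{u} (bsc1 ξ) ((1 - 2*ξ)^2) := by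
  intro α _ w hw0 hw1
  classical
  have hch : IsChannel (bsc1 ξ) := bsc1_isChannel hξ0 (by linarith)
  -- pointwise values of the pushed distribution
  have hpvt : ∀ x, push w (bsc1 ξ) (x, true) = w (x, true) * (1 - ξ) + w (x, false) * ξ := by
    intro x
    show ∑ y : Bool, w (x, y) * bsc1 ξ y true = _
    rw [Fintype.sum_bool]
    simp [bsc1]
  have hpvf : ∀ x, push w (bsc1 ξ) (x, false) = w (x, true) * ξ + w (x, false) * (1 - ξ) := by
    intro x
    show ∑ y : Bool, w (x, y) * bsc1 ξ y false = _
    rw [Fintype.sum_bool]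
    simp [bsc1]
  -- total sums
  have hsum1 : ∑ x, (w (x, true) + w (x, false)) = 1 := by
    have hv1 := hw1
    rw [Fintype.sum_prod_type] at hv1
    rw [← hv1]
    exact Finset.sum_congr rfl fun x _ => (Fintype.sum_bool (fun c => w (x, c))).symm
  have hsplit : ∑ x, w (x, true) + ∑ x, w (x, false) = 1 := by
    rw [← Finset.sum_add_distrib]; exact hsum1
  -- the two mutual information formulas
  have hwmi := mutInfo_bool w hw0 hw1
  have hpmi := mutInfo_bool (push w (bsc1 ξ)) (push_nonneg hw0 hch.1) (push_sum hch.2 hw1)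
  -- marginal of pushed distribution
  have hmarg : ∑ x, push w (bsc1 ξ) (x, true) = ξ + (1 - 2*ξ) * ∑ x, w (x, true) := by
    rw [Finset.sum_congr rfl fun x _ => hpvt x, Finset.sum_add_distrib,
      ← Finset.sum_mul, ← Finset.sum_mul]
    have : ∑ x, w (x, false) = 1 - ∑ x, w (x, true) := by linarith
    rw [this]
    ring
  -- conditional terms of pushed distribution
  have hterm : ∀ x, (push w (bsc1 ξ) (x, true) + push w (bsc1 ξ) (x, false))
        * Real.binEntropy (push w (bsc1 ξ) (x, true)
            / (push w (bsc1 ξ) (x, true) + push w (bsc1 ξ) (x, false)))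
      = (w (x, true) + w (x, false))
        * Real.binEntropy (ξ + (1 - 2*ξ) * (w (x, true) / (w (x, true) + w (x, false)))) := by
    intro x
    have hsum : push w (bsc1 ξ) (x, true) + push w (bsc1 ξ) (x, false)
        = w (x, true) + w (x, false) := by
      rw [hpvt x, hpvf x]; ring
    rcases eq_or_ne (w (x, true) + w (x, false)) 0 with h | h
    · rw [hsum, h, zero_mul, zero_mul]
    · rw [hsum, hpvt x]
      congr 2
      field_simp
      ring
  -- Jensen
  have hs0 : ∀ x ∈ Finset.univ (α := α), (0:ℝ) ≤ w (x, true) + w (x, false) :=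
    fun x _ => add_nonneg (hw0 _) (hw0 _)
  have hmem : ∀ x ∈ Finset.univ (α := α),
      w (x, true) / (w (x, true) + w (x, false)) ∈ Set.Icc (0:ℝ) 1 := by
    intro x _
    constructor
    · exact div_nonneg (hw0 _) (add_nonneg (hw0 _) (hw0 _))
    · rcases eq_or_ne (w (x, true) + w (x, false)) 0 with h | h
      · rw [h, div_zero]; norm_num
      · refine div_le_one_of_le₀ ?_ (add_nonneg (hw0 _) (hw0 _))
        nlinarith [hw0 (x, false)]
  have hJ := (G_convexOn hξ0 hξ).map_sum_le hs0 hsum1 hmem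
  have hpt : ∑ x, (w (x, true) + w (x, false)) • (w (x, true) / (w (x, true) + w (x, false)))
      = ∑ x, w (x, true) := by
    refine Finset.sum_congr rfl fun x _ => ?_
    rcases eq_or_ne (w (x, true) + w (x, false)) 0 with h | h
    · rw [h]
      have h1 : w (x, true) = 0 := by nlinarith [hw0 (x, true), hw0 (x, false)]
      rw [h1]; simp
    · rw [smul_eq_mul]; field_simp
  rw [hpt] at hJ
  simp only [smul_eq_mul] at hJ
  -- split the Jensen RHS
  have hJr : ∑ x, (w (x, true) + w (x, false))
        * (Real.binEntropy (ξ + (1 - 2*ξ) * (w (x, true) / (w (x, true) + w (x, false))))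
          - (1 - 2*ξ)^2 * Real.binEntropy (w (x, true) / (w (x, true) + w (x, false))))
      = (∑ x, (w (x, true) + w (x, false))
          * Real.binEntropy (ξ + (1 - 2*ξ) * (w (x, true) / (w (x, true) + w (x, false)))))
        - (1 - 2*ξ)^2 * ∑ x, (w (x, true) + w (x, false))
          * Real.binEntropy (w (x, true) / (w (x, true) + w (x, false))) := by
    rw [Finset.mul_sum, ← Finset.sum_sub_distrib]
    refine Finset.sum_congr rfl fun x _ => ?_
    ring
  rw [hJr] at hJ
  -- assemble
  rw [hpmi, hwmi, hmarg, Finset.sum_congr rfl fun x _ => hterm x]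
  have hgoalr : (1 - 2*ξ)^2 * (Real.binEntropy (∑ x, w (x, true))
        - ∑ x, (w (x, true) + w (x, false))
          * Real.binEntropy (w (x, true) / (w (x, true) + w (x, false))))
      = (1 - 2*ξ)^2 * Real.binEntropy (∑ x, w (x, true))
        - (1 - 2*ξ)^2 * ∑ x, (w (x, true) + w (x, false))
          * Real.binEntropy (w (x, true) / (w (x, true) + w (x, false))) := by ring
  rw [hgoalr]
  linarith [hJ]

end SDPIAux
end Chunk7

section Chunk8pre
open Finset
namespace SDPIAux

universe u

lemma sdpi_relabel {β γ β₀ γ₀ : Type*} [Fintype β] [Fintype γ] [Fintype β₀] [Fintype γ₀]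
    (e : β₀ ≃ β) (f : γ₀ ≃ γ) {K : β → γ → ℝ} {c : ℝ} (h : SDPIle.{u} K c) :
    SDPIle.{u} (fun y z => K (e y) (f z)) c := by
  intro α _ w hw0 hw1
  have hw'0 : ∀ q : α × β, 0 ≤ w (q.1, e.symm q.2) := fun q => hw0 _
  have hw'1 : ∑ q : α × β, w (q.1, e.symm q.2) = 1 := by
    rw [← hw1]
    exact Equiv.sum_comp (Equiv.prodCongr (Equiv.refl α) e.symm) w
  have hpush : push w (fun y z => K (e y) (f z))
      = fun q : α × γ₀ => push (fun xy : α × β => w (xy.1, e.symm xy.2)) K (q.1, f q.2) := by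
    funext q
    show ∑ y0 : β₀, w (q.1, y0) * K (e y0) (f q.2)
        = ∑ y : β, w (q.1, e.symm y) * K y (f q.2)
    rw [← Equiv.sum_comp e (fun y => w (q.1, e.symm y) * K y (f q.2))]
    simp
  have h1 := h (fun xy : α × β => w (xy.1, e.symm xy.2)) hw'0 hw'1
  have h2 : mutInfo (fun q : α × γ₀ =>
        push (fun xy : α × β => w (xy.1, e.symm xy.2)) K (q.1, f q.2))
      = mutInfo (push (fun xy : α × β => w (xy.1, e.symm xy.2)) K) :=
    mutInfo_comp_snd_equiv f (push (fun xy : α × β => w (xy.1, e.symm xy.2)) K)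
  have h3 : mutInfo (fun q : α × β => w (q.1, e.symm q.2)) = mutInfo w :=
    mutInfo_comp_snd_equiv e.symm w
  rw [hpush, h2]
  rw [h3] at h1
  exact h1

end SDPIAux
end Chunk8pre

section Chunk8
open Finset
namespace SDPIAux

universe u

def splitEquiv (n : ℕ) : (Fin (n+1) → Bool) ≃ Bool × (Fin n → Bool) where
  toFun y := (y 0, Fin.tail y)
  invFun p := Fin.cons p.1 p.2
  left_inv y := Fin.cons_self_tail y
  right_inv p := by
    simp [Fin.tail_cons]

lemma hamming_succ {n : ℕ} (y z : Fin (n+1) → Bool) :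
    hammingDist y z = (if y 0 = z 0 then 0 else 1) + hammingDist (Fin.tail y) (Fin.tail z) := by
  have h1 : ∀ (m : ℕ) (a b : Fin m → Bool),
      hammingDist a b = ∑ i, if a i ≠ b i then 1 else 0 := by
    intro m a b
    rw [hammingDist, Finset.card_filter]
  rw [h1, h1, Fin.sum_univ_succ]
  congr 1
  by_cases h : y 0 = z 0 <;> simp [h]

lemma bscChannel_nonneg {ξ : ℝ} (hξ0 : 0 ≤ ξ) (hξ1 : ξ ≤ 1) {n : ℕ} (y z : Fin n → Bool) :
    0 ≤ bscChannel ξ y z :=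
  mul_nonneg (pow_nonneg hξ0 _) (pow_nonneg (by linarith) _)

lemma bscChannel_succ {ξ : ℝ} {n : ℕ} (y z : Fin (n+1) → Bool) :
    bscChannel ξ y z = bsc1 ξ (y 0) (z 0) * bscChannel ξ (Fin.tail y) (Fin.tail z) := by
  unfold bscChannel bsc1
  have hd : hammingDist (Fin.tail y) (Fin.tail z) ≤ n := by
    have := hammingDist_le_card_fintype (x := Fin.tail y) (y := Fin.tail z)
    simpa using this
  rw [hamming_succ y z]
  by_cases h : y 0 = z 0
  · rw [if_pos h, if_pos h, zero_add,
      show n + 1 - hammingDist (Fin.tail y) (Fin.tail z)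
        = (n - hammingDist (Fin.tail y) (Fin.tail z)) + 1 from by omega,
      pow_succ]
    ring
  · rw [if_neg h, if_neg h,
      show (1 + hammingDist (Fin.tail y) (Fin.tail z))
        = hammingDist (Fin.tail y) (Fin.tail z) + 1 from by omega,
      show n + 1 - (hammingDist (Fin.tail y) (Fin.tail z) + 1)
        = n - hammingDist (Fin.tail y) (Fin.tail z) from by omega,
      pow_succ]
    ring

lemma bscChannel_zero {ξ : ℝ} (y z : Fin 0 → Bool) : bscChannel ξ y z = 1 := by
  unfold bscChannel
  have h : hammingDist y z = 0 := by
    rw [Subsingleton.elim y z, hammingDist_self]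
  rw [h]
  norm_num

lemma mutInfo_of_const_snd {α U : Type*} [Fintype α] [Fintype U] [Unique U] (g : α → ℝ)
    (hg : ∑ x, g x = 1) :
    mutInfo (fun q : α × U => g q.1) = 0 := by
  simp only [mutInfo]
  have h1 : (fun x : α => ∑ _z : U, g x) = g := funext fun x => by
    rw [Fintype.sum_unique (fun _ : U => g x)]
  have h2 : ent (fun _z : U => ∑ x, g x) = 0 := by
    unfold ent
    rw [Fintype.sum_unique (fun _z : U => (∑ x, g x) * Real.log (∑ x, g x)), hg]
    simp
  have h3 : ent (fun q : α × U => g q.1) = ent g := by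
    unfold ent
    rw [Fintype.sum_prod_type (f := fun q : α × U => g q.1 * Real.log (g q.1))]
    refine congrArg Neg.neg (Finset.sum_congr rfl fun x _ => ?_)
    rw [Fintype.sum_unique (fun _ : U => g x * Real.log (g x))]
  rw [h1, h2, h3]
  ring

lemma bsc_main {ξ : ℝ} (hξ0 : 0 ≤ ξ) (hξ : ξ < 1/2) :
    ∀ n : ℕ, IsChannel (bscChannel ξ (n := n))
      ∧ SDPIle.{u} (bscChannel ξ (n := n)) (1 - (4*ξ - 4*ξ^2)^n) := by
  intro n
  induction n with
  | zero =>
    constructor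
    · constructor
      · intro y z; exact bscChannel_nonneg hξ0 (by linarith) y z
      · intro y
        rw [Finset.sum_congr rfl fun z _ => bscChannel_zero y z]
        simp
    · intro α _ w hw0 hw1
      have hpush : push w (bscChannel ξ (n := 0))
          = fun q : α × (Fin 0 → Bool) => (fun x => ∑ y, w (x, y)) q.1 := by
        funext q
        show ∑ y, w (q.1, y) * bscChannel ξ y q.2 = ∑ y, w (q.1, y)
        exact Finset.sum_congr rfl fun y _ => by rw [bscChannel_zero y q.2, mul_one]
      have hg : ∑ x, ∑ y, w (x, y) = 1 := by
        rw [← hw1, Fintype.sum_prod_type]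
      rw [hpush, mutInfo_of_const_snd _ hg]
      rw [pow_zero]
      simp
  | succ n ih =>
    have hch1 : IsChannel (bsc1 ξ) := bsc1_isChannel hξ0 (by linarith)
    have ht0 : (0:ℝ) ≤ 4*ξ - 4*ξ^2 := by nlinarith
    have ht1 : (4*ξ - 4*ξ^2 : ℝ) ≤ 1 := by nlinarith [sq_nonneg (1 - 2*ξ)]
    have hb0 : (0:ℝ) ≤ 1 - (4*ξ - 4*ξ^2)^n := by
      have := pow_le_one₀ ht0 ht1 (n := n)
      linarith
    have hb1 : (1:ℝ) - (4*ξ - 4*ξ^2)^n ≤ 1 := by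
      have := pow_nonneg ht0 n
      linarith
    have hT : SDPIle.{u} (tens (bsc1 ξ) (bscChannel ξ (n := n)))
        ((1 - 2*ξ)^2 + (1 - (4*ξ - 4*ξ^2)^n) - (1 - 2*ξ)^2 * (1 - (4*ξ - 4*ξ^2)^n)) :=
      tensor_step.{u} hch1 ih.1 (sq_nonneg (1 - 2*ξ)) hb0 hb1
        (bsc1_sdpi.{u} hξ0 hξ) ih.2
    have heq : (fun y z => tens (bsc1 ξ) (bscChannel ξ (n := n))
          ((splitEquiv n) y) ((splitEquiv n) z)) = bscChannel ξ (n := n+1) := by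
      funext y z
      show bsc1 ξ (y 0) (z 0) * bscChannel ξ (Fin.tail y) (Fin.tail z) = bscChannel ξ y z
      exact (bscChannel_succ y z).symm
    have hrel : SDPIle.{u} (fun y z => tens (bsc1 ξ) (bscChannel ξ (n := n))
          ((splitEquiv n) y) ((splitEquiv n) z))
        ((1 - 2*ξ)^2 + (1 - (4*ξ - 4*ξ^2)^n) - (1 - 2*ξ)^2 * (1 - (4*ξ - 4*ξ^2)^n)) :=
      sdpi_relabel.{u} (splitEquiv n) (splitEquiv n) hT
    rw [heq] at hrel
    have hconst : (1 - 2*ξ)^2 + (1 - (4*ξ - 4*ξ^2)^n)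
        - (1 - 2*ξ)^2 * (1 - (4*ξ - 4*ξ^2)^n) = 1 - (4*ξ - 4*ξ^2)^(n+1) := by ring
    rw [hconst] at hrel
    constructor
    · constructor
      · intro y z; exact bscChannel_nonneg hξ0 (by linarith) y z
      · intro y
        rw [← Equiv.sum_comp (splitEquiv n).symm (fun z => bscChannel ξ y z)]
        have hpz : ∀ p : Bool × (Fin n → Bool),
            bscChannel ξ y ((splitEquiv n).symm p)
              = bsc1 ξ (y 0) p.1 * bscChannel ξ (Fin.tail y) p.2 := by
          intro p
          rw [bscChannel_succ]
          have e0 : ((splitEquiv n).symm p) 0 = p.1 := by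
            show (Fin.cons p.1 p.2 : Fin (n+1) → Bool) 0 = p.1
            exact Fin.cons_zero _ _
          have e1 : Fin.tail ((splitEquiv n).symm p) = p.2 := by
            show Fin.tail (Fin.cons p.1 p.2 : Fin (n+1) → Bool) = p.2
            exact Fin.tail_cons _ _
          rw [e0, e1]
        rw [Finset.sum_congr rfl fun p _ => hpz p,
          Fintype.sum_prod_type (f := fun p : Bool × (Fin n → Bool) =>
            bsc1 ξ (y 0) p.1 * bscChannel ξ (Fin.tail y) p.2)]
        have hin : ∀ b : Bool, ∑ g : Fin n → Bool,
            bsc1 ξ (y 0) b * bscChannel ξ (Fin.tail y) g = bsc1 ξ (y 0) b := by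
          intro b
          rw [← Finset.mul_sum, ih.1.2 (Fin.tail y), mul_one]
        rw [Finset.sum_congr rfl fun b _ => hin b]
        exact hch1.2 (y 0)
    · exact hrel

end SDPIAux
end Chunk8

theorem stmt5 {α : Type*} [Fintype α] (n : ℕ) (ξ : ℝ) (hξ0 : 0 ≤ ξ) (hξ : ξ < 1 / 2)
    (w : α × (Fin n → Bool) → ℝ) (hw0 : ∀ q, 0 ≤ w q) (hw1 : ∑ q, w q = 1) :
    mutInfo (fun xz : α × (Fin n → Bool) =>
        ∑ y : Fin n → Bool, w (xz.1, y) * bscChannel ξ y xz.2)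
      ≤ (1 - (4 * ξ - 4 * ξ ^ 2) ^ n) * mutInfo w := by
  exact (SDPIAux.bsc_main hξ0 hξ n).2 w hw0 hw1
end

section
/- Let X, Y, Z be finitely-supported random variables forming a Markov chain X → Y → Z, where Y takes values in an n-element set, Z in an m-element set, and the channel Y → Z has transition matrix A = (a_{i,j}) (rows are probability vectors). Then I(X;Z) ≤ (1 - min_{k≠ℓ} (Σ_{j=1}^m √(a_{k,j} a_{ℓ,j}))^2) · I(X;Y). -/
open Finset

namespace SDPI

/-- Kullback–Leibler divergence written with log-differences. -/
noncomputable def KLs {ι : Type*} [Fintype ι] (p q : ι → ℝ) : ℝ :=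
  ∑ i, p i * (Real.log (p i) - Real.log (q i))

/-- Lagrange / variance identity. -/
lemma lagrange {ι : Type*} [Fintype ι] (w u : ι → ℝ) :
    ∑ k, ∑ l, w k * w l * (u k - u l) ^ 2
      = 2 * ((∑ i, w i) * (∑ i, w i * u i ^ 2) - (∑ i, w i * u i) ^ 2) := by
  have h : ∀ k l : ι, w k * w l * (u k - u l) ^ 2
      = (w k * u k ^ 2) * w l + w k * (w l * u l ^ 2)
        - (2 * (w k * u k)) * (w l * u l) := by intro k l; ring
  simp_rw [h]
  simp only [Finset.sum_add_distrib, Finset.sum_sub_distrib, ← Finset.mul_sum,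
    ← Finset.sum_mul]
  ring

/-- χ²-type contraction step with Bhattacharyya constant. -/
lemma chi2_step {n m : ℕ} (A : Fin n → Fin m → ℝ) (hA0 : ∀ i j, 0 ≤ A i j)
    (hA1 : ∀ i, ∑ j, A i j = 1) (c : ℝ)
    (hcA : ∀ k l : Fin n, k ≠ l → c ≤ (∑ j, Real.sqrt (A k j * A l j)) ^ 2)
    (Q : Fin n → ℝ) (hQ0 : ∀ i, 0 ≤ Q i) (hQ1 : ∑ i, Q i = 1)
    (d : Fin n → ℝ) (hd0 : ∀ i, Q i = 0 → d i = 0) (hds : ∑ i, d i = 0) :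
    ∑ j, (∑ i, d i * A i j) ^ 2 / (∑ i, Q i * A i j)
      ≤ (1 - c) * ∑ i, d i ^ 2 / Q i := by
  classical
  set u : Fin n → ℝ := fun i => d i / Q i with hu
  have hdu : ∀ i, d i = u i * Q i := by
    intro i
    rcases eq_or_lt_of_le (hQ0 i) with h | h
    · simp [hd0 i h.symm, hu]
    · simp only [hu]; rw [div_mul_cancel₀ _ h.ne']
  set q : Fin m → ℝ := fun j => ∑ i, Q i * A i j with hq
  have hq0 : ∀ j, 0 ≤ q j := fun j =>
    Finset.sum_nonneg fun i _ => mul_nonneg (hQ0 i) (hA0 i j)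
  have hqz : ∀ j, q j = 0 → ∀ i, Q i * A i j = 0 := by
    intro j hj i
    have := (Finset.sum_eq_zero_iff_of_nonneg
      (fun i _ => mul_nonneg (hQ0 i) (hA0 i j))).mp hj
    exact this i (Finset.mem_univ i)
  set B : ℝ := ∑ i, u i ^ 2 * Q i with hB
  have hRHS : ∑ i, d i ^ 2 / Q i = B := by
    apply Finset.sum_congr rfl
    intro i _
    rcases eq_or_lt_of_le (hQ0 i) with h | h
    · simp [hd0 i h.symm, ← h]
    · rw [hdu i]; field_simp
  set T : Fin m → ℝ := fun j => ∑ i, (Q i * A i j) * u i ^ 2 with hT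
  set N : Fin m → ℝ := fun j => ∑ i, (Q i * A i j) * u i with hN
  have hNd : ∀ j, (∑ i, d i * A i j) = N j := by
    intro j; apply Finset.sum_congr rfl; intro i _; rw [hdu i]; ring
  have hBT : B = ∑ j, T j := by
    rw [hB, hT, Finset.sum_comm]
    apply Finset.sum_congr rfl
    intro i _
    rw [← Finset.sum_mul, ← Finset.mul_sum, hA1 i, mul_one]
    ring
  -- V j: the Lagrange quadratic at j
  set V : Fin m → ℝ := fun j =>
    (∑ k, ∑ l, (Q k * A k j) * (Q l * A l j) * (u k - u l) ^ 2) with hV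
  have hVj : ∀ j, T j - N j ^ 2 / q j = (1 / (2 * q j)) * V j := by
    intro j
    have hlag := lagrange (fun i => Q i * A i j) u
    rcases eq_or_lt_of_le (hq0 j) with h | h
    · have hz := hqz j h.symm
      have hT0 : T j = 0 := Finset.sum_eq_zero fun i _ => by rw [hz i]; ring
      have hN0 : N j = 0 := Finset.sum_eq_zero fun i _ => by rw [hz i]; ring
      have hV0 : V j = 0 := Finset.sum_eq_zero fun k _ =>
        Finset.sum_eq_zero fun l _ => by rw [hz k]; ring
      simp [hT0, hN0, hV0]
    · have hqj : q j ≠ 0 := ne_of_gt h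
      have : V j = 2 * (q j * T j - N j ^ 2) := by
        rw [hV]; exact hlag
      rw [this]
      field_simp
  have key : ∑ j, N j ^ 2 / q j = B - ∑ j, ((1 / (2 * q j)) * V j) := by
    have : ∑ j, ((1 / (2 * q j)) * V j) = ∑ j, (T j - N j ^ 2 / q j) := by
      apply Finset.sum_congr rfl; intro j _; rw [hVj j]
    rw [this, Finset.sum_sub_distrib, ← hBT]; ring
  -- lower bound for the dissipation term
  have hdiss : c * B ≤ ∑ j, ((1 / (2 * q j)) * V j) := by
    -- rewrite as pairwise sum
    have hswap : ∑ j, ((1 / (2 * q j)) * V j)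
        = (1/2) * ∑ k, ∑ l, (Q k * Q l * (u k - u l) ^ 2)
            * (∑ j, A k j * A l j / q j) := by
      rw [Finset.mul_sum]
      rw [hV]
      simp_rw [Finset.mul_sum, Finset.sum_comm (γ := Fin m)]
      apply Finset.sum_congr rfl; intro k _
      apply Finset.sum_congr rfl; intro l _
      apply Finset.sum_congr rfl; intro j _
      rcases eq_or_lt_of_le (hq0 j) with h | h
      · have hz := hqz j h.symm
        rw [hz k]; simp [← h]
      · field_simp
    have hBpair : B = (1/2) * ∑ k, ∑ l, Q k * Q l * (u k - u l) ^ 2 := by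
      have h1 := lagrange Q u
      have h2 : ∑ i, Q i * u i = 0 := by
        rw [← hds]; apply Finset.sum_congr rfl; intro i _; rw [hdu i]; ring
      have h3 : ∑ i, Q i * u i ^ 2 = B := by
        rw [hB]; apply Finset.sum_congr rfl; intro i _; ring
      rw [h1, hQ1, h2, h3]; ring
    have hsumq : ∑ j, q j = 1 := by
      rw [hq]
      rw [Finset.sum_comm]
      rw [← hQ1]
      apply Finset.sum_congr rfl
      intro i _
      rw [← Finset.mul_sum, hA1 i, mul_one]
    have hpair : ∀ k l : Fin n,
        c * (Q k * Q l * (u k - u l) ^ 2)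
          ≤ (Q k * Q l * (u k - u l) ^ 2) * (∑ j, A k j * A l j / q j) := by
      intro k l
      rcases eq_or_ne k l with rfl | hkl
      · simp
      rcases eq_or_lt_of_le (hQ0 k) with hk | hk
      · simp [← hk]
      rcases eq_or_lt_of_le (hQ0 l) with hl | hl
      · simp [← hl]
      have hg : c ≤ ∑ j, A k j * A l j / q j := by
        have hcs := Finset.sum_sq_le_sum_mul_sum_of_sq_eq_mul Finset.univ
          (r := fun j => Real.sqrt (A k j * A l j))
          (f := fun j => A k j * A l j / q j) (g := fun j => q j)
          (fun j _ => div_nonneg (mul_nonneg (hA0 k j) (hA0 l j)) (hq0 j))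
          (fun j _ => hq0 j) ?_
        · calc c ≤ (∑ j, Real.sqrt (A k j * A l j)) ^ 2 := hcA k l hkl
            _ ≤ (∑ j, A k j * A l j / q j) * (∑ j, q j) := hcs
            _ = ∑ j, A k j * A l j / q j := by rw [hsumq, mul_one]
        · intro j _
          rcases eq_or_lt_of_le (hq0 j) with h | h
          · have hz := hqz j h.symm
            have hAkj : A k j = 0 := by
              have := hz k
              rcases mul_eq_zero.mp this with h' | h'
              · exact absurd h' (ne_of_gt hk)
              · exact h'
            simp [hAkj]
          · rw [Real.sq_sqrt (mul_nonneg (hA0 k j) (hA0 l j))]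
            field_simp
      calc c * (Q k * Q l * (u k - u l) ^ 2)
          ≤ (∑ j, A k j * A l j / q j) * (Q k * Q l * (u k - u l) ^ 2) := by
            apply mul_le_mul_of_nonneg_right hg
            positivity
        _ = (Q k * Q l * (u k - u l) ^ 2) * (∑ j, A k j * A l j / q j) := by ring
    rw [hswap, hBpair]
    calc c * (1 / 2 * ∑ k, ∑ l, Q k * Q l * (u k - u l) ^ 2)
        = (1/2) * ∑ k, ∑ l, c * (Q k * Q l * (u k - u l) ^ 2) := by
          simp_rw [← Finset.mul_sum]; ring
      _ ≤ (1/2) * ∑ k, ∑ l, (Q k * Q l * (u k - u l) ^ 2)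
            * (∑ j, A k j * A l j / q j) := by
          apply mul_le_mul_of_nonneg_left _ (by norm_num)
          apply Finset.sum_le_sum; intro k _
          apply Finset.sum_le_sum; intro l _
          exact hpair k l
  -- assemble
  have hLHS : ∑ j, (∑ i, d i * A i j) ^ 2 / (∑ i, Q i * A i j)
      = ∑ j, N j ^ 2 / q j := by
    apply Finset.sum_congr rfl; intro j _; rw [hNd j, hq]
  rw [hLHS, hRHS, key]
  have hB0 : 0 ≤ B := Finset.sum_nonneg fun i _ =>
    mul_nonneg (sq_nonneg _) (hQ0 i)
  nlinarith [hdiss]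

namespace KLcal

open Real Set

variable {ι : Type*} [Fintype ι]

noncomputable def Ff (q d : ι → ℝ) (t : ℝ) : ℝ :=
  ∑ i, (q i + t * d i) * (Real.log (q i + t * d i) - Real.log (q i))

noncomputable def Ff1 (q d : ι → ℝ) (t : ℝ) : ℝ :=
  ∑ i, d i * (Real.log (q i + t * d i) - Real.log (q i))

variable {q d : ι → ℝ}

lemma ypos (hq : ∀ i, 0 ≤ q i) (hpd : ∀ i, 0 ≤ q i + d i) {t : ℝ}
    (ht0 : 0 ≤ t) (ht1 : t < 1) {i : ι} (hqi : 0 < q i) : 0 < q i + t * d i := by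
  nlinarith [hpd i]

lemma Ff_cont (hq : ∀ i, 0 ≤ q i) (hqd : ∀ i, q i = 0 → d i = 0) :
    Continuous (Ff q d) := by
  apply continuous_finset_sum
  intro i _
  rcases eq_or_lt_of_le (hq i) with h | h
  · have hd : d i = 0 := hqd i h.symm
    have : (fun t : ℝ => (q i + t * d i) * (Real.log (q i + t * d i) - Real.log (q i)))
        = fun _ : ℝ => 0 := by funext s; simp [← h, hd]
    rw [this]
    exact continuous_const
  · have hrw : (fun t : ℝ => (q i + t * d i) * (Real.log (q i + t * d i) - Real.log (q i)))
        = fun t : ℝ => (q i + t * d i) * Real.log (q i + t * d i)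
            - (q i + t * d i) * Real.log (q i) := by
      funext t; ring
    rw [hrw]
    have hy : Continuous fun t : ℝ => q i + t * d i := by continuity
    exact (Real.continuous_mul_log.comp hy).sub (hy.mul continuous_const)

lemma Ff1_contOn (hq : ∀ i, 0 ≤ q i) (hqd : ∀ i, q i = 0 → d i = 0)
    (hpd : ∀ i, 0 ≤ q i + d i) :
    ContinuousOn (Ff1 q d) (Set.Ico (0:ℝ) 1) := by
  apply continuousOn_finset_sum
  intro i _
  rcases eq_or_lt_of_le (hq i) with h | h
  · have hd : d i = 0 := hqd i h.symm
    have : (fun t : ℝ => d i * (Real.log (q i + t * d i) - Real.log (q i)))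
        = fun _ : ℝ => 0 := by funext s; simp [hd]
    rw [this]
    exact continuousOn_const
  · have hy : ContinuousOn (fun t : ℝ => q i + t * d i) (Set.Ico (0:ℝ) 1) :=
      (by continuity : Continuous fun t : ℝ => q i + t * d i).continuousOn
    exact (continuousOn_const.mul ((hy.log
      (fun t ht => ne_of_gt (ypos hq hpd ht.1 ht.2 h))).sub continuousOn_const))

lemma Ff_deriv (hq : ∀ i, 0 ≤ q i) (hqd : ∀ i, q i = 0 → d i = 0)
    (hpd : ∀ i, 0 ≤ q i + d i) (hds : ∑ i, d i = 0) {t : ℝ}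
    (ht : t ∈ Set.Ioo (0:ℝ) 1) : HasDerivAt (Ff q d) (Ff1 q d t) t := by
  have h0 : HasDerivAt (Ff q d)
      (∑ i, (d i * (Real.log (q i + t * d i) - Real.log (q i)) + d i)) t := by
    apply HasDerivAt.fun_sum
    intro i _
    rcases eq_or_lt_of_le (hq i) with h | h
    · have hd : d i = 0 := hqd i h.symm
      have : (fun t : ℝ => (q i + t * d i) * (Real.log (q i + t * d i) - Real.log (q i)))
          = fun _ : ℝ => 0 := by funext s; simp [← h, hd]
      rw [this]
      simpa [← h, hd] using hasDerivAt_const t (0:ℝ)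
    · have hy : HasDerivAt (fun s : ℝ => q i + s * d i) (d i) t := by
        simpa using ((hasDerivAt_id t).mul_const (d i)).const_add (q i)
      have hyne : q i + t * d i ≠ 0 := ne_of_gt (ypos hq hpd ht.1.le ht.2 h)
      have hlog : HasDerivAt (fun s : ℝ => Real.log (q i + s * d i) - Real.log (q i))
          (d i / (q i + t * d i)) t := (hy.log hyne).sub_const _
      have := hy.mul hlog
      refine this.congr_deriv ?_
      field_simp
      rw [div_self (by rwa [mul_comm] : q i + d i * t ≠ 0)]
  have : (∑ i, (d i * (Real.log (q i + t * d i) - Real.log (q i)) + d i))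
      = Ff1 q d t := by
    rw [Finset.sum_add_distrib, hds, add_zero, Ff1]
  rwa [this] at h0

lemma Ff1_deriv (hq : ∀ i, 0 ≤ q i) (hqd : ∀ i, q i = 0 → d i = 0)
    (hpd : ∀ i, 0 ≤ q i + d i) {t : ℝ}
    (ht : t ∈ Set.Ioo (0:ℝ) 1) :
    HasDerivAt (Ff1 q d) (∑ i, d i ^ 2 / (q i + t * d i)) t := by
  apply HasDerivAt.fun_sum
  intro i _
  rcases eq_or_lt_of_le (hq i) with h | h
  · have hd : d i = 0 := hqd i h.symm
    have : (fun s : ℝ => d i * (Real.log (q i + s * d i) - Real.log (q i)))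
        = fun _ : ℝ => 0 := by funext s; simp [← h, hd]
    rw [this]
    simpa [hd] using hasDerivAt_const t (0:ℝ)
  · have hy : HasDerivAt (fun s : ℝ => q i + s * d i) (d i) t := by
      simpa using ((hasDerivAt_id t).mul_const (d i)).const_add (q i)
    have hyne : q i + t * d i ≠ 0 := ne_of_gt (ypos hq hpd ht.1.le ht.2 h)
    have hlog : HasDerivAt (fun s : ℝ => Real.log (q i + s * d i) - Real.log (q i))
        (d i / (q i + t * d i)) t := (hy.log hyne).sub_const _
    have := hlog.const_mul (d i)
    refine this.congr_deriv ?_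
    rw [pow_two]
    ring
  
lemma Ff_zero : Ff q d 0 = 0 := by
  simp [Ff]

lemma Ff1_zero : Ff1 q d 0 = 0 := by
  simp [Ff1]

end KLcal

lemma kl_contract {n m : ℕ} (A : Fin n → Fin m → ℝ) (hA0 : ∀ i j, 0 ≤ A i j)
    (hA1 : ∀ i, ∑ j, A i j = 1) (c : ℝ)
    (hcA : ∀ k l : Fin n, k ≠ l → c ≤ (∑ j, Real.sqrt (A k j * A l j)) ^ 2)
    (P Q : Fin n → ℝ) (hP0 : ∀ i, 0 ≤ P i) (hQ0 : ∀ i, 0 ≤ Q i)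
    (hP1 : ∑ i, P i = 1) (hQ1 : ∑ i, Q i = 1) (hPQ : ∀ i, Q i = 0 → P i = 0) :
    KLs (fun j => ∑ i, P i * A i j) (fun j => ∑ i, Q i * A i j)
      ≤ (1 - c) * KLs P Q := by
  classical
  set d : Fin n → ℝ := fun i => P i - Q i with hd
  have hds : ∑ i, d i = 0 := by
    rw [hd, Finset.sum_sub_distrib, hP1, hQ1]; ring
  have hqd : ∀ i, Q i = 0 → d i = 0 := by
    intro i h; rw [hd]; simp [h, hPQ i h]
  have hQd : ∀ i, Q i + d i = P i := by intro i; rw [hd]; ring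
  have hpd : ∀ i, 0 ≤ Q i + d i := by intro i; rw [hQd i]; exact hP0 i
  set dW : Fin m → ℝ := fun j => ∑ i, d i * A i j with hdW
  set QW : Fin m → ℝ := fun j => ∑ i, Q i * A i j with hQW
  have hdWj : ∀ j, ∑ i, d i * A i j = dW j := fun j => rfl
  have hQWj : ∀ j, ∑ i, Q i * A i j = QW j := fun j => rfl
  have hQW0 : ∀ j, 0 ≤ QW j := fun j =>
    Finset.sum_nonneg fun i _ => mul_nonneg (hQ0 i) (hA0 i j)
  have hdWs : ∑ j, dW j = 0 := by
    rw [hdW, Finset.sum_comm]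
    rw [← hds]
    apply Finset.sum_congr rfl
    intro i _
    rw [← Finset.mul_sum, hA1 i, mul_one]
  have hqdW : ∀ j, QW j = 0 → dW j = 0 := by
    intro j h
    have hz : ∀ i, Q i * A i j = 0 := by
      intro i
      exact (Finset.sum_eq_zero_iff_of_nonneg
        (fun i _ => mul_nonneg (hQ0 i) (hA0 i j))).mp h i (Finset.mem_univ i)
    rw [hdW]
    apply Finset.sum_eq_zero
    intro i _
    rcases eq_or_lt_of_le (hQ0 i) with hqi | hqi
    · rw [hqd i hqi.symm, zero_mul]
    · have hAij : A i j = 0 := by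
        rcases mul_eq_zero.mp (hz i) with h' | h'
        · exact absurd h' (ne_of_gt hqi)
        · exact h'
      rw [hAij, mul_zero]
  have hQdW : ∀ j, QW j + dW j = ∑ i, P i * A i j := by
    intro j
    rw [hQW, hdW, ← Finset.sum_add_distrib]
    apply Finset.sum_congr rfl
    intro i _
    rw [← add_mul, hQd i]
  have hpdW : ∀ j, 0 ≤ QW j + dW j := by
    intro j
    rw [hQdW j]
    exact Finset.sum_nonneg fun i _ => mul_nonneg (hP0 i) (hA0 i j)
  set ψ : ℝ → ℝ := fun t => (1 - c) * KLcal.Ff Q d t - KLcal.Ff QW dW t with hψ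
  set ψ1 : ℝ → ℝ := fun t => (1 - c) * KLcal.Ff1 Q d t - KLcal.Ff1 QW dW t with hψ1
  have hder : ∀ t ∈ Set.Ioo (0:ℝ) 1, HasDerivAt ψ (ψ1 t) t := by
    intro t ht
    exact ((KLcal.Ff_deriv hQ0 hqd hpd hds ht).const_mul _).sub
      (KLcal.Ff_deriv hQW0 hqdW hpdW hdWs ht)
  have hder1 : ∀ t ∈ Set.Ioo (0:ℝ) 1, HasDerivAt ψ1
      ((1 - c) * (∑ i, d i ^ 2 / (Q i + t * d i))
        - ∑ j, dW j ^ 2 / (QW j + t * dW j)) t := by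
    intro t ht
    exact ((KLcal.Ff1_deriv hQ0 hqd hpd ht).const_mul _).sub
      (KLcal.Ff1_deriv hQW0 hqdW hpdW ht)
  have hsecond : ∀ t ∈ Set.Ioo (0:ℝ) 1,
      ∑ j, dW j ^ 2 / (QW j + t * dW j)
        ≤ (1 - c) * ∑ i, d i ^ 2 / (Q i + t * d i) := by
    intro t ht
    have hQt0 : ∀ i, 0 ≤ Q i + t * d i := by
      intro i
      rcases eq_or_lt_of_le (hQ0 i) with h | h
      · rw [← h, hqd i h.symm]; norm_num
      · exact (KLcal.ypos hQ0 hpd ht.1.le ht.2 h).le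
    have hQt1 : ∑ i, (Q i + t * d i) = 1 := by
      rw [Finset.sum_add_distrib]
      have : ∑ i, t * d i = t * ∑ i, d i := by rw [Finset.mul_sum]
      rw [this, hds, mul_zero, add_zero, hQ1]
    have hQtz : ∀ i, Q i + t * d i = 0 → d i = 0 := by
      intro i h
      rcases eq_or_lt_of_le (hQ0 i) with h' | h'
      · exact hqd i h'.symm
      · exact absurd h (ne_of_gt (KLcal.ypos hQ0 hpd ht.1.le ht.2 h'))
    have h := chi2_step A hA0 hA1 c hcA (fun i => Q i + t * d i) hQt0 hQt1 d hQtz hds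
    have hQtA : ∀ j, ∑ i, (Q i + t * d i) * A i j = QW j + t * dW j := by
      intro j
      rw [hQW, hdW]
      simp_rw [add_mul]
      rw [Finset.sum_add_distrib]
      congr 1
      rw [Finset.mul_sum]
      apply Finset.sum_congr rfl
      intro i _
      ring
    calc ∑ j, dW j ^ 2 / (QW j + t * dW j)
        = ∑ j, (∑ i, d i * A i j) ^ 2 / (∑ i, (Q i + t * d i) * A i j) := by
          apply Finset.sum_congr rfl
          intro j _
          rw [hQtA j, hdWj j]
      _ ≤ (1 - c) * ∑ i, d i ^ 2 / (Q i + t * d i) := h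
  have hψ1cont : ContinuousOn ψ1 (Set.Ico (0:ℝ) 1) := by
    rw [hψ1]
    exact (continuousOn_const.mul (KLcal.Ff1_contOn hQ0 hqd hpd)).sub
      (KLcal.Ff1_contOn hQW0 hqdW hpdW)
  have hψ1mono : MonotoneOn ψ1 (Set.Ico (0:ℝ) 1) := by
    apply monotoneOn_of_deriv_nonneg (convex_Ico 0 1) hψ1cont
    · rw [interior_Ico]
      intro t ht
      exact (hder1 t ht).differentiableAt.differentiableWithinAt
    · rw [interior_Ico]
      intro t ht
      rw [(hder1 t ht).deriv]
      have := hsecond t ht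
      linarith
  have hψ10 : ψ1 0 = 0 := by
    rw [hψ1]; simp [KLcal.Ff1_zero]
  have hψ1nonneg : ∀ t ∈ Set.Ioo (0:ℝ) 1, 0 ≤ ψ1 t := by
    intro t ht
    have := hψ1mono (Set.mem_Ico.mpr ⟨le_refl 0, zero_lt_one⟩)
      (Set.mem_Ico.mpr ⟨ht.1.le, ht.2⟩) ht.1.le
    rw [hψ10] at this
    exact this
  have hψcont : ContinuousOn ψ (Set.Icc (0:ℝ) 1) := by
    rw [hψ]
    exact ((continuous_const.mul (KLcal.Ff_cont hQ0 hqd)).sub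
      (KLcal.Ff_cont hQW0 hqdW)).continuousOn
  have hψmono : MonotoneOn ψ (Set.Icc (0:ℝ) 1) := by
    apply monotoneOn_of_deriv_nonneg (convex_Icc 0 1) hψcont
    · rw [interior_Icc]
      intro t ht
      exact (hder t ht).differentiableAt.differentiableWithinAt
    · rw [interior_Icc]
      intro t ht
      rw [(hder t ht).deriv]
      exact hψ1nonneg t ht
  have h01 : ψ 0 ≤ ψ 1 :=
    hψmono (Set.mem_Icc.mpr ⟨le_refl 0, zero_le_one⟩)
      (Set.mem_Icc.mpr ⟨zero_le_one, le_refl 1⟩) zero_le_one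
  have hψ0 : ψ 0 = 0 := by
    rw [hψ]; simp [KLcal.Ff_zero]
  have hF1 : KLcal.Ff Q d 1 = KLs P Q := by
    rw [KLcal.Ff, KLs]
    apply Finset.sum_congr rfl
    intro i _
    rw [one_mul, hQd i]
  have hG1 : KLcal.Ff QW dW 1
      = KLs (fun j => ∑ i, P i * A i j) (fun j => ∑ i, Q i * A i j) := by
    rw [KLcal.Ff, KLs]
    apply Finset.sum_congr rfl
    intro j _
    rw [one_mul, hQdW j, hQWj j]
  rw [hψ0, hψ] at h01
  simp only at h01
  rw [hF1, hG1] at h01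
  linarith

lemma mutInfo_eq {α β : Type*} [Fintype α] [Fintype β] (v : α × β → ℝ)
    (hv0 : ∀ q, 0 ≤ v q) :
    mutInfo v = ∑ x, (∑ y, v (x, y)) *
      KLs (fun y => v (x, y) / ∑ y', v (x, y')) (fun y => ∑ x', v (x', y)) := by
  classical
  have expand : mutInfo v = ∑ x, ∑ y, v (x, y) *
      (Real.log (v (x, y)) - Real.log (∑ y', v (x, y'))
        - Real.log (∑ x', v (x', y))) := by
    rw [mutInfo, ent, ent, ent, Fintype.sum_prod_type]
    have h2 : ∑ x, ∑ y, v (x, y) * Real.log (∑ y', v (x, y'))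
        = ∑ x, (∑ y, v (x, y)) * Real.log (∑ y', v (x, y')) := by
      apply Finset.sum_congr rfl
      intro x _
      rw [Finset.sum_mul]
    have h3 : ∑ x, ∑ y, v (x, y) * Real.log (∑ x', v (x', y))
        = ∑ y, (∑ x, v (x, y)) * Real.log (∑ x', v (x', y)) := by
      rw [Finset.sum_comm]
      apply Finset.sum_congr rfl
      intro y _
      rw [Finset.sum_mul]
    simp_rw [mul_sub, Finset.sum_sub_distrib]
    rw [h2, h3]
    ring
  rw [expand]
  apply Finset.sum_congr rfl
  intro x _
  by_cases hx : (∑ y, v (x, y)) = 0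
  · have hz : ∀ y, v (x, y) = 0 := fun y =>
      (Finset.sum_eq_zero_iff_of_nonneg (fun y _ => hv0 (x, y))).mp hx y
        (Finset.mem_univ y)
    rw [hx, zero_mul]
    apply Finset.sum_eq_zero
    intro y _
    rw [hz y, zero_mul]
  · rw [KLs, Finset.mul_sum]
    apply Finset.sum_congr rfl
    intro y _
    by_cases hvy : v (x, y) = 0
    · rw [hvy]
      simp
    · rw [Real.log_div hvy hx]
      field_simp

end SDPI

open SDPI

theorem stmt6 {α : Type*} [Fintype α] (n m : ℕ) (hn : 2 ≤ n)
    (A : Fin n → Fin m → ℝ) (hA0 : ∀ i j, 0 ≤ A i j) (hA1 : ∀ i, ∑ j, A i j = 1)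
    (w : α × Fin n → ℝ) (hw0 : ∀ q, 0 ≤ w q) (hw1 : ∑ q, w q = 1) :
    mutInfo (fun xz : α × Fin m => ∑ i : Fin n, w (xz.1, i) * A i xz.2)
      ≤ (1 - sInf {s : ℝ | ∃ k ℓ : Fin n, k ≠ ℓ ∧
            s = (∑ j, Real.sqrt (A k j * A ℓ j)) ^ 2}) * mutInfo w := by
  classical
  set c : ℝ := sInf {s : ℝ | ∃ k ℓ : Fin n, k ≠ ℓ ∧
      s = (∑ j, Real.sqrt (A k j * A ℓ j)) ^ 2} with hc
  have hbdd : BddBelow {s : ℝ | ∃ k ℓ : Fin n, k ≠ ℓ ∧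
      s = (∑ j, Real.sqrt (A k j * A ℓ j)) ^ 2} := by
    refine ⟨0, ?_⟩
    rintro s ⟨k, l, hkl, rfl⟩
    positivity
  have hcA : ∀ k l : Fin n, k ≠ l → c ≤ (∑ j, Real.sqrt (A k j * A l j)) ^ 2 :=
    fun k l h => csInf_le hbdd ⟨k, l, h, rfl⟩
  have hv0 : ∀ q : α × Fin m, 0 ≤ ∑ i : Fin n, w (q.1, i) * A i q.2 := fun q =>
    Finset.sum_nonneg fun i _ => mul_nonneg (hw0 _) (hA0 _ _)
  have hIv := mutInfo_eq (fun xz : α × Fin m => ∑ i : Fin n, w (xz.1, i) * A i xz.2)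
    (fun q => hv0 q)
  have hIw := mutInfo_eq w hw0
  simp only at hIv
  rw [hIv, hIw, Finset.mul_sum]
  apply Finset.sum_le_sum
  intro x _
  have hzx : (∑ z : Fin m, ∑ i : Fin n, w (x, i) * A i z) = ∑ i : Fin n, w (x, i) := by
    rw [Finset.sum_comm]
    apply Finset.sum_congr rfl
    intro i _
    rw [← Finset.mul_sum, hA1 i, mul_one]
  have hzY : ∀ z : Fin m, (∑ x' : α, ∑ i : Fin n, w (x', i) * A i z)
      = ∑ i : Fin n, (∑ x' : α, w (x', i)) * A i z := by
    intro z
    rw [Finset.sum_comm]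
    apply Finset.sum_congr rfl
    intro i _
    rw [← Finset.sum_mul]
  rw [hzx]
  by_cases hx : (∑ i : Fin n, w (x, i)) = 0
  · rw [hx, zero_mul, zero_mul, mul_zero]
  · have hxpos : 0 < ∑ i : Fin n, w (x, i) :=
      lt_of_le_of_ne (Finset.sum_nonneg fun i _ => hw0 (x, i)) (Ne.symm hx)
    have e1 : (fun z : Fin m => (∑ i : Fin n, w (x, i) * A i z) / ∑ i : Fin n, w (x, i))
        = fun z : Fin m => ∑ i : Fin n, (w (x, i) / ∑ i' : Fin n, w (x, i')) * A i z := by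
      funext z
      rw [Finset.sum_div]
      apply Finset.sum_congr rfl
      intro i _
      ring
    have e2 : (fun z : Fin m => ∑ x' : α, ∑ i : Fin n, w (x', i) * A i z)
        = fun z : Fin m => ∑ i : Fin n, (∑ x' : α, w (x', i)) * A i z := by
      funext z
      exact hzY z
    rw [e1, e2]
    have hwY1 : ∑ i : Fin n, (∑ x' : α, w (x', i)) = 1 := by
      rw [← hw1, Fintype.sum_prod_type, Finset.sum_comm]
    have hcontr := kl_contract A hA0 hA1 c hcA
      (fun i => w (x, i) / ∑ i' : Fin n, w (x, i'))
      (fun i => ∑ x' : α, w (x', i))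
      (fun i => div_nonneg (hw0 (x, i)) hxpos.le)
      (fun i => Finset.sum_nonneg fun x' _ => hw0 (x', i))
      (by rw [← Finset.sum_div]; exact div_self hx)
      hwY1
      (fun i hi => by
        have hwz : w (x, i) = 0 :=
          (Finset.sum_eq_zero_iff_of_nonneg (fun x' _ => hw0 (x', i))).mp
            hi x (Finset.mem_univ x)
        show w (x, i) / (∑ i' : Fin n, w (x, i')) = 0
        rw [hwz, zero_div])
    calc (∑ i : Fin n, w (x, i)) *
          KLs (fun z => ∑ i : Fin n, (w (x, i) / ∑ i' : Fin n, w (x, i')) * A i z)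
            (fun z => ∑ i : Fin n, (∑ x' : α, w (x', i)) * A i z)
        ≤ (∑ i : Fin n, w (x, i)) *
            ((1 - c) * KLs (fun i => w (x, i) / ∑ i' : Fin n, w (x, i'))
              (fun i => ∑ x' : α, w (x', i))) :=
          mul_le_mul_of_nonneg_left hcontr hxpos.le
      _ = (1 - c) * ((∑ y : Fin n, w (x, y)) *
            KLs (fun y => w (x, y) / ∑ y' : Fin n, w (x, y'))
              (fun y => ∑ x' : α, w (x', y))) := by ring
end

section
/- Consider a feed-forward simply layered binary neural network with L layers, where layer ℓ consists of n_ℓ neurons, each neuron's binary output is flipped independently with probability ξ (0 ≤ ξ < 1/2), and each layer's pre-noise output is a deterministic function of the previous layer's post-noise output. Let X be any finitely-supported random input (or subset of the input) and Y_out the network output. Then I(X; Y_out) ≤ Π_{ℓ=1}^L (1 - (4ξ - 4ξ^2)^{n_ℓ}) · H(X). -/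
set_option linter.unusedSectionVars false
set_option maxHeartbeats 1000000


open Finset

/-- Pre-noise activation of layer `ℓ` in a simply layered network: a deterministic
function of the network input (for the first layer) or of the previous layer's
post-noise output. -/
def preAct {α : Type*} (n : ℕ → ℕ) (f0 : α → (Fin (n 0) → Bool))
    (f : ∀ k : ℕ, (Fin (n k) → Bool) → (Fin (n (k + 1)) → Bool))
    {L : ℕ} (x : α) (y : ∀ ℓ : Fin L, Fin (n ℓ.val) → Bool)
    (ℓ : Fin L) : Fin (n ℓ.val) → Bool :=
  match ℓ with
  | ⟨0, _⟩ => f0 x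
  | ⟨k + 1, h⟩ => f k (y ⟨k, Nat.lt_of_succ_lt h⟩)

namespace NN7

open Real

variable {α β γ : Type*} [Fintype α] [Fintype β] [Fintype γ]

lemma ent_eq (p : α → ℝ) : ent p = ∑ x, Real.negMulLog (p x) := by
  rw [ent, ← Finset.sum_neg_distrib]
  exact Finset.sum_congr rfl fun x _ => by rw [Real.negMulLog, neg_mul]

/-! ### KL divergence basics -/

noncomputable def kl (p q : α → ℝ) : ℝ := ∑ x, p x * (Real.log (p x) - Real.log (q x))

lemma kl_term_ge (a b : ℝ) (ha : 0 ≤ a) (hb : 0 ≤ b) (hab : b = 0 → a = 0) :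
    a - b ≤ a * (Real.log a - Real.log b) := by
  rcases eq_or_lt_of_le ha with h | h
  · rw [← h]; simp; linarith
  · have hb' : 0 < b := by
      rcases eq_or_lt_of_le hb with h' | h'
      · exact absurd (hab h'.symm) h.ne'
      · exact h'
    have hlog : Real.log (b / a) ≤ b / a - 1 := Real.log_le_sub_one_of_pos (by positivity)
    rw [Real.log_div hb'.ne' h.ne'] at hlog
    have h2 := mul_le_mul_of_nonneg_left hlog (le_of_lt h)
    have h3 : a * (b / a - 1) = b - a := by field_simp
    rw [h3] at h2
    nlinarith

lemma kl_nonneg (p q : α → ℝ) (hp : ∀ x, 0 ≤ p x) (hq : ∀ x, 0 ≤ q x)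
    (hab : ∀ x, q x = 0 → p x = 0) (hs : ∑ x, q x = ∑ x, p x) : 0 ≤ kl p q := by
  have h : ∑ x, (p x - q x) ≤ kl p q :=
    Finset.sum_le_sum fun x _ => kl_term_ge (p x) (q x) (hp x) (hq x) (hab x)
  rw [Finset.sum_sub_distrib, hs] at h
  linarith

lemma logSum (a b : α → ℝ) (ha : ∀ x, 0 ≤ a x) (hb : ∀ x, 0 ≤ b x)
    (hab : ∀ x, b x = 0 → a x = 0) :
    (∑ x, a x) * (Real.log (∑ x, a x) - Real.log (∑ x, b x)) ≤
      ∑ x, a x * (Real.log (a x) - Real.log (b x)) := by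
  rcases eq_or_lt_of_le (Finset.sum_nonneg fun x (_ : x ∈ Finset.univ) => ha x) with h0 | hApos
  · have hz : ∀ x ∈ (Finset.univ : Finset α), a x = 0 :=
      (Finset.sum_eq_zero_iff_of_nonneg (fun x _ => ha x)).1 h0.symm
    have h1 : ∑ x, a x * (Real.log (a x) - Real.log (b x)) = 0 :=
      Finset.sum_eq_zero fun x hx => by rw [hz x hx]; ring
    rw [h1, ← h0]; simp
  · have hBpos : 0 < ∑ x, b x := by
      rcases eq_or_lt_of_le (Finset.sum_nonneg fun x (_ : x ∈ Finset.univ) => hb x) with h0 | h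
      · exfalso
        have hbz := (Finset.sum_eq_zero_iff_of_nonneg (fun x _ => hb x)).1 h0.symm
        have hz : ∑ x, a x = 0 := Finset.sum_eq_zero fun x hx => hab x (hbz x hx)
        rw [hz] at hApos; exact lt_irrefl _ hApos
      · exact h
    have hAB : (0:ℝ) < (∑ x, a x) / (∑ x, b x) := by positivity
    have key : 0 ≤ kl a (fun x => b x * ((∑ x, a x) / (∑ x, b x))) := by
      apply kl_nonneg _ _ ha (fun x => mul_nonneg (hb x) hAB.le)
      · intro x hx
        rcases mul_eq_zero.1 hx with h | h
        · exact hab x h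
        · exact absurd h (ne_of_gt hAB)
      · rw [← Finset.sum_mul]
        field_simp
    have expand : ∀ x ∈ (Finset.univ : Finset α),
        a x * (Real.log (a x) - Real.log (b x * ((∑ x, a x) / (∑ x, b x))))
        = a x * (Real.log (a x) - Real.log (b x))
          - a x * (Real.log (∑ x, a x) - Real.log (∑ x, b x)) := by
      intro x _
      rcases eq_or_lt_of_le (hb x) with hbx | hbx
      · rw [hab x hbx.symm]; ring
      · rw [Real.log_mul hbx.ne' (ne_of_gt hAB), Real.log_div (ne_of_gt hApos) (ne_of_gt hBpos)]
        ring
    rw [kl, Finset.sum_congr rfl expand, Finset.sum_sub_distrib, ← Finset.sum_mul] at key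
    linarith

lemma kl_dpi (p q : α → ℝ) (K : α → β → ℝ) (hp : ∀ x, 0 ≤ p x) (hq : ∀ x, 0 ≤ q x)
    (hab : ∀ x, q x = 0 → p x = 0) (hK0 : ∀ x y, 0 ≤ K x y) (hK1 : ∀ x, ∑ y, K x y = 1) :
    kl (fun y => ∑ x, p x * K x y) (fun y => ∑ x, q x * K x y) ≤ kl p q := by
  have h1 : kl (fun y => ∑ x, p x * K x y) (fun y => ∑ x, q x * K x y)
      ≤ ∑ y, ∑ x, p x * K x y * (Real.log (p x * K x y) - Real.log (q x * K x y)) := by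
    rw [kl]
    apply Finset.sum_le_sum
    intro y _
    exact logSum (fun x => p x * K x y) (fun x => q x * K x y)
      (fun x => mul_nonneg (hp x) (hK0 x y)) (fun x => mul_nonneg (hq x) (hK0 x y))
      (fun x hx => by
        show p x * K x y = 0
        rcases mul_eq_zero.1 hx with h | h
        · rw [hab x h]; ring
        · rw [h]; ring)
  refine h1.trans_eq ?_
  rw [Finset.sum_comm, kl]
  apply Finset.sum_congr rfl
  intro x _
  have key : ∀ y ∈ (Finset.univ : Finset β),
      p x * K x y * (Real.log (p x * K x y) - Real.log (q x * K x y))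
      = p x * (Real.log (p x) - Real.log (q x)) * K x y := by
    intro y _
    by_cases hpx : p x = 0
    · rw [hpx]; ring
    · by_cases hKy : K x y = 0
      · rw [hKy]; ring
      · have hqx : q x ≠ 0 := fun h => hpx (hab x h)
        rw [Real.log_mul hpx hKy, Real.log_mul hqx hKy]
        ring
  rw [Finset.sum_congr rfl key, ← Finset.mul_sum, hK1, mul_one]

/-! ### Mutual information basics -/

lemma marg_le_of_nonneg (p : α × β → ℝ) (hp : ∀ z, 0 ≤ p z) (x : α) (y : β) :
    p (x, y) ≤ ∑ y', p (x, y') :=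
  Finset.single_le_sum (fun i _ => hp (x, i)) (Finset.mem_univ y)

lemma marg_le_of_nonneg' (p : α × β → ℝ) (hp : ∀ z, 0 ≤ p z) (x : α) (y : β) :
    p (x, y) ≤ ∑ x', p (x', y) :=
  Finset.single_le_sum (fun i _ => hp (i, y)) (Finset.mem_univ x)

lemma mutInfo_eq_kl (p : α × β → ℝ) (hp : ∀ z, 0 ≤ p z) :
    mutInfo p = kl p (fun z => (∑ y, p (z.1, y)) * (∑ x, p (x, z.2))) := by
  have key : ∀ z ∈ (Finset.univ : Finset (α × β)),
      p z * (Real.log (p z) - Real.log ((∑ y, p (z.1, y)) * (∑ x, p (x, z.2))))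
      = p z * Real.log (p z)
        - (p z * Real.log (∑ y, p (z.1, y)) + p z * Real.log (∑ x, p (x, z.2))) := by
    rintro ⟨x, y⟩ _
    rcases eq_or_lt_of_le (hp (x, y)) with h | h
    · rw [← h]; ring
    · have h1 : 0 < ∑ y', p (x, y') := lt_of_lt_of_le h (marg_le_of_nonneg p hp x y)
      have h2 : 0 < ∑ x', p (x', y) := lt_of_lt_of_le h (marg_le_of_nonneg' p hp x y)
      rw [Real.log_mul h1.ne' h2.ne']
      ring
  rw [kl, Finset.sum_congr rfl key, Finset.sum_sub_distrib, Finset.sum_add_distrib]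
  have e1 : ∑ z : α × β, p z * Real.log (∑ y, p (z.1, y))
      = ∑ x, (∑ y, p (x, y)) * Real.log (∑ y, p (x, y)) := by
    rw [Fintype.sum_prod_type]
    refine Finset.sum_congr rfl fun x _ => ?_
    show (∑ y, p (x, y) * Real.log (∑ y', p (x, y'))) = _
    rw [← Finset.sum_mul]
  have e2 : ∑ z : α × β, p z * Real.log (∑ x, p (x, z.2))
      = ∑ y, (∑ x, p (x, y)) * Real.log (∑ x, p (x, y)) := by
    rw [Fintype.sum_prod_type, Finset.sum_comm]
    refine Finset.sum_congr rfl fun y _ => ?_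
    show (∑ x, p (x, y) * Real.log (∑ x', p (x', y))) = _
    rw [← Finset.sum_mul]
  rw [e1, e2, mutInfo, ent, ent, ent, Fintype.sum_prod_type]
  ring

lemma mutInfo_dpi (p : α × β → ℝ) (hp : ∀ z, 0 ≤ p z) (K : β → γ → ℝ)
    (hK0 : ∀ b c, 0 ≤ K b c) (hK1 : ∀ b, ∑ c, K b c = 1) :
    mutInfo (fun xc : α × γ => ∑ b, p (xc.1, b) * K b xc.2) ≤ mutInfo p := by
  have hr0 : ∀ z : α × γ, 0 ≤ ∑ b, p (z.1, b) * K b z.2 :=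
    fun z => Finset.sum_nonneg fun b _ => mul_nonneg (hp _) (hK0 _ _)
  rw [mutInfo_eq_kl p hp, mutInfo_eq_kl _ hr0]
  have hm1 : ∀ a : α, ∑ c, ∑ b, p (a, b) * K b c = ∑ y, p (a, y) := by
    intro a
    rw [Finset.sum_comm]
    simp only [← Finset.mul_sum, hK1, mul_one]
  have hm2 : ∀ c : γ, ∑ x, ∑ b, p (x, b) * K b c = ∑ b, (∑ x, p (x, b)) * K b c := by
    intro c
    rw [Finset.sum_comm]
    simp only [← Finset.sum_mul]
  have habs : ∀ u : α × β, (∑ y, p (u.1, y)) * (∑ x, p (x, u.2)) = 0 → p u = 0 := by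
    intro u h
    rcases mul_eq_zero.1 h with h | h
    · exact le_antisymm (h ▸ marg_le_of_nonneg p hp u.1 u.2) (hp u)
    · exact le_antisymm (h ▸ marg_le_of_nonneg' p hp u.1 u.2) (hp u)
  classical
  have e3 : (fun v : α × γ => ∑ u : α × β, p u * ((if v.1 = u.1 then (1:ℝ) else 0) * K u.2 v.2))
      = (fun xc : α × γ => ∑ b, p (xc.1, b) * K b xc.2) := by
    funext v
    conv_lhs => rw [Fintype.sum_prod_type, Finset.sum_comm]
    simp only [mul_ite, ite_mul, one_mul, zero_mul, mul_zero, mul_one,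
      Finset.sum_ite_eq, Finset.mem_univ, if_true]
  have e4 : (fun v : α × γ => ∑ u : α × β,
        ((∑ y, p (u.1, y)) * (∑ x, p (x, u.2))) * ((if v.1 = u.1 then (1:ℝ) else 0) * K u.2 v.2))
      = (fun z : α × γ => (∑ y, ∑ b, p (z.1, b) * K b y) * (∑ x, ∑ b, p (x, b) * K b z.2)) := by
    funext v
    conv_lhs => rw [Fintype.sum_prod_type, Finset.sum_comm]
    simp only [mul_ite, ite_mul, one_mul, zero_mul, mul_zero, mul_one,
      Finset.sum_ite_eq, Finset.mem_univ, if_true]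
    rw [hm1, hm2]
    conv_rhs => rw [Finset.mul_sum]
    exact Finset.sum_congr rfl fun b _ => by ring
  have h5 := kl_dpi p (fun z => (∑ y, p (z.1, y)) * (∑ x, p (x, z.2)))
    (fun (u : α × β) (v : α × γ) => (if v.1 = u.1 then (1:ℝ) else 0) * K u.2 v.2) hp
    (fun z => mul_nonneg (Finset.sum_nonneg fun y _ => hp _) (Finset.sum_nonneg fun x _ => hp _))
    habs
    (fun u v => mul_nonneg (by split_ifs <;> norm_num) (hK0 _ _))
    (by
      intro u
      rw [Fintype.sum_prod_type, Finset.sum_comm]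
      simp only [ite_mul, one_mul, zero_mul, Finset.sum_ite_eq', Finset.mem_univ, if_true]
      exact hK1 u.2)
  rw [e3, e4] at h5
  exact h5

lemma negMulLog_sum_le (g : α → ℝ) (hg : ∀ x, 0 ≤ g x) :
    Real.negMulLog (∑ x, g x) ≤ ∑ x, Real.negMulLog (g x) := by
  have key : ∀ x ∈ (Finset.univ : Finset α), g x * Real.log (g x) ≤ g x * Real.log (∑ x, g x) := by
    intro x _
    rcases eq_or_lt_of_le (hg x) with h | h
    · rw [← h]; simp
    · refine mul_le_mul_of_nonneg_left ?_ (hg x)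
      apply Real.log_le_log h
      exact Finset.single_le_sum (fun i _ => hg i) (Finset.mem_univ x)
  have h2 : ∑ x, Real.negMulLog (g x) = -∑ x, g x * Real.log (g x) := by
    rw [← Finset.sum_neg_distrib]
    exact Finset.sum_congr rfl fun x _ => by rw [Real.negMulLog, neg_mul]
  rw [h2, Real.negMulLog, neg_mul]
  apply neg_le_neg
  calc ∑ x, g x * Real.log (g x) ≤ ∑ x, g x * Real.log (∑ x, g x) := Finset.sum_le_sum key
  _ = (∑ x, g x) * Real.log (∑ x, g x) := by rw [← Finset.sum_mul]

lemma mutInfo_le_ent (p : α × β → ℝ) (hp : ∀ z, 0 ≤ p z) :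
    mutInfo p ≤ ent (fun x => ∑ y, p (x, y)) := by
  have h : ent (fun y => ∑ x, p (x, y)) ≤ ent p := by
    rw [ent_eq, ent_eq, Fintype.sum_prod_type, Finset.sum_comm]
    exact Finset.sum_le_sum fun y _ => negMulLog_sum_le (fun x => p (x, y)) (fun x => hp _)
  rw [mutInfo]
  linarith

lemma ent_comp_equiv {α' : Type*} [Fintype α'] (e : α' ≃ α) (p : α → ℝ) :
    ent (fun x => p (e x)) = ent p := by
  rw [ent_eq, ent_eq]
  exact Fintype.sum_equiv e _ _ fun _ => rfl

lemma mutInfo_comp_equiv {β' : Type*} [Fintype β'] (e : β' ≃ β) (p : α × β → ℝ) :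
    mutInfo (fun xz : α × β' => p (xz.1, e xz.2)) = mutInfo p := by
  rw [mutInfo, mutInfo]
  have h1 : (fun x => ∑ y : β', p (x, e y)) = fun x => ∑ y, p (x, y) := by
    funext x; exact Fintype.sum_equiv e _ _ fun _ => rfl
  have h2 : ent (fun y : β' => ∑ x, p (x, e y)) = ent (fun y => ∑ x, p (x, y)) :=
    ent_comp_equiv e fun y => ∑ x, p (x, y)
  have h3 : ent (fun xz : α × β' => p (xz.1, e xz.2)) = ent p :=
    ent_comp_equiv ((Equiv.refl α).prodCongr e) p
  rw [h1, h2, h3]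

lemma mutInfo_unique [Unique β] (p : α × β → ℝ) (h1 : ∑ z, p z = 1) : mutInfo p = 0 := by
  have hsum : ∀ g : β → ℝ, ∑ y, g y = g default := fun g => Fintype.sum_unique g
  have hd : ∑ x, p (x, default) = 1 := by
    rw [← h1, Fintype.sum_prod_type]
    exact Finset.sum_congr rfl fun x _ => (hsum fun y => p (x, y)).symm
  rw [mutInfo, ent_eq, ent_eq, ent_eq, Fintype.sum_prod_type]
  simp only [hsum]
  rw [hd]
  simp

lemma sum_negMulLog_const_mul (c : ℝ) (g : α → ℝ) :
    ∑ x, Real.negMulLog (c * g x) =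
      c * ∑ x, Real.negMulLog (g x) + (∑ x, g x) * Real.negMulLog c := by
  simp only [Real.negMulLog_mul, Finset.sum_add_distrib, ← Finset.sum_mul, ← Finset.mul_sum]
  ring

/-! ### Conditional decomposition of mutual information -/

noncomputable def margW (p : α × γ × β → ℝ) : α × β → ℝ := fun xw => ∑ z, p (xw.1, z, xw.2)

noncomputable def wMass (p : α × γ × β → ℝ) : β → ℝ := fun w => ∑ xz : α × γ, p (xz.1, xz.2, w)

noncomputable def condW (p : α × γ × β → ℝ) (w : β) : α × γ → ℝ :=
  fun xz => p (xz.1, xz.2, w) / wMass p w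

lemma wMass_nonneg (p : α × γ × β → ℝ) (hp : ∀ z, 0 ≤ p z) (w : β) : 0 ≤ wMass p w :=
  Finset.sum_nonneg fun xz _ => hp _

lemma wMass_eq (p : α × γ × β → ℝ) (w : β) : wMass p w = ∑ x, margW p (x, w) := by
  rw [wMass, Fintype.sum_prod_type]
  rfl

lemma sum3 (f : α × γ × β → ℝ) :
    ∑ u : α × γ × β, f u = ∑ w, ∑ xz : α × γ, f (xz.1, xz.2, w) :=
  calc ∑ u : α × γ × β, f u
      = ∑ x, ∑ zw : γ × β, f (x, zw) := Fintype.sum_prod_type _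
    _ = ∑ x, ∑ z, ∑ w, f (x, z, w) := Finset.sum_congr rfl fun x _ => Fintype.sum_prod_type _
    _ = ∑ x, ∑ w, ∑ z, f (x, z, w) := Finset.sum_congr rfl fun x _ => Finset.sum_comm
    _ = ∑ w, ∑ x, ∑ z, f (x, z, w) := Finset.sum_comm
    _ = ∑ w, ∑ xz : α × γ, f (xz.1, xz.2, w) :=
        Finset.sum_congr rfl fun w _ =>
          (Fintype.sum_prod_type (fun xz : α × γ => f (xz.1, xz.2, w))).symm

lemma bracket_eq (q : α × γ → ℝ) (hq : ∀ z, 0 ≤ q z) :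
    (∑ z, Real.negMulLog (∑ x, q (x, z))) - (∑ xz : α × γ, Real.negMulLog (q xz))
      + (∑ x, Real.negMulLog (∑ z, q (x, z))) - Real.negMulLog (∑ xz : α × γ, q xz)
    = (∑ xz : α × γ, q xz) * mutInfo (fun xz => q xz / (∑ xz : α × γ, q xz)) := by
  rcases eq_or_lt_of_le (Finset.sum_nonneg fun xz (_ : xz ∈ Finset.univ) => hq xz) with h0 | hS
  · have hz : ∀ xz : α × γ, q xz = 0 := fun xz =>
      (Finset.sum_eq_zero_iff_of_nonneg (fun xz _ => hq xz)).1 h0.symm xz (Finset.mem_univ xz)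
    simp [hz, ← h0]
  · have hSne : (∑ xz : α × γ, q xz) ≠ 0 := ne_of_gt hS
    have hc1 : ∑ xz : α × γ, q xz / (∑ xz : α × γ, q xz) = 1 := by
      rw [← Finset.sum_div]; exact div_self hSne
    have hps : ∀ g : α × γ → ℝ, ∑ xz : α × γ, g xz = ∑ z, ∑ x, g (x, z) :=
      fun g => (Fintype.sum_prod_type _).trans Finset.sum_comm
    have hc2 : ∑ z, ∑ x, q (x, z) / (∑ xz : α × γ, q xz) = 1 :=
      ((hps (fun xz => q xz / (∑ xz : α × γ, q xz))).symm).trans hc1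
    have hc3 : ∑ x, ∑ z, q (x, z) / (∑ xz : α × γ, q xz) = 1 := by
      rw [Finset.sum_comm]
      exact hc2
    have e2 : ∑ xz : α × γ, Real.negMulLog (q xz)
        = (∑ xz : α × γ, q xz) * (∑ xz : α × γ, Real.negMulLog (q xz / (∑ xz : α × γ, q xz)))
          + (∑ xz : α × γ, q xz / (∑ xz : α × γ, q xz))
            * Real.negMulLog (∑ xz : α × γ, q xz) := by
      rw [← sum_negMulLog_const_mul (∑ xz : α × γ, q xz) (fun xz => q xz / (∑ xz : α × γ, q xz))]
      exact Finset.sum_congr rfl fun xz _ => congrArg Real.negMulLog (by field_simp)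
    have e1 : ∑ z, Real.negMulLog (∑ x, q (x, z))
        = (∑ xz : α × γ, q xz) * (∑ z, Real.negMulLog (∑ x, q (x, z) / (∑ xz : α × γ, q xz)))
          + (∑ z, ∑ x, q (x, z) / (∑ xz : α × γ, q xz))
            * Real.negMulLog (∑ xz : α × γ, q xz) := by
      rw [← sum_negMulLog_const_mul (∑ xz : α × γ, q xz)
        (fun z => ∑ x, q (x, z) / (∑ xz : α × γ, q xz))]
      refine Finset.sum_congr rfl fun z _ => congrArg Real.negMulLog ?_
      rw [Finset.mul_sum]
      exact Finset.sum_congr rfl fun x _ => by field_simp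
    have e3 : ∑ x, Real.negMulLog (∑ z, q (x, z))
        = (∑ xz : α × γ, q xz) * (∑ x, Real.negMulLog (∑ z, q (x, z) / (∑ xz : α × γ, q xz)))
          + (∑ x, ∑ z, q (x, z) / (∑ xz : α × γ, q xz))
            * Real.negMulLog (∑ xz : α × γ, q xz) := by
      rw [← sum_negMulLog_const_mul (∑ xz : α × γ, q xz)
        (fun x => ∑ z, q (x, z) / (∑ xz : α × γ, q xz))]
      refine Finset.sum_congr rfl fun x _ => congrArg Real.negMulLog ?_
      rw [Finset.mul_sum]
      exact Finset.sum_congr rfl fun z _ => by field_simp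
    simp only [mutInfo, ent_eq]
    rw [e1, e2, e3, hc1, hc2, hc3]
    ring

lemma cmi_eq (p : α × γ × β → ℝ) (hp : ∀ z, 0 ≤ p z) :
    mutInfo p - mutInfo (margW p) = ∑ w, wMass p w * mutInfo (condW p w) := by
  have key : ∀ w ∈ (Finset.univ : Finset β),
      (∑ z, Real.negMulLog (∑ x, p (x, z, w)))
        - (∑ xz : α × γ, Real.negMulLog (p (xz.1, xz.2, w)))
        + (∑ x, Real.negMulLog (∑ z, p (x, z, w))) - Real.negMulLog (wMass p w)
      = wMass p w * mutInfo (condW p w) := fun w _ =>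
    bracket_eq (fun xz : α × γ => p (xz.1, xz.2, w)) (fun xz => hp _)
  have hA : ent (fun zw : γ × β => ∑ x, p (x, zw)) = ∑ w, ∑ z, Real.negMulLog (∑ x, p (x, z, w)) := by
    rw [ent_eq, Fintype.sum_prod_type]
    exact Finset.sum_comm
  have hB' : ent p = ∑ w, ∑ xz : α × γ, Real.negMulLog (p (xz.1, xz.2, w)) := by
    rw [ent_eq]
    exact sum3 _
  have hC : ent (margW p) = ∑ w, ∑ x, Real.negMulLog (∑ z, p (x, z, w)) := by
    rw [ent_eq, Fintype.sum_prod_type]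
    exact Finset.sum_comm
  have hD : ent (fun w => ∑ x, margW p (x, w)) = ∑ w, Real.negMulLog (wMass p w) := by
    rw [ent_eq]
    exact Finset.sum_congr rfl fun w _ => congrArg Real.negMulLog (wMass_eq p w).symm
  have hX : ent (fun x => ∑ zw : γ × β, p (x, zw)) = ent (fun x => ∑ w, margW p (x, w)) := by
    refine congrArg ent (funext fun x => ?_)
    rw [Fintype.sum_prod_type]
    exact Finset.sum_comm
  rw [mutInfo, mutInfo, hA, hB', hC, hD, hX, ← Finset.sum_congr rfl key]
  simp only [Finset.sum_sub_distrib, Finset.sum_add_distrib]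
  ring

/-! ### The binary symmetric channel on one wire -/

noncomputable def bsc1 (ξ : ℝ) (c b : Bool) : ℝ := if c = b then 1 - ξ else ξ

lemma bsc1_nonneg (ξ : ℝ) (hξ0 : 0 ≤ ξ) (hξ1 : ξ ≤ 1) (c b : Bool) : 0 ≤ bsc1 ξ c b := by
  rw [bsc1]; split_ifs <;> linarith

lemma bsc1_sum (ξ : ℝ) (c : Bool) : ∑ b, bsc1 ξ c b = 1 := by
  rw [Fintype.sum_bool, bsc1, bsc1]
  cases c <;> simp

noncomputable def eFn (u v : ℝ) : ℝ :=
  Real.negMulLog u + Real.negMulLog v - Real.negMulLog (u + v)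

lemma eFn_homog (c u v : ℝ) : eFn (c*u) (c*v) = c * eFn u v := by
  rw [eFn, eFn, ← mul_add, Real.negMulLog_mul, Real.negMulLog_mul, Real.negMulLog_mul]
  ring

noncomputable def hB (t : ℝ) : ℝ := Real.negMulLog (1 - t) + Real.negMulLog t

noncomputable def phiF (ξ t : ℝ) : ℝ := hB (ξ + (1 - 2*ξ)*t) - (1-2*ξ)^2 * hB t

noncomputable def Gfn (ξ u v : ℝ) : ℝ :=
  eFn ((1-ξ)*u + ξ*v) (ξ*u + (1-ξ)*v) - (1-2*ξ)^2 * eFn u v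

lemma eFn_zero : eFn 0 0 = 0 := by simp [eFn]

lemma Gfn_zero (ξ : ℝ) : Gfn ξ 0 0 = 0 := by
  simp [Gfn, eFn]

lemma eFn_pair (u v : ℝ) (hs : u + v ≠ 0) : eFn u v = (u+v) * hB (v/(u+v)) := by
  have h3 := eFn_homog (u+v) (u/(u+v)) (v/(u+v))
  have e1 : (u+v) * (u/(u+v)) = u := by field_simp
  have e2 : (u+v) * (v/(u+v)) = v := by field_simp
  rw [e1, e2] at h3
  rw [h3]
  congr 1
  rw [eFn, hB, show u/(u+v) + v/(u+v) = 1 by field_simp, Real.negMulLog_one,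
    show (1:ℝ) - v/(u+v) = u/(u+v) by field_simp; ring]
  ring

lemma phi_convex (ξ : ℝ) (hξ0 : 0 ≤ ξ) (hξ : ξ < 1/2) :
    ConvexOn ℝ (Set.Icc (0:ℝ) 1) (phiF ξ) := by
  have h2ξ : 0 < 1 - 2*ξ := by linarith
  have hsmem : ∀ t : ℝ, t ∈ Set.Ioo (0:ℝ) 1 → 0 < ξ + (1-2*ξ)*t ∧ ξ + (1-2*ξ)*t < 1 := by
    intro t ht
    constructor
    · nlinarith [ht.1, ht.2]
    · nlinarith [ht.1, ht.2]
  have hB_deriv : ∀ t : ℝ, t ≠ 0 → t ≠ 1 →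
      HasDerivAt hB (Real.log (1-t) - Real.log t) t := by
    intro t h0 h1
    have d1 : HasDerivAt (fun u : ℝ => 1 - u) (-1) t := by
      simpa using (hasDerivAt_id t).const_sub 1
    have d2 : HasDerivAt (fun u : ℝ => Real.negMulLog (1 - u)) ((-Real.log (1-t) - 1) * (-1)) t :=
      HasDerivAt.comp t (Real.hasDerivAt_negMulLog (fun h => h1 (by linarith))) d1
    have d3 : HasDerivAt Real.negMulLog (-Real.log t - 1) t := Real.hasDerivAt_negMulLog h0
    have d4 := d2.add d3
    have : HasDerivAt hB ((-Real.log (1-t) - 1) * (-1) + (-Real.log t - 1)) t := d4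
    convert this using 1
    ring
  have daffgen : ∀ t : ℝ, HasDerivAt (fun u : ℝ => ξ + (1-2*ξ)*u) (1-2*ξ) t := by
    intro t
    simpa using ((hasDerivAt_id t).const_mul (1-2*ξ)).const_add ξ
  have phi_deriv : ∀ t ∈ Set.Ioo (0:ℝ) 1, HasDerivAt (phiF ξ)
      ((1-2*ξ) * (Real.log (1 - (ξ + (1-2*ξ)*t)) - Real.log (ξ + (1-2*ξ)*t))
        - (1-2*ξ)^2 * (Real.log (1-t) - Real.log t)) t := by
    intro t ht
    obtain ⟨hs0, hs1⟩ := hsmem t ht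
    have d1 := HasDerivAt.comp t (hB_deriv _ hs0.ne' (ne_of_lt hs1)) (daffgen t)
    have d2 := (hB_deriv t (ne_of_gt ht.1) (ne_of_lt ht.2)).const_mul ((1-2*ξ)^2)
    have d3 := d1.sub d2
    have : HasDerivAt (phiF ξ)
        ((Real.log (1 - (ξ + (1-2*ξ)*t)) - Real.log (ξ + (1-2*ξ)*t)) * (1-2*ξ)
          - (1-2*ξ)^2 * (Real.log (1-t) - Real.log t)) t := d3
    convert this using 1
    ring
  set ψ : ℝ → ℝ := fun t =>
    (1-2*ξ) * (Real.log (1 - (ξ + (1-2*ξ)*t)) - Real.log (ξ + (1-2*ξ)*t))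
      - (1-2*ξ)^2 * (Real.log (1-t) - Real.log t) with hψdef
  have ψ_deriv : ∀ t ∈ Set.Ioo (0:ℝ) 1, HasDerivAt ψ
      ((1-2*ξ)^2 * ((t⁻¹ + (1-t)⁻¹) - ((ξ + (1-2*ξ)*t)⁻¹ + (1 - (ξ + (1-2*ξ)*t))⁻¹))) t := by
    intro t ht
    obtain ⟨hs0, hs1⟩ := hsmem t ht
    have daff2 : HasDerivAt (fun u : ℝ => 1 - (ξ + (1-2*ξ)*u)) (-(1-2*ξ)) t := by
      simpa using (daffgen t).const_sub 1
    have l1 : HasDerivAt (fun u : ℝ => Real.log (1 - (ξ + (1-2*ξ)*u)))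
        ((1 - (ξ + (1-2*ξ)*t))⁻¹ * (-(1-2*ξ))) t :=
      HasDerivAt.comp t (Real.hasDerivAt_log (by linarith)) daff2
    have l2 : HasDerivAt (fun u : ℝ => Real.log (ξ + (1-2*ξ)*u))
        ((ξ + (1-2*ξ)*t)⁻¹ * (1-2*ξ)) t :=
      HasDerivAt.comp t (Real.hasDerivAt_log hs0.ne') (daffgen t)
    have dc : HasDerivAt (fun u : ℝ => 1 - u) (-1) t := by
      simpa using (hasDerivAt_id t).const_sub 1
    have l3 : HasDerivAt (fun u : ℝ => Real.log (1 - u)) ((1-t)⁻¹ * (-1)) t :=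
      HasDerivAt.comp t (Real.hasDerivAt_log (by linarith [ht.2] : (1:ℝ) - t ≠ 0)) dc
    have l4 : HasDerivAt Real.log t⁻¹ t := Real.hasDerivAt_log (ne_of_gt ht.1)
    have d5 := ((l1.sub l2).const_mul (1-2*ξ)).sub ((l3.sub l4).const_mul ((1-2*ξ)^2))
    have : HasDerivAt ψ
        ((1-2*ξ) * ((1 - (ξ + (1-2*ξ)*t))⁻¹ * (-(1-2*ξ)) - (ξ + (1-2*ξ)*t)⁻¹ * (1-2*ξ))
          - (1-2*ξ)^2 * ((1-t)⁻¹ * (-1) - t⁻¹)) t := d5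
    convert this using 1
    ring
  apply MonotoneOn.convexOn_of_deriv (convex_Icc 0 1)
  · have : Continuous (phiF ξ) := by
      unfold phiF hB
      fun_prop
    exact this.continuousOn
  · rw [interior_Icc]
    intro t ht
    exact ((phi_deriv t ht).differentiableAt).differentiableWithinAt
  · rw [interior_Icc]
    have hmono : MonotoneOn ψ (Set.Ioo (0:ℝ) 1) := by
      apply monotoneOn_of_deriv_nonneg (convex_Ioo 0 1)
      · exact fun t ht => ((ψ_deriv t ht).differentiableAt).continuousAt.continuousWithinAt
      · rw [interior_Ioo]
        exact fun t ht => ((ψ_deriv t ht).differentiableAt).differentiableWithinAt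
      · rw [interior_Ioo]
        intro t ht
        rw [(ψ_deriv t ht).deriv]
        obtain ⟨hs0, hs1⟩ := hsmem t ht
        have ht0 : 0 < t := ht.1
        have ht1 : 0 < 1 - t := by linarith [ht.2]
        have key : t * (1-t) ≤ (ξ + (1-2*ξ)*t) * (1 - (ξ + (1-2*ξ)*t)) := by
          nlinarith [sq_nonneg (1 - 2*t), mul_nonneg hξ0 (by linarith : (0:ℝ) ≤ 1 - ξ)]
        have e1 : t⁻¹ + (1-t)⁻¹ = (t * (1-t))⁻¹ := by
          field_simp
          ring
        have hs0' : ξ + (1-2*ξ)*t ≠ 0 := ne_of_gt hs0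
        have hs1' : 1 - (ξ + (1-2*ξ)*t) ≠ 0 := ne_of_gt (by linarith)
        have e2 : (ξ + (1-2*ξ)*t)⁻¹ + (1 - (ξ + (1-2*ξ)*t))⁻¹
            = ((ξ + (1-2*ξ)*t) * (1 - (ξ + (1-2*ξ)*t)))⁻¹ := by
          rw [inv_add_inv hs0' hs1']
          ring
        rw [e1, e2]
        have hle : ((ξ + (1-2*ξ)*t) * (1 - (ξ + (1-2*ξ)*t)))⁻¹ ≤ (t * (1-t))⁻¹ := by
          apply inv_anti₀ (by positivity) key
        exact mul_nonneg (sq_nonneg _) (by linarith)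
    intro x hx y hy hxy
    rw [(phi_deriv x hx).deriv, (phi_deriv y hy).deriv]
    exact hmono hx hy hxy

lemma Gfn_eq_phi (ξ u v : ℝ) (hξ0 : 0 ≤ ξ) (hξ1 : ξ ≤ 1) (hu : 0 ≤ u) (hv : 0 ≤ v)
    (hs : 0 < u + v) : Gfn ξ u v = (u + v) * phiF ξ (v/(u+v)) := by
  have hT : ((1-ξ)*u + ξ*v) + (ξ*u + (1-ξ)*v) = u + v := by ring
  have h1 : eFn ((1-ξ)*u + ξ*v) (ξ*u + (1-ξ)*v)
      = (u+v) * hB ((ξ*u + (1-ξ)*v)/(u+v)) := by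
    rw [eFn_pair _ _ (by rw [hT]; exact hs.ne'), hT]
  have h2 : (ξ*u + (1-ξ)*v)/(u+v) = ξ + (1-2*ξ)*(v/(u+v)) := by
    field_simp
    ring
  rw [Gfn, h1, h2, eFn_pair u v hs.ne', phiF]
  ring

lemma Gfn_add_le (ξ : ℝ) (hξ0 : 0 ≤ ξ) (hξ : ξ < 1/2) (u₁ v₁ u₂ v₂ : ℝ)
    (hu₁ : 0 ≤ u₁) (hv₁ : 0 ≤ v₁) (hu₂ : 0 ≤ u₂) (hv₂ : 0 ≤ v₂) :
    Gfn ξ (u₁ + u₂) (v₁ + v₂) ≤ Gfn ξ u₁ v₁ + Gfn ξ u₂ v₂ := by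
  have hξ1 : ξ ≤ 1 := by linarith
  rcases eq_or_lt_of_le (by positivity : (0:ℝ) ≤ u₁ + v₁) with h1 | h1
  · have hu : u₁ = 0 := by linarith
    have hv : v₁ = 0 := by linarith
    rw [hu, hv, Gfn_zero, zero_add, zero_add, zero_add]
  · rcases eq_or_lt_of_le (by positivity : (0:ℝ) ≤ u₂ + v₂) with h2 | h2
    · have hu : u₂ = 0 := by linarith
      have hv : v₂ = 0 := by linarith
      rw [hu, hv, Gfn_zero, add_zero, add_zero, add_zero]
    · have hs : 0 < (u₁ + u₂) + (v₁ + v₂) := by linarith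
      have hconv := phi_convex ξ hξ0 hξ
      have ht₁ : v₁/(u₁+v₁) ∈ Set.Icc (0:ℝ) 1 :=
        ⟨by positivity, by rw [div_le_one h1]; linarith⟩
      have ht₂ : v₂/(u₂+v₂) ∈ Set.Icc (0:ℝ) 1 :=
        ⟨by positivity, by rw [div_le_one h2]; linarith⟩
      have hkey := hconv.2 ht₁ ht₂
        (show (0:ℝ) ≤ (u₁+v₁)/((u₁+u₂)+(v₁+v₂)) by positivity)
        (show (0:ℝ) ≤ (u₂+v₂)/((u₁+u₂)+(v₁+v₂)) by positivity)
        (show (u₁+v₁)/((u₁+u₂)+(v₁+v₂)) + (u₂+v₂)/((u₁+u₂)+(v₁+v₂)) = 1 by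
          field_simp
          ring)
      simp only [smul_eq_mul] at hkey
      rw [Gfn_eq_phi ξ _ _ hξ0 hξ1 (by positivity) (by positivity) hs,
        Gfn_eq_phi ξ _ _ hξ0 hξ1 hu₁ hv₁ h1, Gfn_eq_phi ξ _ _ hξ0 hξ1 hu₂ hv₂ h2]
      have harg : (v₁+v₂)/((u₁+u₂)+(v₁+v₂))
          = (u₁+v₁)/((u₁+u₂)+(v₁+v₂)) * (v₁/(u₁+v₁))
            + (u₂+v₂)/((u₁+u₂)+(v₁+v₂)) * (v₂/(u₂+v₂)) := by
        field_simp
      rw [harg]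
      calc ((u₁+u₂)+(v₁+v₂)) * phiF ξ ((u₁+v₁)/((u₁+u₂)+(v₁+v₂)) * (v₁/(u₁+v₁))
            + (u₂+v₂)/((u₁+u₂)+(v₁+v₂)) * (v₂/(u₂+v₂)))
          ≤ ((u₁+u₂)+(v₁+v₂)) * ((u₁+v₁)/((u₁+u₂)+(v₁+v₂)) * phiF ξ (v₁/(u₁+v₁))
            + (u₂+v₂)/((u₁+u₂)+(v₁+v₂)) * phiF ξ (v₂/(u₂+v₂))) :=
            mul_le_mul_of_nonneg_left hkey hs.le
        _ = (u₁+v₁) * phiF ξ (v₁/(u₁+v₁)) + (u₂+v₂) * phiF ξ (v₂/(u₂+v₂)) := by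
            field_simp

lemma Gfn_sum_le {ι : Type*} (ξ : ℝ) (hξ0 : 0 ≤ ξ) (hξ : ξ < 1/2) (s : Finset ι)
    (a b : ι → ℝ) (ha : ∀ i, 0 ≤ a i) (hb : ∀ i, 0 ≤ b i) :
    Gfn ξ (∑ i ∈ s, a i) (∑ i ∈ s, b i) ≤ ∑ i ∈ s, Gfn ξ (a i) (b i) := by
  induction s using Finset.cons_induction with
  | empty => simp [Gfn_zero]
  | cons i s his ih =>
    rw [Finset.sum_cons, Finset.sum_cons, Finset.sum_cons]
    refine le_trans (Gfn_add_le ξ hξ0 hξ _ _ _ _ (ha i)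
      (hb i) (Finset.sum_nonneg fun j _ => ha j) (Finset.sum_nonneg fun j _ => hb j)) ?_
    linarith

lemma mutInfo_bool (q : α × Bool → ℝ) (hq1 : ∑ z, q z = 1) :
    mutInfo q = eFn (∑ x, q (x, false)) (∑ x, q (x, true))
      - ∑ x, eFn (q (x, false)) (q (x, true)) := by
  have hS : (∑ x, q (x, false)) + (∑ x, q (x, true)) = 1 := by
    rw [← hq1, Fintype.sum_prod_type, ← Finset.sum_add_distrib]
    exact Finset.sum_congr rfl fun x _ => by rw [Fintype.sum_bool]; ring
  simp only [eFn]
  rw [hS, Real.negMulLog_one, mutInfo, ent_eq, ent_eq, ent_eq, Fintype.sum_prod_type]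
  simp only [Fintype.sum_bool]
  have flip : ∑ x, Real.negMulLog (q (x, true) + q (x, false))
      = ∑ x, Real.negMulLog (q (x, false) + q (x, true)) :=
    Finset.sum_congr rfl fun x _ => by rw [add_comm]
  rw [flip]
  simp only [Finset.sum_sub_distrib, Finset.sum_add_distrib]
  ring

lemma wire_sdpi (ξ : ℝ) (hξ0 : 0 ≤ ξ) (hξ : ξ < 1/2) (q : α × Bool → ℝ)
    (hq0 : ∀ z, 0 ≤ q z) (hq1 : ∑ z, q z = 1) :
    mutInfo (fun xb : α × Bool => ∑ c, q (xb.1, c) * bsc1 ξ c xb.2)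
      ≤ (1 - 2*ξ)^2 * mutInfo q := by
  set r : α × Bool → ℝ := fun xb => ∑ c, q (xb.1, c) * bsc1 ξ c xb.2 with hr
  have hrf : ∀ x, r (x, false) = (1-ξ) * q (x, false) + ξ * q (x, true) := by
    intro x
    show (∑ c, q (x, c) * bsc1 ξ c false) = _
    rw [Fintype.sum_bool, bsc1, bsc1]
    simp
    ring
  have hrt : ∀ x, r (x, true) = ξ * q (x, false) + (1-ξ) * q (x, true) := by
    intro x
    show (∑ c, q (x, c) * bsc1 ξ c true) = _
    rw [Fintype.sum_bool, bsc1, bsc1]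
    simp
    ring
  have hr1 : ∑ z, r z = 1 := by
    rw [Fintype.sum_prod_type, ← hq1, Fintype.sum_prod_type]
    refine Finset.sum_congr rfl fun x _ => ?_
    rw [Fintype.sum_bool, Fintype.sum_bool, hrf, hrt]
    ring
  rw [mutInfo_bool q hq1, mutInfo_bool r hr1]
  have hRA : ∑ x, r (x, false)
      = (1-ξ) * (∑ x, q (x, false)) + ξ * (∑ x, q (x, true)) := by
    simp only [hrf]
    rw [Finset.sum_add_distrib, ← Finset.mul_sum, ← Finset.mul_sum]
  have hRB : ∑ x, r (x, true)
      = ξ * (∑ x, q (x, false)) + (1-ξ) * (∑ x, q (x, true)) := by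
    simp only [hrt]
    rw [Finset.sum_add_distrib, ← Finset.mul_sum, ← Finset.mul_sum]
  rw [hRA, hRB]
  simp only [hrf, hrt]
  have hsub := Gfn_sum_le ξ hξ0 hξ Finset.univ (fun x => q (x, false)) (fun x => q (x, true))
    (fun x => hq0 _) (fun x => hq0 _)
  simp only [Gfn] at hsub
  rw [Finset.sum_sub_distrib, ← Finset.mul_sum] at hsub
  linarith

/-! ### Conditional single-wire SDPI -/

lemma step_wire (ξ : ℝ) (hξ0 : 0 ≤ ξ) (hξ : ξ < 1/2) (p : α × Bool × β → ℝ)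
    (hp : ∀ z, 0 ≤ p z) :
    mutInfo (fun xz : α × Bool × β => ∑ c, p (xz.1, c, xz.2.2) * bsc1 ξ c xz.2.1)
      - mutInfo (margW p)
      ≤ (1 - 2*ξ)^2 * (mutInfo p - mutInfo (margW p)) := by
  classical
  have hξ1 : ξ ≤ 1 := by linarith
  set pR := fun xz : α × Bool × β => ∑ c, p (xz.1, c, xz.2.2) * bsc1 ξ c xz.2.1 with hpRdef
  have hpR0 : ∀ z, 0 ≤ pR z :=
    fun z => Finset.sum_nonneg fun c _ => mul_nonneg (hp _) (bsc1_nonneg ξ hξ0 hξ1 _ _)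
  have hmargR : margW pR = margW p := by
    funext xw
    show (∑ b, ∑ c, p (xw.1, c, xw.2) * bsc1 ξ c b) = ∑ z, p (xw.1, z, xw.2)
    rw [Finset.sum_comm]
    refine Finset.sum_congr rfl fun c _ => ?_
    rw [← Finset.mul_sum, bsc1_sum, mul_one]
  have hwR : ∀ w, wMass pR w = wMass p w := by
    intro w
    rw [wMass_eq, wMass_eq, hmargR]
  have hcondR : ∀ w, condW pR w
      = fun xz : α × Bool => ∑ c, condW p w (xz.1, c) * bsc1 ξ c xz.2 := by
    intro w
    funext xz
    show (∑ c, p (xz.1, c, w) * bsc1 ξ c xz.2) / wMass pR w = _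
    rw [hwR w, Finset.sum_div]
    exact Finset.sum_congr rfl fun c _ => (div_mul_eq_mul_div _ _ _).symm
  have e1 := cmi_eq pR hpR0
  rw [hmargR] at e1
  have e2 := cmi_eq p hp
  have goal2 : ∑ w, wMass pR w * mutInfo (condW pR w)
      ≤ (1-2*ξ)^2 * ∑ w, wMass p w * mutInfo (condW p w) := by
    rw [Finset.mul_sum]
    apply Finset.sum_le_sum
    intro w _
    rw [hwR w, hcondR w]
    rcases eq_or_lt_of_le (wMass_nonneg p hp w) with h0 | h0
    · rw [← h0]
      simp
    · have hcnn : ∀ z, 0 ≤ condW p w z := fun z => div_nonneg (hp _) h0.le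
      have hc1 : ∑ z, condW p w z = 1 :=
        calc ∑ z : α × Bool, condW p w z
            = (∑ xz : α × Bool, p (xz.1, xz.2, w)) / wMass p w := by
              rw [Finset.sum_div]
              exact Finset.sum_congr rfl fun z _ => rfl
          _ = 1 := div_self (ne_of_gt h0)
      have hw := wire_sdpi ξ hξ0 hξ (condW p w) hcnn hc1
      calc wMass p w * mutInfo (fun xb : α × Bool => ∑ c, condW p w (xb.1, c) * bsc1 ξ c xb.2)
          ≤ wMass p w * ((1-2*ξ)^2 * mutInfo (condW p w)) :=
            mul_le_mul_of_nonneg_left hw h0.le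
        _ = (1-2*ξ)^2 * (wMass p w * mutInfo (condW p w)) := by ring
  rw [e1, e2]
  exact goal2


/-! ### The n-wire BSC channel -/

lemma bscChannel_eq_prod (ξ : ℝ) {m : ℕ} (y z : Fin m → Bool) :
    bscChannel ξ y z = ∏ i, bsc1 ξ (y i) (z i) := by
  classical
  have hpr : ∀ i ∈ Finset.univ, bsc1 ξ (y i) (z i)
      = if y i = z i then 1 - ξ else ξ := fun i _ => rfl
  rw [bscChannel, Finset.prod_congr rfl hpr, Finset.prod_ite, Finset.prod_const,
    Finset.prod_const]
  have hd : hammingDist y z = (Finset.univ.filter fun i => ¬ y i = z i).card := by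
    rw [hammingDist]
  have hsum := Finset.card_filter_add_card_filter_not
    (s := (Finset.univ : Finset (Fin m))) (p := fun i => y i = z i)
  rw [Finset.card_univ, Fintype.card_fin] at hsum
  have hc : (Finset.univ.filter fun i => y i = z i).card = m - hammingDist y z := by
    rw [hd]
    omega
  rw [hc, ← hd]
  ring

lemma bscChannel_nonneg (ξ : ℝ) (hξ0 : 0 ≤ ξ) (hξ1 : ξ ≤ 1) {m : ℕ} (y z : Fin m → Bool) :
    0 ≤ bscChannel ξ y z :=
  mul_nonneg (pow_nonneg hξ0 _) (pow_nonneg (by linarith) _)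

lemma bscChannel_cons (ξ : ℝ) {m : ℕ} (c b : Bool) (y z : Fin m → Bool) :
    bscChannel ξ (Fin.cons c y) (Fin.cons b z) = bsc1 ξ c b * bscChannel ξ y z := by
  rw [bscChannel_eq_prod, bscChannel_eq_prod, Fin.prod_univ_succ]
  simp [Fin.cons_zero, Fin.cons_succ]

lemma bscChannel_sum (ξ : ℝ) : ∀ {m : ℕ} (y : Fin m → Bool), ∑ z, bscChannel ξ y z = 1 := by
  intro m
  induction m with
  | zero =>
    intro y
    have hb : ∀ z : Fin 0 → Bool, bscChannel ξ y z = 1 := by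
      intro z
      have hyz : y = z := Subsingleton.elim _ _
      rw [hyz, bscChannel, hammingDist_self]
      norm_num
    rw [Fintype.sum_unique, hb]
  | succ m ih =>
    intro y
    have hy : y = Fin.cons (y 0) (Fin.tail y) := (Fin.cons_self_tail y).symm
    rw [← Equiv.sum_comp (Fin.consEquiv (fun _ : Fin (m+1) => Bool)) (bscChannel ξ y)]
    have hterm : ∀ bz : Bool × (Fin m → Bool),
        bscChannel ξ y ((Fin.consEquiv fun _ : Fin (m+1) => Bool) bz)
        = bsc1 ξ (y 0) bz.1 * bscChannel ξ (Fin.tail y) bz.2 := by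
      rintro ⟨b, z'⟩
      conv_lhs => rw [hy]
      exact bscChannel_cons ξ (y 0) b (Fin.tail y) z'
    rw [Finset.sum_congr rfl (fun bz _ => hterm bz), Fintype.sum_prod_type]
    have hinner : ∀ b ∈ (Finset.univ : Finset Bool),
        (∑ z' : Fin m → Bool, bsc1 ξ (y 0) b * bscChannel ξ (Fin.tail y) z')
        = bsc1 ξ (y 0) b := by
      intro b _
      rw [← Finset.mul_sum, ih (Fin.tail y), mul_one]
    rw [Finset.sum_congr rfl hinner, bsc1_sum]

/-! ### Evans–Schulman tensorization -/

lemma bsc_sdpi (ξ : ℝ) (hξ0 : 0 ≤ ξ) (hξ : ξ < 1/2) :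
    ∀ (m : ℕ) (q : α × (Fin m → Bool) → ℝ), (∀ z, 0 ≤ q z) → (∑ z, q z = 1) →
    mutInfo (fun xz : α × (Fin m → Bool) => ∑ y, q (xz.1, y) * bscChannel ξ y xz.2)
      ≤ (1 - (4*ξ - 4*ξ^2)^m) * mutInfo q := by
  have hξ1 : ξ ≤ 1 := by linarith
  intro m
  induction m with
  | zero =>
    intro q hq0 hq1
    have hb : ∀ (y z : Fin 0 → Bool), bscChannel ξ y z = 1 := by
      intro y z
      have : y = z := Subsingleton.elim _ _
      rw [this, bscChannel, hammingDist_self]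
      norm_num
    have hr1 : ∑ z : α × (Fin 0 → Bool), (∑ y, q (z.1, y) * bscChannel ξ y z.2) = 1 := by
      rw [Fintype.sum_prod_type, ← hq1, Fintype.sum_prod_type]
      refine Finset.sum_congr rfl fun x _ => ?_
      rw [Fintype.sum_unique]
      exact Finset.sum_congr rfl fun y _ => by rw [hb, mul_one]
    rw [mutInfo_unique _ hr1]
    simp
  | succ m ih =>
    intro q hq0 hq1
    classical
    set r : α × (Fin (m+1) → Bool) → ℝ :=
      fun xz => ∑ y, q (xz.1, y) * bscChannel ξ y xz.2 with hrdef
    set e := Fin.consEquiv (fun _ : Fin (m+1) => Bool) with he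
    set q' : α × (Bool × (Fin m → Bool)) → ℝ := fun xz => q (xz.1, e xz.2) with hq'def
    have hq'0 : ∀ z, 0 ≤ q' z := fun z => hq0 _
    have hq'1 : ∑ z, q' z = 1 := by
      rw [← hq1]
      exact Fintype.sum_equiv ((Equiv.refl α).prodCongr e) _ _ (fun z => rfl)
    have hmq' : mutInfo q' = mutInfo q := mutInfo_comp_equiv e q
    set u : α × Bool × (Fin m → Bool) → ℝ :=
      fun xz => ∑ y, q' (xz.1, xz.2.1, y) * bscChannel ξ y xz.2.2 with hudef
    have hu0 : ∀ z, 0 ≤ u z := fun z => Finset.sum_nonneg fun y _ =>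
      mul_nonneg (hq'0 _) (bscChannel_nonneg ξ hξ0 hξ1 _ _)
    -- rewrite the noisy joint through the cons equivalence
    have hrew : (fun xz : α × (Bool × (Fin m → Bool)) => r (xz.1, e xz.2))
        = (fun xz : α × Bool × (Fin m → Bool) =>
            ∑ c, u (xz.1, c, xz.2.2) * bsc1 ξ c xz.2.1) := by
      funext xz
      obtain ⟨x, b, z⟩ := xz
      show (∑ y, q (x, y) * bscChannel ξ y (e (b, z))) = ∑ c, u (x, c, z) * bsc1 ξ c b
      have hterm : ∀ cy : Bool × (Fin m → Bool),
          q (x, e cy) * bscChannel ξ (e cy) (e (b, z))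
          = (q' (x, cy.1, cy.2) * bscChannel ξ cy.2 z) * bsc1 ξ cy.1 b := by
        rintro ⟨c, y'⟩
        have hc : bscChannel ξ (e (c, y')) (e (b, z)) = bsc1 ξ c b * bscChannel ξ y' z :=
          bscChannel_cons ξ c b y' z
        show q (x, e (c, y')) * bscChannel ξ (e (c, y')) (e (b, z)) = _
        rw [hc]
        show q (x, e (c, y')) * (bsc1 ξ c b * bscChannel ξ y' z)
          = (q (x, e (c, y')) * bscChannel ξ y' z) * bsc1 ξ c b
        ring
      rw [← Equiv.sum_comp e (fun y => q (x, y) * bscChannel ξ y (e (b, z))),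
        Finset.sum_congr rfl (fun cy _ => hterm cy), Fintype.sum_prod_type]
      refine Finset.sum_congr rfl fun c _ => ?_
      have hbeta : ∀ y' ∈ (Finset.univ : Finset (Fin m → Bool)),
          q' (x, (c, y').1, (c, y').2) * bscChannel ξ (c, y').2 z * bsc1 ξ (c, y').1 b
          = q' (x, c, y') * bscChannel ξ y' z * bsc1 ξ c b := fun y' _ => rfl
      rw [Finset.sum_congr rfl hbeta, ← Finset.sum_mul]
    have hmr : mutInfo r
        = mutInfo (fun xz : α × Bool × (Fin m → Bool) =>
            ∑ c, u (xz.1, c, xz.2.2) * bsc1 ξ c xz.2.1) := by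
      rw [← hrew]
      exact (mutInfo_comp_equiv e r).symm
    -- DPI: I(X; u) ≤ I(X; q')
    have huq : mutInfo u ≤ mutInfo q := by
      rw [← hmq']
      have hdpi := mutInfo_dpi q' hq'0
        (fun cy cz : Bool × (Fin m → Bool) =>
          (if cz.1 = cy.1 then (1:ℝ) else 0) * bscChannel ξ cy.2 cz.2)
        (fun cy cz => mul_nonneg (by split_ifs <;> norm_num) (bscChannel_nonneg ξ hξ0 hξ1 _ _))
        (by
          intro cy
          rw [Fintype.sum_prod_type]
          simp only [ite_mul, one_mul, zero_mul]
          rw [Finset.sum_comm]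
          simp only [Finset.sum_ite_eq', Finset.mem_univ, if_true]
          exact bscChannel_sum ξ cy.2)
      have hform : (fun xc : α × (Bool × (Fin m → Bool)) => ∑ b, q' (xc.1, b) *
          ((if xc.2.1 = b.1 then (1:ℝ) else 0) * bscChannel ξ b.2 xc.2.2)) = u := by
        funext xc
        obtain ⟨x, c, z⟩ := xc
        show (∑ b : Bool × (Fin m → Bool), q' (x, b)
          * ((if c = b.1 then (1:ℝ) else 0) * bscChannel ξ b.2 z)) = u (x, c, z)
        rw [Fintype.sum_prod_type, Finset.sum_comm]
        simp only [mul_ite, ite_mul, one_mul, zero_mul, mul_zero, mul_one,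
          Finset.sum_ite_eq, Finset.mem_univ, if_true]
        rfl
      rw [hform] at hdpi
      exact hdpi
    -- the rest-marginal
    set mq : α × (Fin m → Bool) → ℝ := fun xy => ∑ c, q' (xy.1, c, xy.2) with hmqdef
    have hmq0 : ∀ z, 0 ≤ mq z := fun z => Finset.sum_nonneg fun c _ => hq'0 _
    have hmq1 : ∑ z, mq z = 1 := by
      rw [← hq'1, Fintype.sum_prod_type, Fintype.sum_prod_type]
      refine Finset.sum_congr rfl fun x _ => ?_
      show (∑ y, ∑ c, q' (x, c, y)) = ∑ cy : Bool × (Fin m → Bool), q' (x, cy)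
      rw [Fintype.sum_prod_type]
      exact Finset.sum_comm
    have hmargu : margW u = (fun xz : α × (Fin m → Bool) =>
        ∑ y, mq (xz.1, y) * bscChannel ξ y xz.2) := by
      funext xz
      obtain ⟨x, z⟩ := xz
      show (∑ c, u (x, c, z)) = ∑ y, mq (x, y) * bscChannel ξ y z
      have : ∀ c ∈ (Finset.univ : Finset Bool), u (x, c, z)
          = ∑ y, q' (x, c, y) * bscChannel ξ y z := fun c _ => rfl
      rw [Finset.sum_congr rfl this, Finset.sum_comm]
      refine Finset.sum_congr rfl fun y _ => ?_
      rw [← Finset.sum_mul]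
    have hmqq' : mutInfo mq ≤ mutInfo q := by
      rw [← hmq']
      have hdpi := mutInfo_dpi q' hq'0
        (fun cy : Bool × (Fin m → Bool) => fun y : Fin m → Bool =>
          if cy.2 = y then (1:ℝ) else 0)
        (fun cy y => by split_ifs <;> norm_num)
        (fun cy => by simp)
      have hform : (fun xc : α × (Fin m → Bool) => ∑ b : Bool × (Fin m → Bool),
          q' (xc.1, b) * (if b.2 = xc.2 then (1:ℝ) else 0)) = mq := by
        funext xc
        obtain ⟨x, z⟩ := xc
        show (∑ b : Bool × (Fin m → Bool), q' (x, b) * (if b.2 = z then (1:ℝ) else 0)) = mq (x, z)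
        rw [Fintype.sum_prod_type]
        simp only [mul_ite, mul_one, mul_zero, Finset.sum_ite_eq', Finset.mem_univ, if_true]
        rfl
      rw [hform] at hdpi
      exact hdpi
    have hpow0 : (0:ℝ) ≤ 4*ξ - 4*ξ^2 := by nlinarith
    have hpow1 : 4*ξ - 4*ξ^2 ≤ 1 := by nlinarith [sq_nonneg (1 - 2*ξ)]
    have hpm : (0:ℝ) ≤ 1 - (4*ξ - 4*ξ^2)^m := by
      have := pow_le_one₀ hpow0 hpow1 (n := m)
      linarith
    have haI : mutInfo (margW u) ≤ (1 - (4*ξ - 4*ξ^2)^m) * mutInfo q := by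
      rw [hmargu]
      refine le_trans (ih mq hmq0 hmq1) ?_
      exact mul_le_mul_of_nonneg_left hmqq' hpm
    have step1 := step_wire ξ hξ0 hξ u hu0
    have hη : (1-2*ξ)^2 = 1 - (4*ξ - 4*ξ^2) := by ring
    rw [hmr]
    calc mutInfo (fun xz : α × Bool × (Fin m → Bool) =>
            ∑ c, u (xz.1, c, xz.2.2) * bsc1 ξ c xz.2.1)
        ≤ mutInfo (margW u) + (1-2*ξ)^2 * (mutInfo u - mutInfo (margW u)) := by
          linarith [step1]
      _ = (1-2*ξ)^2 * mutInfo u + (4*ξ - 4*ξ^2) * mutInfo (margW u) := by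
          rw [hη]; ring
      _ ≤ (1-2*ξ)^2 * mutInfo q
          + (4*ξ - 4*ξ^2) * ((1 - (4*ξ - 4*ξ^2)^m) * mutInfo q) :=
          add_le_add (mul_le_mul_of_nonneg_left huq (sq_nonneg _))
            (mul_le_mul_of_nonneg_left haI hpow0)
      _ = (1 - (4*ξ - 4*ξ^2)^(m+1)) * mutInfo q := by
          rw [hη, pow_succ]; ring


/-! ### The layered network -/

section Network

variable (ξ : ℝ) (n : ℕ → ℕ) (f0 : α → (Fin (n 0) → Bool))
  (f : ∀ k : ℕ, (Fin (n k) → Bool) → (Fin (n (k + 1)) → Bool)) (μ : α → ℝ)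

noncomputable def jointD : (k : ℕ) → α × (Fin (n k) → Bool) → ℝ
  | 0 => fun xz => μ xz.1 * bscChannel ξ (f0 xz.1) xz.2
  | (k+1) => fun xz => ∑ y, jointD k (xz.1, y) * bscChannel ξ (f k y) xz.2

lemma jointD_nonneg (hξ0 : 0 ≤ ξ) (hξ1 : ξ ≤ 1) (hμ0 : ∀ x, 0 ≤ μ x) :
    ∀ k z, 0 ≤ jointD ξ n f0 f μ k z := by
  intro k
  induction k with
  | zero =>
    intro z
    exact mul_nonneg (hμ0 _) (bscChannel_nonneg ξ hξ0 hξ1 _ _)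
  | succ k ih =>
    intro z
    exact Finset.sum_nonneg fun y _ =>
      mul_nonneg (ih _) (bscChannel_nonneg ξ hξ0 hξ1 _ _)

lemma jointD_sum (hμ1 : ∑ x, μ x = 1) :
    ∀ k, ∑ z, jointD ξ n f0 f μ k z = 1 := by
  intro k
  induction k with
  | zero =>
    simp only [jointD]
    rw [Fintype.sum_prod_type, ← hμ1]
    refine Finset.sum_congr rfl fun x _ => ?_
    have hb : ∀ y ∈ (Finset.univ : Finset (Fin (n 0) → Bool)),
        μ (x, y).1 * bscChannel ξ (f0 (x, y).1) (x, y).2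
        = μ x * bscChannel ξ (f0 x) y := fun y _ => rfl
    rw [Finset.sum_congr rfl hb, ← Finset.mul_sum, bscChannel_sum, mul_one]
  | succ k ih =>
    simp only [jointD]
    rw [Fintype.sum_prod_type, ← ih, Fintype.sum_prod_type]
    refine Finset.sum_congr rfl fun x _ => ?_
    have hb : ∀ z ∈ (Finset.univ : Finset (Fin (n (k+1)) → Bool)),
        (∑ y, jointD ξ n f0 f μ k ((x, z).1, y) * bscChannel ξ (f k y) (x, z).2)
        = ∑ y, jointD ξ n f0 f μ k (x, y) * bscChannel ξ (f k y) z := fun z _ => rfl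
    rw [Finset.sum_congr rfl hb, Finset.sum_comm]
    refine Finset.sum_congr rfl fun y _ => ?_
    rw [← Finset.mul_sum, bscChannel_sum, mul_one]

lemma jointD_bound (hξ0 : 0 ≤ ξ) (hξ : ξ < 1/2) (hμ0 : ∀ x, 0 ≤ μ x) (hμ1 : ∑ x, μ x = 1) :
    ∀ k, mutInfo (jointD ξ n f0 f μ k)
      ≤ (∏ j ∈ Finset.range (k+1), (1 - (4*ξ - 4*ξ^2)^(n j))) * ent μ := by
  classical
  have hξ1 : ξ ≤ 1 := by linarith
  have hpow0 : (0:ℝ) ≤ 4*ξ-4*ξ^2 := by nlinarith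
  have hpow1 : 4*ξ-4*ξ^2 ≤ 1 := by nlinarith [sq_nonneg (1-2*ξ)]
  have hfac : ∀ j : ℕ, (0:ℝ) ≤ 1 - (4*ξ-4*ξ^2)^j := fun j => by
    have := pow_le_one₀ hpow0 hpow1 (n := j)
    linarith
  intro k
  induction k with
  | zero =>
    set q0 : α × (Fin (n 0) → Bool) → ℝ :=
      fun xz => if f0 xz.1 = xz.2 then μ xz.1 else 0 with hq0def
    have hq00 : ∀ z, 0 ≤ q0 z := by
      intro z
      simp only [hq0def]
      split_ifs
      · exact hμ0 _
      · exact le_refl 0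
    have hq01 : ∑ z, q0 z = 1 := by
      rw [Fintype.sum_prod_type, ← hμ1]
      refine Finset.sum_congr rfl fun x _ => ?_
      simp only [hq0def]
      rw [Finset.sum_ite_eq]
      simp
    have hj0 : jointD ξ n f0 f μ 0
        = fun xz => ∑ w, q0 (xz.1, w) * bscChannel ξ w xz.2 := by
      funext xz
      obtain ⟨x, z⟩ := xz
      show μ x * bscChannel ξ (f0 x) z = ∑ w, q0 (x, w) * bscChannel ξ w z
      simp only [hq0def, ite_mul, zero_mul, Finset.sum_ite_eq, Finset.mem_univ, if_true]
    have hent : ent (fun x => ∑ w, q0 (x, w)) = ent μ := by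
      refine congrArg ent (funext fun x => ?_)
      simp only [hq0def]
      rw [Finset.sum_ite_eq]
      simp
    calc mutInfo (jointD ξ n f0 f μ 0)
        = mutInfo (fun xz : α × (Fin (n 0) → Bool) => ∑ w, q0 (xz.1, w) * bscChannel ξ w xz.2) :=
          congrArg mutInfo hj0
      _ ≤ (1 - (4*ξ - 4*ξ^2)^(n 0)) * mutInfo q0 := bsc_sdpi ξ hξ0 hξ (n 0) q0 hq00 hq01
      _ ≤ (1 - (4*ξ - 4*ξ^2)^(n 0)) * ent μ := by
          refine mul_le_mul_of_nonneg_left ?_ (hfac _)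
          exact le_trans (mutInfo_le_ent q0 hq00) (le_of_eq hent)
      _ = (∏ j ∈ Finset.range (0+1), (1 - (4*ξ - 4*ξ^2)^(n j))) * ent μ := by
          rw [Finset.prod_range_one]
  | succ k ih =>
    set qk : α × (Fin (n (k+1)) → Bool) → ℝ :=
      fun xz => ∑ y, (if f k y = xz.2 then jointD ξ n f0 f μ k (xz.1, y) else 0) with hqkdef
    have hqk0 : ∀ z, 0 ≤ qk z := by
      intro z
      simp only [hqkdef]
      refine Finset.sum_nonneg fun y _ => ?_
      split_ifs
      · exact jointD_nonneg ξ n f0 f μ hξ0 hξ1 hμ0 k _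
      · exact le_refl 0
    have hqk1 : ∑ z, qk z = 1 := by
      rw [Fintype.sum_prod_type, ← jointD_sum ξ n f0 f μ hμ1 k, Fintype.sum_prod_type]
      refine Finset.sum_congr rfl fun x _ => ?_
      simp only [hqkdef]
      rw [Finset.sum_comm]
      refine Finset.sum_congr rfl fun y _ => ?_
      rw [Finset.sum_ite_eq]
      simp
    have hjk : jointD ξ n f0 f μ (k+1)
        = fun xz => ∑ w, qk (xz.1, w) * bscChannel ξ w xz.2 := by
      funext xz
      obtain ⟨x, z⟩ := xz
      show (∑ y, jointD ξ n f0 f μ k (x, y) * bscChannel ξ (f k y) z)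
        = ∑ w, qk (x, w) * bscChannel ξ w z
      simp only [hqkdef, Finset.sum_mul, ite_mul, zero_mul]
      rw [Finset.sum_comm]
      refine Finset.sum_congr rfl fun y _ => ?_
      rw [Finset.sum_ite_eq]
      simp
    have hdpi : mutInfo qk ≤ mutInfo (jointD ξ n f0 f μ k) := by
      have h := mutInfo_dpi (jointD ξ n f0 f μ k)
        (jointD_nonneg ξ n f0 f μ hξ0 hξ1 hμ0 k)
        (fun y w => if f k y = w then (1:ℝ) else 0)
        (fun y w => by split_ifs <;> norm_num)
        (fun y => by simp)
      have hform : (fun xw : α × (Fin (n (k+1)) → Bool) =>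
          ∑ y, jointD ξ n f0 f μ k (xw.1, y) * (if f k y = xw.2 then (1:ℝ) else 0)) = qk := by
        funext xw
        simp only [hqkdef, mul_ite, mul_one, mul_zero]
      rw [hform] at h
      exact h
    calc mutInfo (jointD ξ n f0 f μ (k+1))
        = mutInfo (fun xz : α × (Fin (n (k+1)) → Bool) =>
            ∑ w, qk (xz.1, w) * bscChannel ξ w xz.2) := congrArg mutInfo hjk
      _ ≤ (1 - (4*ξ - 4*ξ^2)^(n (k+1))) * mutInfo qk :=
          bsc_sdpi ξ hξ0 hξ (n (k+1)) qk hqk0 hqk1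
      _ ≤ (1 - (4*ξ - 4*ξ^2)^(n (k+1)))
          * ((∏ j ∈ Finset.range (k+1), (1 - (4*ξ - 4*ξ^2)^(n j))) * ent μ) :=
          mul_le_mul_of_nonneg_left (le_trans hdpi ih) (hfac _)
      _ = (∏ j ∈ Finset.range (k+1+1), (1 - (4*ξ - 4*ξ^2)^(n j))) * ent μ := by
          conv_rhs => rw [Finset.prod_range_succ]
          rw [
            mul_comm (∏ j ∈ Finset.range (k+1), (1 - (4*ξ - 4*ξ^2)^(n j)))
              (1 - (4*ξ - 4*ξ^2)^(n (k+1))), mul_assoc]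

lemma preAct_snoc_castSucc {M : ℕ} (x : α)
    (y' : ∀ i : Fin (M+1), Fin (n (Fin.castSucc i).val) → Bool)
    (w : Fin (n (M+1)) → Bool) (i : Fin (M+1)) :
    preAct n f0 f x ((Fin.snocEquiv (fun ℓ : Fin (M+2) => Fin (n ℓ.val) → Bool)) (w, y'))
      (Fin.castSucc i) = preAct n f0 f x y' i := by
  match i with
  | ⟨0, h⟩ => rfl
  | ⟨j+1, h⟩ =>
    have hj : j < M + 1 := Nat.lt_of_succ_lt h
    have hs : (Fin.snocEquiv (fun ℓ : Fin (M+2) => Fin (n ℓ.val) → Bool)) (w, y')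
        (Fin.castSucc ⟨j, hj⟩) = y' ⟨j, hj⟩ := by
      show Fin.snoc (α := fun ℓ : Fin (M+2) => Fin (n ℓ.val) → Bool) y' w
        (Fin.castSucc ⟨j, hj⟩) = y' ⟨j, hj⟩
      exact Fin.snoc_castSucc _ _ _
    show f j ((Fin.snocEquiv (fun ℓ : Fin (M+2) => Fin (n ℓ.val) → Bool)) (w, y')
      (Fin.castSucc ⟨j, hj⟩)) = f j (y' ⟨j, hj⟩)
    rw [hs]

lemma preAct_snoc_last {M : ℕ} (x : α)
    (y' : ∀ i : Fin (M+1), Fin (n (Fin.castSucc i).val) → Bool)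
    (w : Fin (n (M+1)) → Bool) :
    preAct n f0 f x ((Fin.snocEquiv (fun ℓ : Fin (M+2) => Fin (n ℓ.val) → Bool)) (w, y'))
      (Fin.last (M+1)) = f M (y' (Fin.last M)) := by
  have hs : (Fin.snocEquiv (fun ℓ : Fin (M+2) => Fin (n ℓ.val) → Bool)) (w, y')
      (Fin.castSucc (Fin.last M)) = y' (Fin.last M) := by
    show Fin.snoc (α := fun ℓ : Fin (M+2) => Fin (n ℓ.val) → Bool) y' w
      (Fin.castSucc (Fin.last M)) = y' (Fin.last M)
    exact Fin.snoc_castSucc _ _ _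
  show f M ((Fin.snocEquiv (fun ℓ : Fin (M+2) => Fin (n ℓ.val) → Bool)) (w, y')
    (Fin.castSucc (Fin.last M))) = f M (y' (Fin.last M))
  rw [hs]

lemma traj_eq : ∀ (M : ℕ),
    (fun xz : α × (Fin (n M) → Bool) =>
      ∑ y : ∀ ℓ : Fin (M+1), Fin (n ℓ.val) → Bool,
        if y ⟨M, Nat.lt_succ_self M⟩ = xz.2 then
          μ xz.1 * ∏ ℓ : Fin (M+1), bscChannel ξ (preAct n f0 f xz.1 y ℓ) (y ℓ)
        else 0)
    = jointD ξ n f0 f μ M := by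
  classical
  intro M
  induction M with
  | zero =>
    funext xz
    obtain ⟨x, z⟩ := xz
    show (∑ y : ∀ ℓ : Fin 1, Fin (n ℓ.val) → Bool,
        if y ⟨0, Nat.lt_succ_self 0⟩ = z then
          μ x * ∏ ℓ : Fin 1, bscChannel ξ (preAct n f0 f x y ℓ) (y ℓ)
        else 0)
      = jointD ξ n f0 f μ 0 (x, z)
    have hsplit0 : (∑ y : ∀ ℓ : Fin 1, Fin (n ℓ.val) → Bool,
        if y ⟨0, Nat.lt_succ_self 0⟩ = z then
          μ x * ∏ ℓ : Fin 1, bscChannel ξ (preAct n f0 f x y ℓ) (y ℓ)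
        else 0)
        = ∑ p : (Fin (n 0) → Bool) × (∀ i : Fin 0, Fin (n (Fin.succ i).val) → Bool),
            (if p.1 = z then μ x * bscChannel ξ (f0 x) p.1 else 0) := by
      refine (Fintype.sum_equiv (Fin.consEquiv (fun ℓ : Fin 1 => Fin (n ℓ.val) → Bool))
        _ _ ?_).symm
      rintro ⟨v, t⟩
      have hp : (∏ ℓ : Fin 1, bscChannel ξ
          (preAct n f0 f x ((Fin.consEquiv (fun ℓ : Fin 1 => Fin (n ℓ.val) → Bool)) (v, t)) ℓ)
          ((Fin.consEquiv (fun ℓ : Fin 1 => Fin (n ℓ.val) → Bool)) (v, t) ℓ))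
          = bscChannel ξ (f0 x) v := by
        rw [Fin.prod_univ_one]
        rfl
      show (if v = z then μ x * bscChannel ξ (f0 x) v else 0) = _
      rw [hp]
      rfl
    rw [hsplit0, Fintype.sum_prod_type]
    have hcv : ∀ v ∈ (Finset.univ : Finset (Fin (n 0) → Bool)),
        (∑ t : (∀ i : Fin 0, Fin (n (Fin.succ i).val) → Bool),
          if (v, t).1 = z then μ x * bscChannel ξ (f0 x) (v, t).1 else 0)
        = (if v = z then μ x * bscChannel ξ (f0 x) v else 0) := by
      intro v _
      rw [Fintype.sum_unique]
    rw [Finset.sum_congr rfl hcv, Finset.sum_ite_eq']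
    simp only [Finset.mem_univ, if_true]
    rfl
  | succ M ihM =>
    funext xz
    obtain ⟨x, z⟩ := xz
    show (∑ y : ∀ ℓ : Fin (M+2), Fin (n ℓ.val) → Bool,
        if y ⟨M+1, Nat.lt_succ_self (M+1)⟩ = z then
          μ x * ∏ ℓ : Fin (M+2), bscChannel ξ (preAct n f0 f x y ℓ) (y ℓ)
        else 0)
      = jointD ξ n f0 f μ (M+1) (x, z)
    have hsplit : (∑ y : ∀ ℓ : Fin (M+2), Fin (n ℓ.val) → Bool,
        if y ⟨M+1, Nat.lt_succ_self (M+1)⟩ = z then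
          μ x * ∏ ℓ : Fin (M+2), bscChannel ξ (preAct n f0 f x y ℓ) (y ℓ)
        else 0)
        = ∑ p : (Fin (n (M+1)) → Bool) × (∀ i : Fin (M+1), Fin (n (Fin.castSucc i).val) → Bool),
            (if p.1 = z then
              (μ x * ∏ i : Fin (M+1), bscChannel ξ (preAct n f0 f x p.2 i) (p.2 i))
                * bscChannel ξ (f M (p.2 (Fin.last M))) p.1
            else 0) := by
      refine (Fintype.sum_equiv (Fin.snocEquiv (fun ℓ : Fin (M+2) => Fin (n ℓ.val) → Bool))
        _ _ ?_).symm
      rintro ⟨w, y'⟩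
      show (if w = z then
            (μ x * ∏ i : Fin (M+1), bscChannel ξ (preAct n f0 f x y' i) (y' i))
              * bscChannel ξ (f M (y' (Fin.last M))) w
          else 0)
        = (if (Fin.snocEquiv (fun ℓ : Fin (M+2) => Fin (n ℓ.val) → Bool)) (w, y')
              ⟨M+1, Nat.lt_succ_self (M+1)⟩ = z then
            μ x * ∏ ℓ : Fin (M+2), bscChannel ξ
              (preAct n f0 f x ((Fin.snocEquiv (fun ℓ : Fin (M+2) => Fin (n ℓ.val) → Bool)) (w, y')) ℓ)
              ((Fin.snocEquiv (fun ℓ : Fin (M+2) => Fin (n ℓ.val) → Bool)) (w, y') ℓ)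
          else 0)
      have hlast : (Fin.snocEquiv (fun ℓ : Fin (M+2) => Fin (n ℓ.val) → Bool)) (w, y')
          (⟨M+1, Nat.lt_succ_self (M+1)⟩ : Fin (M+2)) = w := by
        show Fin.snoc (α := fun ℓ : Fin (M+2) => Fin (n ℓ.val) → Bool) y' w (Fin.last (M+1)) = w
        exact Fin.snoc_last _ _
      rw [hlast]
      have hprod : (∏ ℓ : Fin (M+2), bscChannel ξ
          (preAct n f0 f x ((Fin.snocEquiv (fun ℓ : Fin (M+2) => Fin (n ℓ.val) → Bool)) (w, y')) ℓ)
          ((Fin.snocEquiv (fun ℓ : Fin (M+2) => Fin (n ℓ.val) → Bool)) (w, y') ℓ))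
          = (∏ i : Fin (M+1), bscChannel ξ (preAct n f0 f x y' i) (y' i))
            * bscChannel ξ (f M (y' (Fin.last M))) w := by
        rw [Fin.prod_univ_castSucc]
        congr 1
        · refine Finset.prod_congr rfl fun i _ => ?_
          have h1 : (Fin.snocEquiv (fun ℓ : Fin (M+2) => Fin (n ℓ.val) → Bool)) (w, y')
              (Fin.castSucc i) = y' i := by
            show Fin.snoc (α := fun ℓ : Fin (M+2) => Fin (n ℓ.val) → Bool) y' w
              (Fin.castSucc i) = y' i
            exact Fin.snoc_castSucc _ _ _
          rw [h1, preAct_snoc_castSucc n f0 f x y' w i]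
        · have h2 : (Fin.snocEquiv (fun ℓ : Fin (M+2) => Fin (n ℓ.val) → Bool)) (w, y')
              (Fin.last (M+1)) = w := by
            show Fin.snoc (α := fun ℓ : Fin (M+2) => Fin (n ℓ.val) → Bool) y' w
              (Fin.last (M+1)) = w
            exact Fin.snoc_last _ _
          rw [h2, preAct_snoc_last n f0 f x y' w]
      rw [hprod]
      split_ifs
      · ring
      · rfl
    rw [hsplit, Fintype.sum_prod_type, Finset.sum_comm]
    -- collapse the inner sum over w
    have hcolw : ∀ y' ∈ (Finset.univ : Finset (∀ i : Fin (M+1), Fin (n (Fin.castSucc i).val) → Bool)),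
        (∑ w : Fin (n (M+1)) → Bool,
          if (w, y').1 = z then
            (μ x * ∏ i : Fin (M+1), bscChannel ξ (preAct n f0 f x (w, y').2 i) ((w, y').2 i))
              * bscChannel ξ (f M ((w, y').2 (Fin.last M))) (w, y').1
          else 0)
        = (μ x * ∏ i : Fin (M+1), bscChannel ξ (preAct n f0 f x y' i) (y' i))
            * bscChannel ξ (f M (y' (Fin.last M))) z := by
      intro y' _
      have hb : ∀ w ∈ (Finset.univ : Finset (Fin (n (M+1)) → Bool)),
          (if (w, y').1 = z then
            (μ x * ∏ i : Fin (M+1), bscChannel ξ (preAct n f0 f x (w, y').2 i) ((w, y').2 i))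
              * bscChannel ξ (f M ((w, y').2 (Fin.last M))) (w, y').1
          else 0)
          = (if w = z then
            (μ x * ∏ i : Fin (M+1), bscChannel ξ (preAct n f0 f x y' i) (y' i))
              * bscChannel ξ (f M (y' (Fin.last M))) w
          else 0) := fun w _ => rfl
      rw [Finset.sum_congr rfl hb, Finset.sum_ite_eq']
      simp only [Finset.mem_univ, if_true]
    rw [Finset.sum_congr rfl hcolw]
    -- now compare with jointD (M+1)
    simp only [jointD]
    have hv : ∀ v ∈ (Finset.univ : Finset (Fin (n M) → Bool)),
        jointD ξ n f0 f μ M (x, v) * bscChannel ξ (f M v) z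
        = (∑ y'' : ∀ ℓ : Fin (M+1), Fin (n ℓ.val) → Bool,
            if y'' ⟨M, Nat.lt_succ_self M⟩ = v then
              μ x * ∏ ℓ : Fin (M+1), bscChannel ξ (preAct n f0 f x y'' ℓ) (y'' ℓ)
            else 0) * bscChannel ξ (f M v) z := by
      intro v _
      exact congrArg (· * bscChannel ξ (f M v) z) (congrFun ihM.symm (x, v))
    rw [Finset.sum_congr rfl hv]
    simp only [Finset.sum_mul, ite_mul, zero_mul]
    rw [Finset.sum_comm]
    have hcolv : ∀ y'' ∈ (Finset.univ : Finset (∀ ℓ : Fin (M+1), Fin (n ℓ.val) → Bool)),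
        (∑ v : Fin (n M) → Bool,
          if y'' ⟨M, Nat.lt_succ_self M⟩ = v then
            μ x * (∏ ℓ : Fin (M+1), bscChannel ξ (preAct n f0 f x y'' ℓ) (y'' ℓ))
              * bscChannel ξ (f M v) z
          else 0)
        = μ x * (∏ ℓ : Fin (M+1), bscChannel ξ (preAct n f0 f x y'' ℓ) (y'' ℓ))
            * bscChannel ξ (f M (y'' ⟨M, Nat.lt_succ_self M⟩)) z := by
      intro y'' _
      rw [Finset.sum_ite_eq]
      simp only [Finset.mem_univ, if_true]
    rw [Finset.sum_congr rfl hcolv]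
    refine (Fintype.sum_equiv (Equiv.refl (∀ ℓ : Fin (M+1), Fin (n ℓ.val) → Bool))
      _ _ ?_).symm
    intro y''
    show μ x * (∏ ℓ : Fin (M+1), bscChannel ξ (preAct n f0 f x y'' ℓ) (y'' ℓ))
        * bscChannel ξ (f M (y'' ⟨M, Nat.lt_succ_self M⟩)) z
      = (μ x * ∏ ℓ : Fin (M+1), bscChannel ξ (preAct n f0 f x y'' ℓ) (y'' ℓ))
        * bscChannel ξ (f M (y'' (Fin.last M))) z
    rfl

end Network


end NN7

theorem stmt7 {α : Type*} [Fintype α] (L : ℕ) (hL : 0 < L) (n : ℕ → ℕ)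
    (f0 : α → (Fin (n 0) → Bool))
    (f : ∀ k : ℕ, (Fin (n k) → Bool) → (Fin (n (k + 1)) → Bool))
    (ξ : ℝ) (hξ0 : 0 ≤ ξ) (hξ : ξ < 1 / 2)
    (μ : α → ℝ) (hμ0 : ∀ x, 0 ≤ μ x) (hμ1 : ∑ x, μ x = 1) :
    mutInfo (fun xz : α × (Fin (n (L - 1)) → Bool) =>
        ∑ y : ∀ ℓ : Fin L, Fin (n ℓ.val) → Bool,
          if y ⟨L - 1, Nat.sub_lt hL one_pos⟩ = xz.2 then
            μ xz.1 * ∏ ℓ : Fin L, bscChannel ξ (preAct n f0 f xz.1 y ℓ) (y ℓ)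
          else 0)
      ≤ (∏ ℓ : Fin L, (1 - (4 * ξ - 4 * ξ ^ 2) ^ (n ℓ.val))) * ent μ := by
  obtain ⟨M, rfl⟩ : ∃ M, L = M + 1 := ⟨L - 1, (Nat.succ_pred_eq_of_pos hL).symm⟩
  refine le_trans (le_of_eq ?_)
    (le_trans (NN7.jointD_bound ξ n f0 f μ hξ0 hξ hμ0 hμ1 M) (le_of_eq ?_))
  · exact congrArg mutInfo (NN7.traj_eq ξ n f0 f μ M)
  · exact congrArg (· * ent μ)
      (Fin.prod_univ_eq_prod_range (fun j => 1 - (4*ξ - 4*ξ^2)^(n j)) (M+1)).symm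
end
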